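/- arXiv:2207.11137 — 8 statements merged into one kernel-verified Lean document; each statement's English description precedes it below -/
import Mathlib

section
/- Let (Ω, 𝔽, ℙ) be a probability space carrying, for each n, real random variables E_n, F_n, G_n, Φ̂_n, Ψ̂_n. Let Φ₁ > 0, Ψ > 0, ρ ∈ (−1,1), C̃, Δ̃ ∈ ℝ, and let (d_n) be a sequence of real numbers with d_n → 0. Assume: (i) the laws of the pairs (E_n, F_n) converge weakly to the law of (√Φ₁·Z₁, √Ψ·(ρZ₁ + √(1−ρ²)·Z₂)), where Z₁, Z₂ are independent standard normal random variables (i.e., the centered bivariate normal with variances Φ₁, Ψ and correlation ρ); (ii) d_n·G_n → C̃ in probability; (iii) Φ̂_n → Φ₁ and Ψ̂_n → Ψ in probability. Set Δ_n := Δ̃·d_n, AR_n := (E_n + 2Δ_nF_n + Δ_n²G_n)/√Φ̂_n, and LM_n := (F_n + Δ_nG_n)/√Ψ̂_n. Then the laws of the pairs (AR_n, LM_n) converge weakly to the law of (Z₁, Δ̃C̃/√Ψ + ρZ₁ + √(1−ρ²)·Z₂), i.e., the bivariate normal with mean (0, Δ̃C̃/√Ψ), unit variances, and correlation ρ. -/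
open MeasureTheory ProbabilityTheory Filter BoundedContinuousFunction
open scoped ProbabilityTheory Topology ENNReal


noncomputable def myBump (R : ℝ) : (ℝ × ℝ) →ᵇ ℝ :=
  BoundedContinuousFunction.ofNormedAddCommGroup
    (fun x => min 1 (max 0 (R + 1 - dist x 0)))
    (continuous_const.min (continuous_const.max (continuous_const.sub ((continuous_id.dist continuous_const))))) 1
    (by
      intro x
      rw [Real.norm_eq_abs, abs_le]
      constructor
      · have : (0:ℝ) ≤ min 1 (max 0 (R + 1 - dist x 0)) :=
          le_min zero_le_one (le_max_left _ _)
        linarith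
      · exact min_le_left _ _)

lemma myBump_apply (R : ℝ) (x : ℝ × ℝ) :
    myBump R x = min 1 (max 0 (R + 1 - dist x 0)) := rfl

lemma myBump_nonneg (R : ℝ) (x : ℝ × ℝ) : 0 ≤ myBump R x :=
  le_min zero_le_one (le_max_left _ _)

lemma myBump_le_one (R : ℝ) (x : ℝ × ℝ) : myBump R x ≤ 1 := min_le_left _ _

lemma myBump_eq_one (R : ℝ) (x : ℝ × ℝ) (h : dist x 0 ≤ R) : myBump R x = 1 := by
  rw [myBump_apply]
  have : (1:ℝ) ≤ R + 1 - dist x 0 := by linarith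
  rw [max_eq_right (by linarith), min_eq_left this]

lemma myBump_eq_zero (R : ℝ) (x : ℝ × ℝ) (h : R + 1 < dist x 0) : myBump R x = 0 := by
  rw [myBump_apply, max_eq_left (by linarith), min_eq_right zero_le_one]

lemma mySlutsky {Ω : Type*} [MeasureSpace Ω] [IsProbabilityMeasure (ℙ : Measure Ω)]
    (X : ℕ → Ω → ℝ × ℝ) (U : ℕ → Ω → ℝ × ℝ × ℝ × ℝ)
    (hX : ∀ n, Measurable (X n)) (hU : ∀ n, Measurable (U n))
    (μ : Measure (ℝ × ℝ)) [IsProbabilityMeasure μ] (c : ℝ × ℝ × ℝ × ℝ)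
    (hweak : ∀ f : (ℝ × ℝ) →ᵇ ℝ,
      Tendsto (fun n => ∫ ω, f (X n ω) ∂ℙ) atTop (𝓝 (∫ x, f x ∂μ)))
    (hUc : TendstoInMeasure ℙ U atTop (fun _ => c)) :
    ∀ f : ((ℝ × ℝ) × (ℝ × ℝ × ℝ × ℝ)) →ᵇ ℝ,
      Tendsto (fun n => ∫ ω, f (X n ω, U n ω) ∂ℙ) atTop (𝓝 (∫ x, f (x, c) ∂μ)) := by
  intro f
  have hfn : (0:ℝ) ≤ ‖f‖ := norm_nonneg f
  -- integrability facts
  have hIfull : ∀ n, Integrable (fun ω => f (X n ω, U n ω)) ℙ := fun n =>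
    (integrable_const ‖f‖).mono'
      ((f.continuous.measurable.comp ((hX n).prodMk (hU n))).aestronglyMeasurable)
      (ae_of_all _ fun ω => f.norm_coe_le_norm _)
  have hIc : ∀ n, Integrable (fun ω => f (X n ω, c)) ℙ := fun n =>
    (integrable_const ‖f‖).mono'
      ((f.continuous.measurable.comp ((hX n).prodMk measurable_const)).aestronglyMeasurable)
      (ae_of_all _ fun ω => f.norm_coe_le_norm _)
  rw [Metric.tendsto_atTop]
  intro ε hε
  set η := ε / (8 * (‖f‖ + 1)) with hη_def
  have hη : 0 < η := by positivity
  -- tightness radius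
  obtain ⟨R, hR⟩ : ∃ R : ℝ, μ (Metric.closedBall 0 R)ᶜ < ENNReal.ofReal η := by
    have h1 : Tendsto (fun n : ℕ => μ (Metric.closedBall (0:ℝ×ℝ) (n:ℝ))ᶜ) atTop
        (𝓝 (μ (⋂ n : ℕ, (Metric.closedBall (0:ℝ×ℝ) (n:ℝ))ᶜ))) := by
      refine tendsto_measure_iInter_atTop
        (fun n => measurableSet_closedBall.compl.nullMeasurableSet)
        (fun i j hij => Set.compl_subset_compl.2
          (Metric.closedBall_subset_closedBall (by exact_mod_cast hij)))
        ⟨0, measure_ne_top _ _⟩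
    have h2 : (⋂ n : ℕ, (Metric.closedBall (0:ℝ×ℝ) (n:ℝ))ᶜ) = ∅ := by
      ext x
      simp only [Set.mem_iInter, Set.mem_compl_iff, Metric.mem_closedBall, not_le,
        Set.mem_empty_iff_false, iff_false, not_forall, not_lt]
      exact exists_nat_ge (dist x 0)
    rw [h2, measure_empty] at h1
    obtain ⟨n, hn⟩ := (h1.eventually_lt_const (ENNReal.ofReal_pos.2 hη)).exists
    exact ⟨n, hn⟩
  -- lower bound for μ (closedBall R)
  have hball : 1 - η ≤ (μ (Metric.closedBall (0:ℝ×ℝ) R)).toReal := by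
    have hsum : (μ (Metric.closedBall (0:ℝ×ℝ) R)).toReal
        + (μ (Metric.closedBall (0:ℝ×ℝ) R)ᶜ).toReal = 1 := by
      rw [← ENNReal.toReal_add (measure_ne_top _ _) (measure_ne_top _ _),
        measure_add_measure_compl measurableSet_closedBall, measure_univ, ENNReal.toReal_one]
    have h4 : (μ (Metric.closedBall (0:ℝ×ℝ) R)ᶜ).toReal ≤ η := by
      have := ENNReal.toReal_mono ENNReal.ofReal_ne_top hR.le
      rwa [ENNReal.toReal_ofReal hη.le] at this
    linarith
  -- bump integral lower bound
  have hμbump : 1 - η ≤ ∫ x, myBump R x ∂μ := by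
    have hmono : ∫ x, (Metric.closedBall (0:ℝ×ℝ) R).indicator (fun _ => (1:ℝ)) x ∂μ
        ≤ ∫ x, myBump R x ∂μ := by
      refine integral_mono ((integrable_const (1:ℝ)).indicator measurableSet_closedBall)
        ((myBump R).integrable μ) (fun x => ?_)
      by_cases hx : x ∈ Metric.closedBall (0:ℝ×ℝ) R
      · rw [Set.indicator_of_mem hx, myBump_eq_one R x (Metric.mem_closedBall.1 hx)]
      · rw [Set.indicator_of_notMem hx]; exact myBump_nonneg R x
    rw [integral_indicator_const (1:ℝ) measurableSet_closedBall, smul_eq_mul, mul_one, measureReal_def] at hmono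
    linarith
  -- uniform continuity on compact
  set K := Metric.closedBall (0:ℝ×ℝ) (R+1) ×ˢ Metric.closedBall c 1 with hK_def
  have hKcomp : IsCompact K := (isCompact_closedBall _ _).prod (isCompact_closedBall _ _)
  obtain ⟨δ, hδpos, hδ⟩ := Metric.uniformContinuousOn_iff.1
    (hKcomp.uniformContinuousOn_of_continuous f.continuous.continuousOn) η hη
  set δ' := min δ 1 with hδ'_def
  have hδ'pos : 0 < δ' := lt_min hδpos one_pos
  -- bad event sets
  set A : ℕ → Set Ω := fun n => {ω | R + 1 < dist (X n ω) 0} with hA_def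
  set B : ℕ → Set Ω := fun n => {ω | δ' ≤ dist (U n ω) c} with hB_def
  have hAmeas : ∀ n, MeasurableSet (A n) := fun n =>
    measurableSet_lt measurable_const ((hX n).dist measurable_const)
  have hBmeas : ∀ n, MeasurableSet (B n) := fun n =>
    measurableSet_le measurable_const ((hU n).dist measurable_const)
  -- eventual bound for B
  have hBev : ∀ᶠ n in atTop, (ℙ (B n)).toReal ≤ η := by
    filter_upwards [(tendstoInMeasure_iff_dist.1 hUc δ' hδ'pos).eventually_lt_const (ENNReal.ofReal_pos.2 hη)] with n hn
    have := ENNReal.toReal_mono ENNReal.ofReal_ne_top hn.le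
    rwa [ENNReal.toReal_ofReal hη.le] at this
  -- eventual bound for A
  have hAev : ∀ᶠ n in atTop, (ℙ (A n)).toReal ≤ 2 * η := by
    have hptw : ∀ n, (ℙ (A n)).toReal ≤ 1 - ∫ ω, myBump R (X n ω) ∂ℙ := by
      intro n
      have hIg : Integrable (fun ω => myBump R (X n ω)) ℙ :=
        (integrable_const ‖myBump R‖).mono'
          (((myBump R).continuous.measurable.comp (hX n)).aestronglyMeasurable)
          (ae_of_all _ fun ω => (myBump R).norm_coe_le_norm _)
      have hmono : ∫ ω, (A n).indicator (fun _ => (1:ℝ)) ω ∂ℙ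
          ≤ ∫ ω, (1 - myBump R (X n ω)) ∂ℙ := by
        refine integral_mono ((integrable_const (1:ℝ)).indicator (hAmeas n))
          ((integrable_const (1:ℝ)).sub hIg) (fun ω => ?_)
        by_cases hω : ω ∈ A n
        · rw [Set.indicator_of_mem hω, myBump_eq_zero R (X n ω) hω]; norm_num
        · rw [Set.indicator_of_notMem hω]
          have := myBump_le_one R (X n ω); linarith
      rw [integral_indicator_const (1:ℝ) (hAmeas n), smul_eq_mul, mul_one,
        integral_sub (integrable_const 1) hIg, integral_const, probReal_univ,
        smul_eq_mul, mul_one, measureReal_def] at hmono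
      linarith
    have hgev : ∀ᶠ n in atTop, (∫ x, myBump R x ∂μ) - η < ∫ ω, myBump R (X n ω) ∂ℙ :=
      (hweak (myBump R)).eventually_const_lt (by linarith)
    filter_upwards [hgev] with n hn
    have := hptw n
    linarith
  -- second term
  have hbev : ∀ᶠ n in atTop,
      |(∫ ω, f (X n ω, c) ∂ℙ) - ∫ x, f (x, c) ∂μ| ≤ η := by
    have hcont : Continuous (fun x : ℝ × ℝ => (x, c)) := continuous_id.prodMk continuous_const
    have hw := hweak (f.compContinuous ⟨fun x => (x, c), hcont⟩)
    simp only [BoundedContinuousFunction.coe_compContinuous, ContinuousMap.coe_mk,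
      Function.comp] at hw
    have := hw.eventually (Metric.closedBall_mem_nhds (∫ x, f (x, c) ∂μ) hη)
    filter_upwards [this] with n hn
    simpa [Real.dist_eq] using Metric.mem_closedBall.1 hn
  -- main pointwise-integral bound
  have hmain : ∀ n, |(∫ ω, f (X n ω, U n ω) ∂ℙ) - ∫ ω, f (X n ω, c) ∂ℙ|
      ≤ η + 2 * ‖f‖ * (ℙ (A n ∪ B n)).toReal := by
    intro n
    have hABmeas : MeasurableSet (A n ∪ B n) := (hAmeas n).union (hBmeas n)
    have hptw : ∀ ω, ‖f (X n ω, U n ω) - f (X n ω, c)‖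
        ≤ η + (A n ∪ B n).indicator (fun _ => 2 * ‖f‖) ω := by
      intro ω
      by_cases hω : ω ∈ A n ∪ B n
      · rw [Set.indicator_of_mem hω]
        have h1 : ‖f (X n ω, U n ω) - f (X n ω, c)‖ ≤ ‖f (X n ω, U n ω)‖ + ‖f (X n ω, c)‖ :=
          norm_sub_le _ _
        have h2 := f.norm_coe_le_norm (X n ω, U n ω)
        have h3 := f.norm_coe_le_norm (X n ω, c)
        linarith
      · rw [Set.indicator_of_notMem hω]
        simp only [Set.mem_union, hA_def, hB_def, Set.mem_setOf_eq, not_or, not_lt,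
          not_le] at hω
        obtain ⟨hωA, hωB⟩ := hω
        have hmem1 : (X n ω, U n ω) ∈ K := by
          refine Set.mem_prod.2 ⟨Metric.mem_closedBall.2 hωA, Metric.mem_closedBall.2 ?_⟩
          exact le_trans hωB.le (min_le_right _ _)
        have hmem2 : ((X n ω), c) ∈ K := by
          refine Set.mem_prod.2 ⟨Metric.mem_closedBall.2 hωA, Metric.mem_closedBall.2 ?_⟩
          simp
        have hdist : dist ((X n ω), U n ω) ((X n ω), c) < δ := by
          rw [Prod.dist_eq]
          simp only [dist_self]
          rw [max_eq_right dist_nonneg]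
          exact lt_of_lt_of_le hωB (min_le_left _ _)
        have := hδ _ hmem1 _ hmem2 hdist
        rw [Real.dist_eq] at this
        rw [Real.norm_eq_abs]
        linarith
    have hIind : Integrable ((A n ∪ B n).indicator (fun _ => 2 * ‖f‖)) ℙ :=
      (integrable_const _).indicator hABmeas
    calc |(∫ ω, f (X n ω, U n ω) ∂ℙ) - ∫ ω, f (X n ω, c) ∂ℙ|
        = |∫ ω, (f (X n ω, U n ω) - f (X n ω, c)) ∂ℙ| := by
          rw [integral_sub (hIfull n) (hIc n)]
      _ ≤ ∫ ω, ‖f (X n ω, U n ω) - f (X n ω, c)‖ ∂ℙ := by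
          rw [← Real.norm_eq_abs]; exact norm_integral_le_integral_norm _
      _ ≤ ∫ ω, (η + (A n ∪ B n).indicator (fun _ => 2 * ‖f‖) ω) ∂ℙ := by
          refine integral_mono ((hIfull n).sub (hIc n)).norm
            ((integrable_const η).add hIind) hptw
      _ = η + 2 * ‖f‖ * (ℙ (A n ∪ B n)).toReal := by
          rw [integral_add (integrable_const η) hIind, integral_const, probReal_univ,
            one_smul, integral_indicator_const _ hABmeas, smul_eq_mul, measureReal_def]
          ring
  -- combine
  have hfinal : ∀ᶠ n in atTop,
      dist (∫ ω, f (X n ω, U n ω) ∂ℙ) (∫ x, f (x, c) ∂μ) < ε := by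
    filter_upwards [hAev, hBev, hbev] with n hA' hB' hb'
    have hABle : (ℙ (A n ∪ B n)).toReal ≤ (ℙ (A n)).toReal + (ℙ (B n)).toReal := by
      have h1 : ℙ (A n ∪ B n) ≤ ℙ (A n) + ℙ (B n) := measure_union_le _ _
      have h2 := ENNReal.toReal_mono
        (by finiteness : ℙ (A n) + ℙ (B n) ≠ ⊤) h1
      rwa [ENNReal.toReal_add (measure_ne_top _ _) (measure_ne_top _ _)] at h2
    have hm := hmain n
    rw [Real.dist_eq]
    have htri : |(∫ ω, f (X n ω, U n ω) ∂ℙ) - ∫ x, f (x, c) ∂μ|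
        ≤ |(∫ ω, f (X n ω, U n ω) ∂ℙ) - ∫ ω, f (X n ω, c) ∂ℙ|
          + |(∫ ω, f (X n ω, c) ∂ℙ) - ∫ x, f (x, c) ∂μ| := abs_sub_le _ _ _
    have hbound : 2 * ‖f‖ * (ℙ (A n ∪ B n)).toReal ≤ 2 * ‖f‖ * (3 * η) := by
      have : (ℙ (A n ∪ B n)).toReal ≤ 3 * η := by linarith
      nlinarith [ (ℙ (A n ∪ B n)).toReal, ENNReal.toReal_nonneg (a := ℙ (A n ∪ B n))]
    have hηε : η * (8 * (‖f‖ + 1)) = ε := by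
      rw [hη_def]; field_simp
    nlinarith [hη]
  obtain ⟨N, hN⟩ := eventually_atTop.1 hfinal
  exact ⟨N, hN⟩

lemma my_tim_prod {Ω α β : Type*} {m : MeasurableSpace Ω} {μ : Measure Ω}
    [PseudoMetricSpace α] [PseudoMetricSpace β]
    {f : ℕ → Ω → α} {g : ℕ → Ω → β} {f' : Ω → α} {g' : Ω → β}
    (hf : TendstoInMeasure μ f atTop f') (hg : TendstoInMeasure μ g atTop g') :
    TendstoInMeasure μ (fun n ω => (f n ω, g n ω)) atTop (fun ω => (f' ω, g' ω)) := by
  rw [tendstoInMeasure_iff_dist] at hf hg ⊢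
  intro ε hε
  have hle : ∀ n, μ {ω | ε ≤ dist ((f n ω, g n ω)) ((f' ω, g' ω))} ≤
      μ {ω | ε ≤ dist (f n ω) (f' ω)} + μ {ω | ε ≤ dist (g n ω) (g' ω)} := by
    intro n
    refine le_trans (measure_mono ?_) (measure_union_le _ _)
    intro ω hω
    simp only [Set.mem_setOf_eq, Prod.dist_eq] at hω
    rcases le_max_iff.1 hω with h | h
    · exact Or.inl h
    · exact Or.inr h
  have hsum : Tendsto (fun n => μ {ω | ε ≤ dist (f n ω) (f' ω)}
      + μ {ω | ε ≤ dist (g n ω) (g' ω)}) atTop (𝓝 0) := by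
    have := (hf ε hε).add (hg ε hε)
    simpa using this
  exact tendsto_of_tendsto_of_tendsto_of_le_of_le tendsto_const_nhds hsum
    (fun n => zero_le) hle

lemma my_tim_const {Ω : Type*} {m : MeasurableSpace Ω} {μ : Measure Ω}
    [IsProbabilityMeasure μ] {d : ℕ → ℝ} {a : ℝ} (hd : Tendsto d atTop (𝓝 a)) :
    TendstoInMeasure μ (fun n (_ : Ω) => d n) atTop (fun _ => a) := by
  rw [tendstoInMeasure_iff_dist]
  intro ε hε
  have h1 : ∀ᶠ n in atTop, dist (d n) a < ε :=
    (tendsto_iff_dist_tendsto_zero.1 hd).eventually_lt_const hε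
  have h2 : ∀ᶠ n in atTop, μ {ω : Ω | ε ≤ dist (d n) a} = 0 := by
    filter_upwards [h1] with n hn
    have : {ω : Ω | ε ≤ dist (d n) a} = ∅ := by
      ext ω; simp [not_le.2 hn]
    simp [this]
  exact Tendsto.congr' (h2.mono fun n hn => hn.symm) tendsto_const_nhds

/-- Lemma 1 of the paper, strong identification with local alternatives:
if the laws of `(E_n, F_n)` converge weakly to a centered bivariate normal with variances
`Φ₁, Ψ` and correlation `ρ`, `d_n·G_n → C̃`, `Φ̂_n → Φ₁`, `Ψ̂_n → Ψ` in probability, and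
`Δ_n = Δ̃·d_n` with `d_n → 0`, then the laws of `(AR_n, LM_n)` converge weakly to the
bivariate normal with mean `(0, Δ̃C̃/√Ψ)`, unit variances and correlation `ρ`. -/
theorem stmt_2 {Ω : Type*} [MeasureSpace Ω] [IsProbabilityMeasure (ℙ : Measure Ω)]
    (E F G Φhat Ψhat : ℕ → Ω → ℝ)
    (hmeas : ∀ n, Measurable (E n) ∧ Measurable (F n) ∧ Measurable (G n) ∧
      Measurable (Φhat n) ∧ Measurable (Ψhat n))
    (Φ₁ Ψ ρ Ctil Δtil : ℝ) (hΦ₁ : 0 < Φ₁) (hΨ : 0 < Ψ) (hρ : ρ ∈ Set.Ioo (-1 : ℝ) 1)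
    (d : ℕ → ℝ) (hd : Tendsto d atTop (nhds 0))
    (hweak : ∀ f : (ℝ × ℝ) →ᵇ ℝ,
      Tendsto (fun n => ∫ ω, f (E n ω, F n ω) ∂ℙ) atTop
        (nhds (∫ z : ℝ × ℝ,
          f (Real.sqrt Φ₁ * z.1,
             Real.sqrt Ψ * (ρ * z.1 + Real.sqrt (1 - ρ ^ 2) * z.2))
          ∂((gaussianReal 0 1).prod (gaussianReal 0 1)))))
    (hG : TendstoInMeasure ℙ (fun n ω => d n * G n ω) atTop (fun _ => Ctil))
    (hΦhat : TendstoInMeasure ℙ Φhat atTop (fun _ => Φ₁))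
    (hΨhat : TendstoInMeasure ℙ Ψhat atTop (fun _ => Ψ)) :
    ∀ f : (ℝ × ℝ) →ᵇ ℝ,
      Tendsto (fun n => ∫ ω,
          f ((E n ω + 2 * (Δtil * d n) * F n ω + (Δtil * d n) ^ 2 * G n ω)
                / Real.sqrt (Φhat n ω),
             (F n ω + (Δtil * d n) * G n ω) / Real.sqrt (Ψhat n ω)) ∂ℙ) atTop
        (nhds (∫ z : ℝ × ℝ,
          f (z.1, Δtil * Ctil / Real.sqrt Ψ + ρ * z.1 + Real.sqrt (1 - ρ ^ 2) * z.2)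
          ∂((gaussianReal 0 1).prod (gaussianReal 0 1)))) := by
  intro f
  have hfn : (0:ℝ) ≤ ‖f‖ := norm_nonneg f
  have hsΦ0 : Real.sqrt Φ₁ ≠ 0 := (Real.sqrt_pos.2 hΦ₁).ne'
  have hsΨ0 : Real.sqrt Ψ ≠ 0 := (Real.sqrt_pos.2 hΨ).ne'
  set ν : Measure (ℝ × ℝ) := (gaussianReal 0 1).prod (gaussianReal 0 1) with hν_def
  set T : ℝ × ℝ → ℝ × ℝ := fun z =>
    (Real.sqrt Φ₁ * z.1, Real.sqrt Ψ * (ρ * z.1 + Real.sqrt (1 - ρ ^ 2) * z.2)) with hT_def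
  have hTcont : Continuous T := by fun_prop
  set μ : Measure (ℝ × ℝ) := Measure.map T ν with hμ_def
  haveI : IsProbabilityMeasure μ := Measure.isProbabilityMeasure_map hTcont.measurable.aemeasurable
  set X : ℕ → Ω → ℝ × ℝ := fun n ω => (E n ω, F n ω) with hX_def
  set U : ℕ → Ω → ℝ × ℝ × ℝ × ℝ := fun n ω => (d n * G n ω, Φhat n ω, Ψhat n ω, d n)
    with hU_def
  set c : ℝ × ℝ × ℝ × ℝ := (Ctil, Φ₁, Ψ, 0) with hc_def
  have hXmeas : ∀ n, Measurable (X n) := fun n => (hmeas n).1.prodMk (hmeas n).2.1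
  have hUmeas : ∀ n, Measurable (U n) := fun n =>
    (measurable_const.mul (hmeas n).2.2.1).prodMk
      ((hmeas n).2.2.2.1.prodMk ((hmeas n).2.2.2.2.prodMk measurable_const))
  have hweak' : ∀ fb : (ℝ × ℝ) →ᵇ ℝ,
      Tendsto (fun n => ∫ ω, fb (X n ω) ∂ℙ) atTop (𝓝 (∫ x, fb x ∂μ)) := by
    intro fb
    rw [hμ_def, integral_map hTcont.measurable.aemeasurable
      fb.continuous.measurable.aestronglyMeasurable]
    exact hweak fb
  have hUc : TendstoInMeasure ℙ U atTop (fun _ => c) :=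
    my_tim_prod hG (my_tim_prod hΦhat (my_tim_prod hΨhat (my_tim_const hd)))
  -- the continuous map
  set sΦ : ℝ → ℝ := fun p => (Real.sqrt (max p (Φ₁ / 2)))⁻¹ with hsΦ_def
  set sΨ : ℝ → ℝ := fun p => (Real.sqrt (max p (Ψ / 2)))⁻¹ with hsΨ_def
  have hsΦcont : Continuous sΦ :=
    Continuous.inv₀ (Real.continuous_sqrt.comp (continuous_id.max continuous_const))
      (fun p => (Real.sqrt_pos.2 (lt_of_lt_of_le (half_pos hΦ₁) (le_max_right _ _))).ne')
  have hsΨcont : Continuous sΨ :=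
    Continuous.inv₀ (Real.continuous_sqrt.comp (continuous_id.max continuous_const))
      (fun p => (Real.sqrt_pos.2 (lt_of_lt_of_le (half_pos hΨ) (le_max_right _ _))).ne')
  set gmap : (ℝ × ℝ) × (ℝ × ℝ × ℝ × ℝ) → ℝ × ℝ := fun q =>
    ((q.1.1 + 2 * Δtil * q.2.2.2.2 * q.1.2 + Δtil ^ 2 * q.2.2.2.2 * q.2.1) * sΦ q.2.2.1,
     (q.1.2 + Δtil * q.2.1) * sΨ q.2.2.2.1) with hg_def
  have hgcont : Continuous gmap := by
    refine Continuous.prodMk (Continuous.mul (by fun_prop) ?_) (Continuous.mul (by fun_prop) ?_)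
    · exact hsΦcont.comp (by fun_prop)
    · exact hsΨcont.comp (by fun_prop)
  set fbig : ((ℝ × ℝ) × (ℝ × ℝ × ℝ × ℝ)) →ᵇ ℝ := f.compContinuous ⟨gmap, hgcont⟩ with hfbig_def
  have hsl := mySlutsky X U hXmeas hUmeas μ c hweak' hUc fbig
  -- identify the limit
  have hRHS : ∫ x, fbig (x, c) ∂μ
      = ∫ z : ℝ × ℝ,
          f (z.1, Δtil * Ctil / Real.sqrt Ψ + ρ * z.1 + Real.sqrt (1 - ρ ^ 2) * z.2) ∂ν := by
    have hm : AEStronglyMeasurable (fun x : ℝ × ℝ => fbig (x, c)) μ :=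
      (fbig.continuous.comp (continuous_id.prodMk continuous_const)).aestronglyMeasurable
    rw [hμ_def, integral_map hTcont.measurable.aemeasurable hm]
    refine integral_congr_ae (ae_of_all _ fun z => ?_)
    show f (gmap (T z, c)) = _
    have harg : gmap (T z, c)
        = (z.1, Δtil * Ctil / Real.sqrt Ψ + ρ * z.1 + Real.sqrt (1 - ρ ^ 2) * z.2) := by
      simp only [hg_def, hT_def, hc_def, hsΦ_def, hsΨ_def]
      have h1 : max Φ₁ (Φ₁ / 2) = Φ₁ := max_eq_left (half_le_self hΦ₁.le)
      have h2 : max Ψ (Ψ / 2) = Ψ := max_eq_left (half_le_self hΨ.le)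
      rw [h1, h2]
      refine Prod.ext ?_ ?_
      · simp only
        field_simp
        ring
      · simp only
        field_simp
        ring
    rw [harg]
  rw [← hRHS]
  -- compare actual statistic with the modified one
  set a : ℕ → ℝ := fun n => ∫ ω,
      f ((E n ω + 2 * (Δtil * d n) * F n ω + (Δtil * d n) ^ 2 * G n ω)
            / Real.sqrt (Φhat n ω),
         (F n ω + (Δtil * d n) * G n ω) / Real.sqrt (Ψhat n ω)) ∂ℙ with ha_def
  set b : ℕ → ℝ := fun n => ∫ ω, fbig (X n ω, U n ω) ∂ℙ with hb_def
  set bad : ℕ → Set Ω := fun n =>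
    {ω | Φhat n ω < Φ₁ / 2} ∪ {ω | Ψhat n ω < Ψ / 2} with hbad_def
  have hbadmeas : ∀ n, MeasurableSet (bad n) := fun n =>
    (measurableSet_lt (hmeas n).2.2.2.1 measurable_const).union
      (measurableSet_lt (hmeas n).2.2.2.2 measurable_const)
  have hagree : ∀ n ω, ω ∉ bad n →
      ((E n ω + 2 * (Δtil * d n) * F n ω + (Δtil * d n) ^ 2 * G n ω)
            / Real.sqrt (Φhat n ω),
       (F n ω + (Δtil * d n) * G n ω) / Real.sqrt (Ψhat n ω))
      = gmap (X n ω, U n ω) := by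
    intro n ω hω
    simp only [hbad_def, Set.mem_union, Set.mem_setOf_eq, not_or, not_lt] at hω
    obtain ⟨h1, h2⟩ := hω
    simp only [hg_def, hX_def, hU_def, hsΦ_def, hsΨ_def]
    rw [max_eq_left h1, max_eq_left h2]
    refine Prod.ext ?_ ?_
    · simp only
      rw [div_eq_mul_inv]
      ring_nf
    · simp only
      rw [div_eq_mul_inv]
      ring_nf
  -- probability of bad events tends to zero
  have hbad0 : Tendsto (fun n => (ℙ (bad n)).toReal) atTop (𝓝 0) := by
    have h1 : ∀ n, ℙ (bad n) ≤ ℙ {ω | Φ₁ / 2 ≤ dist (Φhat n ω) Φ₁}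
        + ℙ {ω | Ψ / 2 ≤ dist (Ψhat n ω) Ψ} := by
      intro n
      refine le_trans (measure_mono ?_) (measure_union_le _ _)
      intro ω hω
      simp only [hbad_def, Set.mem_union, Set.mem_setOf_eq, Real.dist_eq] at hω ⊢
      rcases hω with h | h
      · left
        have := neg_abs_le (Φhat n ω - Φ₁)
        linarith
      · right
        have := neg_abs_le (Ψhat n ω - Ψ)
        linarith
    have h2 : Tendsto (fun n => ℙ {ω | Φ₁ / 2 ≤ dist (Φhat n ω) Φ₁}
        + ℙ {ω | Ψ / 2 ≤ dist (Ψhat n ω) Ψ}) atTop (𝓝 0) := by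
      have := (tendstoInMeasure_iff_dist.1 hΦhat (Φ₁ / 2) (half_pos hΦ₁)).add (tendstoInMeasure_iff_dist.1 hΨhat (Ψ / 2) (half_pos hΨ))
      simpa using this
    have h3 : Tendsto (fun n => ℙ (bad n)) atTop (𝓝 0) :=
      tendsto_of_tendsto_of_tendsto_of_le_of_le tendsto_const_nhds h2
        (fun n => zero_le) h1
    have := (ENNReal.tendsto_toReal (by simp : (0:ℝ≥0∞) ≠ ⊤)).comp h3
    simpa [Function.comp_def] using this
  -- integral difference bound
  have hIb : ∀ n, Integrable (fun ω => fbig (X n ω, U n ω)) ℙ := fun n =>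
    (integrable_const ‖fbig‖).mono'
      ((fbig.continuous.measurable.comp ((hXmeas n).prodMk (hUmeas n))).aestronglyMeasurable)
      (ae_of_all _ fun ω => fbig.norm_coe_le_norm _)
  have hIa : ∀ n, Integrable (fun ω =>
      f ((E n ω + 2 * (Δtil * d n) * F n ω + (Δtil * d n) ^ 2 * G n ω)
            / Real.sqrt (Φhat n ω),
         (F n ω + (Δtil * d n) * G n ω) / Real.sqrt (Ψhat n ω))) ℙ := by
    intro n
    have hm1 : Measurable (fun ω =>
        (E n ω + 2 * (Δtil * d n) * F n ω + (Δtil * d n) ^ 2 * G n ω)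
          / Real.sqrt (Φhat n ω)) := by
      refine Measurable.div ?_ (Real.continuous_sqrt.measurable.comp (hmeas n).2.2.2.1)
      exact ((hmeas n).1.add (measurable_const.mul (hmeas n).2.1)).add
        (measurable_const.mul (hmeas n).2.2.1)
    have hm2 : Measurable (fun ω =>
        (F n ω + (Δtil * d n) * G n ω) / Real.sqrt (Ψhat n ω)) := by
      refine Measurable.div ?_ (Real.continuous_sqrt.measurable.comp (hmeas n).2.2.2.2)
      exact (hmeas n).2.1.add (measurable_const.mul (hmeas n).2.2.1)
    exact (integrable_const ‖f‖).mono'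
      ((f.continuous.measurable.comp (hm1.prodMk hm2)).aestronglyMeasurable)
      (ae_of_all _ fun ω => f.norm_coe_le_norm _)
  have hdiff : ∀ n, |a n - b n| ≤ 2 * ‖f‖ * (ℙ (bad n)).toReal := by
    intro n
    have hptw : ∀ ω, ‖f ((E n ω + 2 * (Δtil * d n) * F n ω + (Δtil * d n) ^ 2 * G n ω)
            / Real.sqrt (Φhat n ω),
         (F n ω + (Δtil * d n) * G n ω) / Real.sqrt (Ψhat n ω))
        - fbig (X n ω, U n ω)‖ ≤ (bad n).indicator (fun _ => 2 * ‖f‖) ω := by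
      intro ω
      by_cases hω : ω ∈ bad n
      · rw [Set.indicator_of_mem hω]
        have h1 := f.norm_coe_le_norm ((E n ω + 2 * (Δtil * d n) * F n ω
            + (Δtil * d n) ^ 2 * G n ω) / Real.sqrt (Φhat n ω),
           (F n ω + (Δtil * d n) * G n ω) / Real.sqrt (Ψhat n ω))
        have h2 := fbig.norm_coe_le_norm (X n ω, U n ω)
        have h3 : ‖fbig‖ ≤ ‖f‖ := by
          rw [hfbig_def]
          exact BoundedContinuousFunction.norm_compContinuous_le f _
        have := norm_sub_le (f ((E n ω + 2 * (Δtil * d n) * F n ω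
            + (Δtil * d n) ^ 2 * G n ω) / Real.sqrt (Φhat n ω),
           (F n ω + (Δtil * d n) * G n ω) / Real.sqrt (Ψhat n ω)))
          (fbig (X n ω, U n ω))
        linarith
      · rw [Set.indicator_of_notMem hω]
        have : fbig (X n ω, U n ω) = f (gmap (X n ω, U n ω)) := rfl
        rw [this, ← hagree n ω hω, sub_self, norm_zero]
    have hIind : Integrable ((bad n).indicator (fun _ => 2 * ‖f‖)) ℙ :=
      (integrable_const _).indicator (hbadmeas n)
    calc |a n - b n| = |∫ ω, (f ((E n ω + 2 * (Δtil * d n) * F n ω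
            + (Δtil * d n) ^ 2 * G n ω) / Real.sqrt (Φhat n ω),
           (F n ω + (Δtil * d n) * G n ω) / Real.sqrt (Ψhat n ω))
          - fbig (X n ω, U n ω)) ∂ℙ| := by
          rw [ha_def, hb_def]
          rw [integral_sub (hIa n) (hIb n)]
      _ ≤ ∫ ω, ‖f ((E n ω + 2 * (Δtil * d n) * F n ω
            + (Δtil * d n) ^ 2 * G n ω) / Real.sqrt (Φhat n ω),
           (F n ω + (Δtil * d n) * G n ω) / Real.sqrt (Ψhat n ω))
          - fbig (X n ω, U n ω)‖ ∂ℙ := by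
          rw [← Real.norm_eq_abs]; exact norm_integral_le_integral_norm _
      _ ≤ ∫ ω, (bad n).indicator (fun _ => 2 * ‖f‖) ω ∂ℙ :=
          integral_mono ((hIa n).sub (hIb n)).norm hIind hptw
      _ = 2 * ‖f‖ * (ℙ (bad n)).toReal := by
          rw [integral_indicator_const _ (hbadmeas n), smul_eq_mul, measureReal_def]; ring
  -- conclude
  have hdiff0 : Tendsto (fun n => a n - b n) atTop (𝓝 0) := by
    refine squeeze_zero_norm (a := fun n => 2 * ‖f‖ * (ℙ (bad n)).toReal) (fun n => ?_) ?_
    · rw [Real.norm_eq_abs]; exact hdiff n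
    · have := hbad0.const_mul (2 * ‖f‖)
      simpa using this
  have hfin := hdiff0.add hsl
  rw [zero_add] at hfin
  have : (fun n => a n - b n + b n) = a := by
    funext n; ring
  rw [this] at hfin
  exact hfin
end

section
/- Let (Ω, 𝔽, ℙ) be a probability space carrying, for each n, real random variables A_n, B_n, Φ̂_n, Ψ̂_n, ρ̂_n. Let Δ, C̃ ∈ ℝ, let (𝒞_n) be a real sequence with 𝒞_n → C̃, and let Φ₁ᵇ > 0, Ψᵇ > 0, and ρ₀ := Φ₁₂ᵇ/√(Φ₁ᵇΨᵇ) ∈ (−1,1). Assume: (i) the laws of (A_n − Δ²𝒞_n, B_n − Δ𝒞_n) converge weakly to the law of (√Φ₁ᵇ·Z₁, √Ψᵇ·(ρ₀Z₁ + √(1−ρ₀²)·Z₂)) for Z₁, Z₂ independent standard normal (the centered bivariate normal with variances Φ₁ᵇ, Ψᵇ and correlation ρ₀); (ii) Φ̂_n → Φ₁ᵇ, Ψ̂_n → Ψᵇ, and ρ̂_n → ρ₀ in probability. Define AR_n := A_n/√Φ̂_n, LM_n := B_n/√Ψ̂_n, and LM*_n := (LM_n − ρ̂_n·AR_n)/√(1−ρ̂_n²).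 Then the laws of (AR_n, LM*_n) converge weakly to the product of the normal distribution with mean m₁(Δ) and variance 1 and the normal distribution with mean m₂(Δ) and variance 1, where m₁(Δ) = (Φ₁ᵇ)^{−1/2}Δ²C̃ and m₂(Δ) = (1−ρ₀²)^{−1/2}·((Ψᵇ)^{−1/2}ΔC̃ − ρ₀(Φ₁ᵇ)^{−1/2}Δ²C̃). -/
open MeasureTheory ProbabilityTheory Filter BoundedContinuousFunction
open scoped ProbabilityTheory
open Topology
open scoped ENNReal

set_option maxHeartbeats 2000000

section aux

variable {E : Type*} [PseudoMetricSpace E]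

/-- A continuous bump: 0 on the closed ball of radius `R`, 1 outside radius `R+1`. -/
noncomputable def distBump (x₀ : E) (R : ℝ) : E →ᵇ ℝ :=
  BoundedContinuousFunction.mkOfBound
    ⟨fun x => min 1 (max 0 (dist x x₀ - R)), by fun_prop⟩ 1 (by
      intro x y
      have h0 : ∀ z : E, 0 ≤ min 1 (max 0 (dist z x₀ - R)) :=
        fun z => le_min zero_le_one (le_max_left _ _)
      have h1 : ∀ z : E, min 1 (max 0 (dist z x₀ - R)) ≤ 1 := fun z => min_le_left _ _
      rw [Real.dist_eq, abs_sub_le_iff]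
      constructor <;> simp only [ContinuousMap.coe_mk] <;> linarith [h0 x, h1 x, h0 y, h1 y])

lemma distBump_apply (x₀ : E) (R : ℝ) (x : E) :
    distBump x₀ R x = min 1 (max 0 (dist x x₀ - R)) := rfl

lemma distBump_nonneg (x₀ : E) (R : ℝ) (x : E) : 0 ≤ distBump x₀ R x :=
  le_min zero_le_one (le_max_left _ _)

lemma distBump_le_one (x₀ : E) (R : ℝ) (x : E) : distBump x₀ R x ≤ 1 := min_le_left _ _

lemma distBump_eq_one (x₀ : E) (R : ℝ) {x : E} (h : R + 1 ≤ dist x x₀) :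
    distBump x₀ R x = 1 := by
  rw [distBump_apply]
  have : (1:ℝ) ≤ dist x x₀ - R := by linarith
  rw [max_eq_right (by linarith), min_eq_left this]

lemma distBump_eq_zero (x₀ : E) (R : ℝ) {x : E} (h : dist x x₀ ≤ R) :
    distBump x₀ R x = 0 := by
  rw [distBump_apply, max_eq_left (by linarith), min_eq_right zero_le_one]

end aux

lemma integrable_comp_bcf {Ω : Type*} [MeasureSpace Ω] [IsProbabilityMeasure (ℙ : Measure Ω)]
    {E : Type*} [PseudoMetricSpace E] [MeasurableSpace E] [OpensMeasurableSpace E]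
    (h : E →ᵇ ℝ) {X : Ω → E} (hX : Measurable X) :
    Integrable (fun ω => h (X ω)) ℙ :=
  ⟨(h.continuous.measurable.comp hX).aestronglyMeasurable,
    HasFiniteIntegral.of_bounded (C := ‖h‖) (ae_of_all _ fun ω => h.norm_coe_le_norm _)⟩

lemma tailBound {Ω : Type*} [MeasureSpace Ω] [IsProbabilityMeasure (ℙ : Measure Ω)]
    {E : Type*} [PseudoMetricSpace E] [MeasurableSpace E] [OpensMeasurableSpace E]
    (X : ℕ → Ω → E) (hX : ∀ n, Measurable (X n))
    (ν : Measure E) [IsProbabilityMeasure ν] (x₀ : E)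
    (hconv : ∀ f : E →ᵇ ℝ, Tendsto (fun n => ∫ ω, f (X n ω) ∂ℙ) atTop (𝓝 (∫ x, f x ∂ν)))
    {ε : ℝ} (hε : 0 < ε) :
    ∃ M : ℝ, 0 < M ∧ ∀ᶠ n in atTop,
      ℙ {ω | M ≤ dist (X n ω) x₀} ≤ ENNReal.ofReal ε := by
  -- find a radius R with small ν-mass outside
  have hsets : ∀ k : ℕ, MeasurableSet {x : E | (k:ℝ) < dist x x₀} := fun k =>
    (isOpen_lt continuous_const (continuous_id.dist continuous_const)).measurableSet
  have hanti : Antitone fun k : ℕ => {x : E | (k:ℝ) < dist x x₀} := by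
    intro k m hkm x hx
    simp only [Set.mem_setOf_eq] at *
    exact lt_of_le_of_lt (by exact_mod_cast Nat.cast_le.2 hkm) hx
  have hiInter : (⋂ k : ℕ, {x : E | (k:ℝ) < dist x x₀}) = ∅ := by
    ext x
    simp only [Set.mem_iInter, Set.mem_setOf_eq, Set.mem_empty_iff_false, iff_false, not_forall,
      not_lt]
    obtain ⟨k, hk⟩ := exists_nat_ge (dist x x₀)
    exact ⟨k, hk⟩
  have htend : Tendsto (fun k : ℕ => ν {x : E | (k:ℝ) < dist x x₀}) atTop (𝓝 0) := by
    have := tendsto_measure_iInter_atTop (μ := ν)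
      (fun k => (hsets k).nullMeasurableSet) hanti ⟨0, measure_ne_top _ _⟩
    rwa [hiInter, measure_empty] at this
  obtain ⟨k, hk⟩ :=
    (htend.eventually_lt_const (by positivity : (0:ℝ≥0∞) < ENNReal.ofReal (ε/2))).exists
  set R : ℝ := (k : ℝ) with hR
  have hSet : MeasurableSet {x : E | R < dist x x₀} := hsets k
  -- ∫ h dν ≤ ε/2
  have hIH : ∫ x, distBump x₀ R x ∂ν ≤ ε / 2 := by
    have hle : ∫ x, distBump x₀ R x ∂ν
        ≤ ∫ x, Set.indicator {x : E | R < dist x x₀} (1 : E → ℝ) x ∂ν := by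
      refine integral_mono ((distBump x₀ R).integrable ν)
        ((integrable_const (1:ℝ)).indicator hSet) ?_
      intro x
      by_cases hx : R < dist x x₀
      · rw [Set.indicator_of_mem (show x ∈ {x : E | R < dist x x₀} from hx)]
        exact distBump_le_one _ _ _
      · rw [Set.indicator_of_notMem (show x ∉ {x : E | R < dist x x₀} from hx),
          distBump_eq_zero x₀ R (not_lt.mp hx)]
    rw [integral_indicator_one hSet] at hle
    refine hle.trans (ENNReal.toReal_le_of_le_ofReal (by positivity) hk.le)
  -- eventually ∫ h(X n) ≤ ε
  have hev : ∀ᶠ n in atTop, ∫ ω, distBump x₀ R (X n ω) ∂ℙ ≤ ε :=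
    (hconv (distBump x₀ R)).eventually_le_const (by linarith)
  refine ⟨R + 1, by positivity, ?_⟩
  filter_upwards [hev] with n hn
  have hSmeas : MeasurableSet {ω | R + 1 ≤ dist (X n ω) x₀} :=
    (hX n) (isClosed_le continuous_const (continuous_id.dist continuous_const)).measurableSet
  have key : (ℙ {ω | R + 1 ≤ dist (X n ω) x₀}).toReal ≤ ∫ ω, distBump x₀ R (X n ω) ∂ℙ := by
    rw [← measureReal_def, ← integral_indicator_one hSmeas]
    refine integral_mono ((integrable_const (1:ℝ)).indicator hSmeas)
      (integrable_comp_bcf (distBump x₀ R) (hX n)) ?_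
    intro ω
    by_cases hω : ω ∈ {ω | R + 1 ≤ dist (X n ω) x₀}
    · rw [Set.indicator_of_mem hω]
      show (1:ℝ) ≤ distBump x₀ R (X n ω)
      rw [distBump_eq_one x₀ R hω]
    · rw [Set.indicator_of_notMem hω]
      exact distBump_nonneg _ _ _
  rw [ENNReal.le_ofReal_iff_toReal_le (measure_ne_top _ _) hε.le]
  exact key.trans hn

lemma slutsky {Ω : Type*} [MeasureSpace Ω] [IsProbabilityMeasure (ℙ : Measure Ω)]
    {E : Type*} [PseudoMetricSpace E] [ProperSpace E] [MeasurableSpace E]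
    [OpensMeasurableSpace E]
    (X Y : ℕ → Ω → E) (hX : ∀ n, Measurable (X n)) (hY : ∀ n, Measurable (Y n))
    (ν : Measure E) [IsProbabilityMeasure ν] (x₀ : E)
    (hconv : ∀ f : E →ᵇ ℝ, Tendsto (fun n => ∫ ω, f (X n ω) ∂ℙ) atTop (𝓝 (∫ x, f x ∂ν)))
    (hprob : ∀ δ : ℝ, 0 < δ → ∀ ε : ℝ, 0 < ε →
      ∀ᶠ n in atTop, ℙ {ω | δ ≤ dist (X n ω) (Y n ω)} ≤ ENNReal.ofReal ε) :
    ∀ f : E →ᵇ ℝ, Tendsto (fun n => ∫ ω, f (Y n ω) ∂ℙ) atTop (𝓝 (∫ x, f x ∂ν)) := by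
  intro f
  rw [Metric.tendsto_nhds]
  intro ε hε
  have hfnorm : (0:ℝ) ≤ ‖f‖ := norm_nonneg f
  set ε₁ := ε / (3 + 4 * ‖f‖) with hε₁def
  have hε₁ : 0 < ε₁ := by positivity
  obtain ⟨M, hM0, hMev⟩ := tailBound X hX ν x₀ hconv hε₁
  have hK : IsCompact (Metric.closedBall x₀ (M + 1)) := isCompact_closedBall _ _
  have huc : UniformContinuousOn f (Metric.closedBall x₀ (M + 1)) :=
    hK.uniformContinuousOn_of_continuous f.continuous.continuousOn
  rw [Metric.uniformContinuousOn_iff] at huc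
  obtain ⟨δ₀, hδ₀, hδ⟩ := huc ε₁ hε₁
  set δ' := min δ₀ 1 with hδ'def
  have hδ' : 0 < δ' := lt_min hδ₀ one_pos
  have hBev := hprob δ' hδ' ε₁ hε₁
  have hfev : ∀ᶠ n in atTop, dist (∫ ω, f (X n ω) ∂ℙ) (∫ x, f x ∂ν) < ε₁ :=
    (Metric.tendsto_nhds.mp (hconv f)) ε₁ hε₁
  filter_upwards [hMev, hBev, hfev] with n hCn hBn hfn
  set Bn := {ω | δ' ≤ dist (X n ω) (Y n ω)} with hBndef
  set Cn := {ω | M ≤ dist (X n ω) x₀} with hCndef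
  have hBmeas : MeasurableSet Bn :=
    measurableSet_le measurable_const ((hX n).dist (hY n))
  have hCmeas : MeasurableSet Cn :=
    measurableSet_le measurable_const ((hX n).dist measurable_const)
  have hSmeas : MeasurableSet (Bn ∪ Cn) := hBmeas.union hCmeas
  have int_fY : Integrable (fun ω => f (Y n ω)) ℙ := integrable_comp_bcf f (hY n)
  have int_fX : Integrable (fun ω => f (X n ω)) ℙ := integrable_comp_bcf f (hX n)
  -- pointwise bound
  have key1 : ∀ ω, |f (Y n ω) - f (X n ω)|
      ≤ ε₁ + 2 * ‖f‖ * Set.indicator (Bn ∪ Cn) (1 : Ω → ℝ) ω := by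
    intro ω
    by_cases hω : ω ∈ Bn ∪ Cn
    · rw [Set.indicator_of_mem hω]
      have h1 : |f (Y n ω)| ≤ ‖f‖ := by
        rw [← Real.norm_eq_abs]; exact f.norm_coe_le_norm _
      have h2 : |f (X n ω)| ≤ ‖f‖ := by
        rw [← Real.norm_eq_abs]; exact f.norm_coe_le_norm _
      have h3 : |f (Y n ω) - f (X n ω)| ≤ |f (Y n ω)| + |f (X n ω)| := by
        rw [← Real.norm_eq_abs]
        exact (norm_sub_le _ _).trans (by rw [Real.norm_eq_abs, Real.norm_eq_abs])
      have : (1:ℝ) = (1 : Ω → ℝ) ω := rfl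
      rw [← this]
      linarith
    · rw [Set.mem_union] at hω
      push_neg at hω
      obtain ⟨hω1, hω2⟩ := hω
      rw [Set.indicator_of_notMem (by rw [Set.mem_union]; exact fun h => h.elim hω1 hω2)]
      have hxy : dist (X n ω) (Y n ω) < δ' := not_le.mp hω1
      have hxd : dist (X n ω) x₀ < M := not_le.mp hω2
      have hXmem : X n ω ∈ Metric.closedBall x₀ (M + 1) := by
        rw [Metric.mem_closedBall]; linarith
      have hYmem : Y n ω ∈ Metric.closedBall x₀ (M + 1) := by
        rw [Metric.mem_closedBall]
        have := dist_triangle (Y n ω) (X n ω) x₀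
        have h4 : dist (Y n ω) (X n ω) < δ' := by rwa [dist_comm]
        have h5 : δ' ≤ 1 := min_le_right _ _
        linarith
      have := hδ (X n ω) hXmem (Y n ω) hYmem (lt_of_lt_of_le hxy (min_le_left _ _))
      rw [Real.dist_eq] at this
      rw [abs_sub_comm]
      linarith
  -- integral bound
  have key2 : |(∫ ω, f (Y n ω) ∂ℙ) - ∫ ω, f (X n ω) ∂ℙ|
      ≤ ε₁ + 2 * ‖f‖ * ((ℙ Bn).toReal + (ℙ Cn).toReal) := by
    rw [← integral_sub int_fY int_fX]
    have h6 : |∫ ω, (f (Y n ω) - f (X n ω)) ∂ℙ| ≤ ∫ ω, |f (Y n ω) - f (X n ω)| ∂ℙ := by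
      rw [← Real.norm_eq_abs]
      exact (norm_integral_le_integral_norm _).trans_eq (by simp [Real.norm_eq_abs])
    have int_ind : Integrable (fun ω => Set.indicator (Bn ∪ Cn) (1 : Ω → ℝ) ω) ℙ :=
      (integrable_const (1:ℝ)).indicator hSmeas
    have h7 : ∫ ω, |f (Y n ω) - f (X n ω)| ∂ℙ
        ≤ ∫ ω, (ε₁ + 2 * ‖f‖ * Set.indicator (Bn ∪ Cn) (1 : Ω → ℝ) ω) ∂ℙ := by
      refine integral_mono (int_fY.sub int_fX).abs
        ((integrable_const ε₁).add (int_ind.const_mul _)) key1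
    have h8 : ∫ ω, (ε₁ + 2 * ‖f‖ * Set.indicator (Bn ∪ Cn) (1 : Ω → ℝ) ω) ∂ℙ
        = ε₁ + 2 * ‖f‖ * (ℙ (Bn ∪ Cn)).toReal := by
      rw [integral_add (integrable_const ε₁) (int_ind.const_mul _), integral_const,
        integral_const_mul, integral_indicator_one hSmeas]
      simp [measureReal_def]
    have h9 : (ℙ (Bn ∪ Cn)).toReal ≤ (ℙ Bn).toReal + (ℙ Cn).toReal := by
      rw [← ENNReal.toReal_add (measure_ne_top _ _) (measure_ne_top _ _)]
      exact ENNReal.toReal_mono (by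
        exact ENNReal.add_ne_top.mpr ⟨measure_ne_top _ _, measure_ne_top _ _⟩)
        (measure_union_le _ _)
    have h10 := h6.trans (h7.trans_eq h8)
    nlinarith [mul_le_mul_of_nonneg_left h9 (by positivity : (0:ℝ) ≤ 2 * ‖f‖)]
  have hBn' : (ℙ Bn).toReal ≤ ε₁ := ENNReal.toReal_le_of_le_ofReal hε₁.le hBn
  have hCn' : (ℙ Cn).toReal ≤ ε₁ := ENNReal.toReal_le_of_le_ofReal hε₁.le hCn
  rw [Real.dist_eq] at hfn ⊢
  have htri : |(∫ ω, f (Y n ω) ∂ℙ) - ∫ x, f x ∂ν|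
      ≤ |(∫ ω, f (Y n ω) ∂ℙ) - ∫ ω, f (X n ω) ∂ℙ| + |(∫ ω, f (X n ω) ∂ℙ) - ∫ x, f x ∂ν| :=
    abs_sub_le _ _ _
  have hfin : ε₁ * (3 + 4 * ‖f‖) = ε := by
    rw [hε₁def]; field_simp
  nlinarith [mul_le_mul_of_nonneg_left (add_le_add hBn' hCn') (by positivity : (0:ℝ) ≤ 2 * ‖f‖)]

/-- The statistic map `(a,b,φ,ψ,r) ↦ (a/√φ, (b/√ψ - r·a/√φ)/√(1-r²))`. -/
noncomputable def Gfun : (ℝ × ℝ) × (ℝ × ℝ × ℝ) → ℝ × ℝ := fun p =>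
  (p.1.1 / Real.sqrt p.2.1,
    (p.1.2 / Real.sqrt p.2.2.1 - p.2.2.2 * (p.1.1 / Real.sqrt p.2.1)) /
      Real.sqrt (1 - p.2.2.2 ^ 2))

def GDom : Set ((ℝ × ℝ) × (ℝ × ℝ × ℝ)) :=
  {p | 0 < p.2.1 ∧ 0 < p.2.2.1 ∧ p.2.2.2 ^ 2 < 1}

lemma Gfun_contOn : ContinuousOn Gfun GDom := by
  have hφ : Continuous fun p : (ℝ × ℝ) × (ℝ × ℝ × ℝ) => p.2.1 :=
    continuous_fst.comp continuous_snd
  have hψ : Continuous fun p : (ℝ × ℝ) × (ℝ × ℝ × ℝ) => p.2.2.1 :=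
    (continuous_fst.comp continuous_snd).comp continuous_snd
  have hr : Continuous fun p : (ℝ × ℝ) × (ℝ × ℝ × ℝ) => p.2.2.2 :=
    (continuous_snd.comp continuous_snd).comp continuous_snd
  have ha : Continuous fun p : (ℝ × ℝ) × (ℝ × ℝ × ℝ) => p.1.1 :=
    continuous_fst.comp continuous_fst
  have hb : Continuous fun p : (ℝ × ℝ) × (ℝ × ℝ × ℝ) => p.1.2 :=
    continuous_snd.comp continuous_fst
  have h1 : ContinuousOn (fun p : (ℝ × ℝ) × (ℝ × ℝ × ℝ) => p.1.1 / Real.sqrt p.2.1) GDom :=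
    ContinuousOn.div ha.continuousOn (Real.continuous_sqrt.comp hφ).continuousOn
      (fun p hp => Real.sqrt_ne_zero'.mpr hp.1)
  have h2 : ContinuousOn (fun p : (ℝ × ℝ) × (ℝ × ℝ × ℝ) => p.1.2 / Real.sqrt p.2.2.1) GDom :=
    ContinuousOn.div hb.continuousOn (Real.continuous_sqrt.comp hψ).continuousOn
      (fun p hp => Real.sqrt_ne_zero'.mpr hp.2.1)
  have h3 : ContinuousOn
      (fun p : (ℝ × ℝ) × (ℝ × ℝ × ℝ) => Real.sqrt (1 - p.2.2.2 ^ 2)) GDom :=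
    (Real.continuous_sqrt.comp (continuous_const.sub (hr.pow 2))).continuousOn
  exact h1.prodMk (((h2.sub (hr.continuousOn.mul h1)).div h3)
    (fun p hp => Real.sqrt_ne_zero'.mpr (by linarith [hp.2.2])))

/-- Lemma 4 of the paper, first part: weak identification with fixed
alternatives: the laws of `(AR_n, LM*_n)` converge weakly to the product of two
unit-variance normals with means `m₁(Δ)` and `m₂(Δ)`. -/
theorem stmt_8 {Ω : Type*} [MeasureSpace Ω] [IsProbabilityMeasure (ℙ : Measure Ω)]
    (A B Φhat Ψhat ρhat : ℕ → Ω → ℝ)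
    (hmeas : ∀ n, Measurable (A n) ∧ Measurable (B n) ∧ Measurable (Φhat n) ∧
      Measurable (Ψhat n) ∧ Measurable (ρhat n))
    (Δ Ctil : ℝ) (𝒞 : ℕ → ℝ) (h𝒞 : Tendsto 𝒞 atTop (nhds Ctil))
    (Φb Ψb Φ12b ρ₀ : ℝ) (hΦb : 0 < Φb) (hΨb : 0 < Ψb)
    (hρ₀def : ρ₀ = Φ12b / Real.sqrt (Φb * Ψb)) (hρ₀ : ρ₀ ∈ Set.Ioo (-1 : ℝ) 1)
    (hweak : ∀ f : (ℝ × ℝ) →ᵇ ℝ,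
      Tendsto (fun n => ∫ ω, f (A n ω - Δ ^ 2 * 𝒞 n, B n ω - Δ * 𝒞 n) ∂ℙ) atTop
        (nhds (∫ z : ℝ × ℝ,
          f (Real.sqrt Φb * z.1,
             Real.sqrt Ψb * (ρ₀ * z.1 + Real.sqrt (1 - ρ₀ ^ 2) * z.2))
          ∂((gaussianReal 0 1).prod (gaussianReal 0 1)))))
    (hΦ : TendstoInMeasure ℙ Φhat atTop (fun _ => Φb))
    (hΨ : TendstoInMeasure ℙ Ψhat atTop (fun _ => Ψb))
    (hρ : TendstoInMeasure ℙ ρhat atTop (fun _ => ρ₀))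
    (AR LM LMs : ℕ → Ω → ℝ)
    (hAR : AR = fun n ω => A n ω / Real.sqrt (Φhat n ω))
    (hLM : LM = fun n ω => B n ω / Real.sqrt (Ψhat n ω))
    (hLMs : LMs = fun n ω =>
      (LM n ω - ρhat n ω * AR n ω) / Real.sqrt (1 - (ρhat n ω) ^ 2)) :
    ∀ f : (ℝ × ℝ) →ᵇ ℝ,
      Tendsto (fun n => ∫ ω, f (AR n ω, LMs n ω) ∂ℙ) atTop
        (nhds (∫ p : ℝ × ℝ, f p
          ∂((gaussianReal ((Real.sqrt Φb)⁻¹ * (Δ ^ 2 * Ctil)) 1).prod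
              (gaussianReal ((Real.sqrt (1 - ρ₀ ^ 2))⁻¹ *
                ((Real.sqrt Ψb)⁻¹ * (Δ * Ctil) -
                  ρ₀ * (Real.sqrt Φb)⁻¹ * (Δ ^ 2 * Ctil))) 1)))) := by
  subst hAR hLM hLMs
  obtain ⟨hρ₁, hρ₂⟩ := hρ₀
  have hρsq : ρ₀ ^ 2 < 1 := by nlinarith
  have hρabs : |ρ₀| < 1 := abs_lt.mpr ⟨hρ₁, hρ₂⟩
  have hsΦ : 0 < Real.sqrt Φb := Real.sqrt_pos.mpr hΦb
  have hsΨ : 0 < Real.sqrt Ψb := Real.sqrt_pos.mpr hΨb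
  have hsρ : 0 < Real.sqrt (1 - ρ₀ ^ 2) := Real.sqrt_pos.mpr (by linarith)
  set m₁ : ℝ := (Real.sqrt Φb)⁻¹ * (Δ ^ 2 * Ctil) with hm₁
  set m₂ : ℝ := (Real.sqrt (1 - ρ₀ ^ 2))⁻¹ *
      ((Real.sqrt Ψb)⁻¹ * (Δ * Ctil) - ρ₀ * (Real.sqrt Φb)⁻¹ * (Δ ^ 2 * Ctil)) with hm₂
  set ν : Measure (ℝ × ℝ) := (gaussianReal m₁ 1).prod (gaussianReal m₂ 1) with hνdef
  have hA : ∀ n, Measurable (A n) := fun n => (hmeas n).1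
  have hB : ∀ n, Measurable (B n) := fun n => (hmeas n).2.1
  have hΦm : ∀ n, Measurable (Φhat n) := fun n => (hmeas n).2.2.1
  have hΨm : ∀ n, Measurable (Ψhat n) := fun n => (hmeas n).2.2.2.1
  have hρm : ∀ n, Measurable (ρhat n) := fun n => (hmeas n).2.2.2.2
  -- the approximating sequence with true constants
  set X : ℕ → Ω → ℝ × ℝ := fun n ω =>
    Gfun ((A n ω - Δ ^ 2 * (𝒞 n - Ctil), B n ω - Δ * (𝒞 n - Ctil)), (Φb, Ψb, ρ₀)) with hXdef
  set Y : ℕ → Ω → ℝ × ℝ := fun n ω =>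
    Gfun ((A n ω, B n ω), (Φhat n ω, Ψhat n ω, ρhat n ω)) with hYdef
  have hXmeas : ∀ n, Measurable (X n) := by
    intro n
    show Measurable fun ω => (((A n ω - Δ ^ 2 * (𝒞 n - Ctil)) / Real.sqrt Φb,
      ((B n ω - Δ * (𝒞 n - Ctil)) / Real.sqrt Ψb -
        ρ₀ * ((A n ω - Δ ^ 2 * (𝒞 n - Ctil)) / Real.sqrt Φb)) /
          Real.sqrt (1 - ρ₀ ^ 2)) : ℝ × ℝ)
    exact (((hA n).sub_const _).div_const _).prodMk
      (((((hB n).sub_const _).div_const _).sub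
        ((((hA n).sub_const _).div_const _).const_mul _)).div_const _)
  have hYmeas : ∀ n, Measurable (Y n) := by
    intro n
    show Measurable fun ω => ((A n ω / Real.sqrt (Φhat n ω),
      (B n ω / Real.sqrt (Ψhat n ω) -
        ρhat n ω * (A n ω / Real.sqrt (Φhat n ω))) /
          Real.sqrt (1 - ρhat n ω ^ 2)) : ℝ × ℝ)
    exact ((hA n).div (Real.continuous_sqrt.measurable.comp (hΦm n))).prodMk
      ((((hB n).div (Real.continuous_sqrt.measurable.comp (hΨm n))).sub
        ((hρm n).mul ((hA n).div (Real.continuous_sqrt.measurable.comp (hΦm n))))).div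
        (Real.continuous_sqrt.measurable.comp
          (measurable_const.sub ((hρm n).pow_const 2))))
  -- the centered sequence
  have hWmeas : ∀ n, Measurable fun ω => ((A n ω - Δ ^ 2 * 𝒞 n, B n ω - Δ * 𝒞 n) : ℝ × ℝ) :=
    fun n => ((hA n).sub_const _).prodMk ((hB n).sub_const _)
  have hTmeas : Measurable fun z : ℝ × ℝ =>
      ((Real.sqrt Φb * z.1, Real.sqrt Ψb * (ρ₀ * z.1 + Real.sqrt (1 - ρ₀ ^ 2) * z.2)) : ℝ × ℝ) :=
    (measurable_fst.const_mul _).prodMk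
      (((measurable_fst.const_mul _).add (measurable_snd.const_mul _)).const_mul _)
  set ν₀ : Measure (ℝ × ℝ) := Measure.map (fun z : ℝ × ℝ =>
      ((Real.sqrt Φb * z.1, Real.sqrt Ψb * (ρ₀ * z.1 + Real.sqrt (1 - ρ₀ ^ 2) * z.2)) : ℝ × ℝ))
      ((gaussianReal 0 1).prod (gaussianReal 0 1)) with hν₀def
  haveI : IsProbabilityMeasure ν₀ := Measure.isProbabilityMeasure_map hTmeas.aemeasurable
  have hconvW : ∀ g : (ℝ × ℝ) →ᵇ ℝ,
      Tendsto (fun n => ∫ ω, g (A n ω - Δ ^ 2 * 𝒞 n, B n ω - Δ * 𝒞 n) ∂ℙ) atTop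
        (𝓝 (∫ x, g x ∂ν₀)) := by
    intro g
    have h1 := hweak g
    rwa [show (∫ z : ℝ × ℝ, g (Real.sqrt Φb * z.1,
        Real.sqrt Ψb * (ρ₀ * z.1 + Real.sqrt (1 - ρ₀ ^ 2) * z.2))
        ∂((gaussianReal 0 1).prod (gaussianReal 0 1))) = ∫ x, g x ∂ν₀ from
      (integral_map hTmeas.aemeasurable g.continuous.aestronglyMeasurable).symm] at h1
  -- weak convergence of X to ν
  have hconv : ∀ g : (ℝ × ℝ) →ᵇ ℝ,
      Tendsto (fun n => ∫ ω, g (X n ω) ∂ℙ) atTop (𝓝 (∫ x, g x ∂ν)) := by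
    intro g
    have hLcont : Continuous fun p : ℝ × ℝ => (((p.1 + Δ ^ 2 * Ctil) / Real.sqrt Φb,
        ((p.2 + Δ * Ctil) / Real.sqrt Ψb -
          ρ₀ * ((p.1 + Δ ^ 2 * Ctil) / Real.sqrt Φb)) / Real.sqrt (1 - ρ₀ ^ 2)) : ℝ × ℝ) := by
      fun_prop
    set L : C(ℝ × ℝ, ℝ × ℝ) := ⟨_, hLcont⟩ with hL
    have h1 := hweak (g.compContinuous L)
    have hside : (fun n => ∫ ω, (g.compContinuous L) (A n ω - Δ ^ 2 * 𝒞 n, B n ω - Δ * 𝒞 n) ∂ℙ)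
        = fun n => ∫ ω, g (X n ω) ∂ℙ := by
      funext n
      refine integral_congr_ae (Filter.Eventually.of_forall fun ω => ?_)
      show g (L (A n ω - Δ ^ 2 * 𝒞 n, B n ω - Δ * 𝒞 n)) = g (X n ω)
      congr 1
      show ((A n ω - Δ ^ 2 * 𝒞 n + Δ ^ 2 * Ctil) / Real.sqrt Φb, _) = (_, _)
      rw [Prod.mk.injEq]
      constructor
      · ring
      · ring
    have hptL : ∀ z : ℝ × ℝ, L (Real.sqrt Φb * z.1,
        Real.sqrt Ψb * (ρ₀ * z.1 + Real.sqrt (1 - ρ₀ ^ 2) * z.2))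
        = ((z.1 + m₁, z.2 + m₂) : ℝ × ℝ) := by
      intro z
      show ((Real.sqrt Φb * z.1 + Δ ^ 2 * Ctil) / Real.sqrt Φb,
        ((Real.sqrt Ψb * (ρ₀ * z.1 + Real.sqrt (1 - ρ₀ ^ 2) * z.2) + Δ * Ctil) / Real.sqrt Ψb -
          ρ₀ * ((Real.sqrt Φb * z.1 + Δ ^ 2 * Ctil) / Real.sqrt Φb)) / Real.sqrt (1 - ρ₀ ^ 2))
        = ((z.1 + m₁, z.2 + m₂) : ℝ × ℝ)
      rw [Prod.mk.injEq, hm₁, hm₂]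
      constructor
      · field_simp
      · field_simp
        ring
    have hpt : ∀ z : ℝ × ℝ, (g.compContinuous L) (Real.sqrt Φb * z.1,
        Real.sqrt Ψb * (ρ₀ * z.1 + Real.sqrt (1 - ρ₀ ^ 2) * z.2)) = g (z.1 + m₁, z.2 + m₂) :=
      fun z => congrArg g (hptL z)
    have hmap : (∫ z : ℝ × ℝ, (g.compContinuous L) (Real.sqrt Φb * z.1,
        Real.sqrt Ψb * (ρ₀ * z.1 + Real.sqrt (1 - ρ₀ ^ 2) * z.2))
        ∂((gaussianReal 0 1).prod (gaussianReal 0 1))) = ∫ x, g x ∂ν := by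
      simp only [hpt]
      have hmm : Measure.map (Prod.map (· + m₁) (· + m₂))
          ((gaussianReal 0 1).prod (gaussianReal 0 1)) = ν := by
        rw [← Measure.map_prod_map _ _ (measurable_add_const m₁) (measurable_add_const m₂),
          gaussianReal_map_add_const, gaussianReal_map_add_const, zero_add, zero_add]
      rw [← hmm, integral_map ((measurable_add_const m₁).prodMap
        (measurable_add_const m₂)).aemeasurable g.continuous.aestronglyMeasurable]
      refine integral_congr_ae (Filter.Eventually.of_forall fun z => ?_)
      rfl
    rw [hside, hmap] at h1
    exact h1
  -- convergence in probability of the distance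
  have hprob : ∀ δ : ℝ, 0 < δ → ∀ ε : ℝ, 0 < ε →
      ∀ᶠ n in atTop, ℙ {ω | δ ≤ dist (X n ω) (Y n ω)} ≤ ENNReal.ofReal ε := by
    intro δ hδ ε hε
    obtain ⟨M₀, hM₀pos, hM₀⟩ := tailBound _ hWmeas ν₀ ((0:ℝ), (0:ℝ))
      hconvW (by positivity : (0:ℝ) < ε/4)
    set c : ℝ := |Δ ^ 2 * Ctil| + |Δ * Ctil| with hc
    have hcnn : 0 ≤ c := by positivity
    set M : ℝ := M₀ + c with hM
    have hMpos : 0 < M := by positivity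
    have hE1 : ∀ᶠ n in atTop, ℙ {ω | M ≤ dist
        (((A n ω - Δ ^ 2 * (𝒞 n - Ctil), B n ω - Δ * (𝒞 n - Ctil))) : ℝ × ℝ)
        (((0:ℝ),(0:ℝ)) : ℝ × ℝ)} ≤ ENNReal.ofReal (ε/4) := by
      filter_upwards [hM₀] with n hn
      refine le_trans (measure_mono fun ω hω => ?_) hn
      simp only [Set.mem_setOf_eq] at hω ⊢
      have h2 : dist (((A n ω - Δ ^ 2 * (𝒞 n - Ctil), B n ω - Δ * (𝒞 n - Ctil))) : ℝ × ℝ)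
          (((A n ω - Δ ^ 2 * 𝒞 n, B n ω - Δ * 𝒞 n)) : ℝ × ℝ) ≤ c := by
        simp only [Prod.dist_eq]
        apply max_le
        · rw [Real.dist_eq, hc]
          have he : A n ω - Δ ^ 2 * (𝒞 n - Ctil) - (A n ω - Δ ^ 2 * 𝒞 n) = Δ ^ 2 * Ctil := by
            ring
          rw [he]
          exact le_add_of_nonneg_right (abs_nonneg _)
        · rw [Real.dist_eq, hc]
          have he : B n ω - Δ * (𝒞 n - Ctil) - (B n ω - Δ * 𝒞 n) = Δ * Ctil := by ring
          rw [he]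
          exact le_add_of_nonneg_left (abs_nonneg _)
      have h3 := dist_triangle
        (((A n ω - Δ ^ 2 * (𝒞 n - Ctil), B n ω - Δ * (𝒞 n - Ctil))) : ℝ × ℝ)
        (((A n ω - Δ ^ 2 * 𝒞 n, B n ω - Δ * 𝒞 n)) : ℝ × ℝ) (((0:ℝ),(0:ℝ)) : ℝ × ℝ)
      rw [hM] at hω
      linarith
    set r₀ : ℝ := min (Φb/2) (min (Ψb/2) ((1 - |ρ₀|)/2)) with hr₀
    have hr₀pos : 0 < r₀ := lt_min (by linarith) (lt_min (by linarith) (by linarith))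
    have hr₀Φ : r₀ ≤ Φb/2 := min_le_left _ _
    have hr₀Ψ : r₀ ≤ Ψb/2 := (min_le_right _ _).trans (min_le_left _ _)
    have hr₀ρ : r₀ ≤ (1 - |ρ₀|)/2 := (min_le_right _ _).trans (min_le_right _ _)
    have hKO : (Metric.closedBall (((0:ℝ),(0:ℝ)) : ℝ × ℝ) (M+1)) ×ˢ
        (Metric.closedBall ((Φb, Ψb, ρ₀) : ℝ × ℝ × ℝ) r₀) ⊆ GDom := by
      rintro ⟨p, q⟩ ⟨-, hq⟩
      rw [Metric.mem_closedBall] at hq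
      simp only [Prod.dist_eq, max_le_iff] at hq
      obtain ⟨e1, e2, e3⟩ := hq
      rw [Real.dist_eq] at e1 e2 e3
      have f1 := abs_le.mp e1
      have f2 := abs_le.mp e2
      have f3 := abs_sub_abs_le_abs_sub q.2.2 ρ₀
      refine ⟨by simp only; linarith [f1.1], by simp only; linarith [f2.1], ?_⟩
      simp only
      nlinarith [sq_abs q.2.2, abs_nonneg q.2.2]
    have hKcomp : IsCompact ((Metric.closedBall (((0:ℝ),(0:ℝ)) : ℝ × ℝ) (M+1)) ×ˢ
        (Metric.closedBall ((Φb, Ψb, ρ₀) : ℝ × ℝ × ℝ) r₀)) :=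
      (isCompact_closedBall _ _).prod (isCompact_closedBall _ _)
    have hGuc := hKcomp.uniformContinuousOn_of_continuous (Gfun_contOn.mono hKO)
    rw [Metric.uniformContinuousOn_iff] at hGuc
    obtain ⟨η, hηpos, hη⟩ := hGuc δ hδ
    set η' : ℝ := min (η/2) (min r₀ 1) with hη'def
    have hη'pos : 0 < η' := lt_min (by linarith) (lt_min hr₀pos one_pos)
    have hη'r₀ : η' ≤ r₀ := (min_le_right _ _).trans (min_le_left _ _)
    have hη'1 : η' ≤ 1 := (min_le_right _ _).trans (min_le_right _ _)
    have hη'η : η' ≤ η/2 := min_le_left _ _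
    set θ : ℝ := η' / (Δ^2 + |Δ| + 1) with hθdef
    have hθpos : 0 < θ := by positivity
    have hθmul : θ * (Δ^2 + |Δ| + 1) = η' := by
      rw [hθdef]
      field_simp
    have hdet : ∀ᶠ n in atTop, |𝒞 n - Ctil| ≤ θ := by
      filter_upwards [Metric.tendsto_nhds.mp h𝒞 θ hθpos] with n hn
      rw [Real.dist_eq] at hn
      exact hn.le
    have hofr : (0:ℝ≥0∞) < ENNReal.ofReal (ε/4) := ENNReal.ofReal_pos.mpr (by positivity)
    have hE2a : ∀ᶠ n in atTop, ℙ {x | η' ≤ dist (Φhat n x) Φb} ≤ ENNReal.ofReal (ε/4) := by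
      filter_upwards [(hΦ (ENNReal.ofReal η') (ENNReal.ofReal_pos.mpr hη'pos)).eventually_le_const
        hofr] with n hn
      refine le_trans (measure_mono fun x hx => ?_) hn
      simp only [Set.mem_setOf_eq] at hx ⊢
      rw [edist_dist]
      exact ENNReal.ofReal_le_ofReal hx
    have hE2b : ∀ᶠ n in atTop, ℙ {x | η' ≤ dist (Ψhat n x) Ψb} ≤ ENNReal.ofReal (ε/4) := by
      filter_upwards [(hΨ (ENNReal.ofReal η') (ENNReal.ofReal_pos.mpr hη'pos)).eventually_le_const
        hofr] with n hn
      refine le_trans (measure_mono fun x hx => ?_) hn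
      simp only [Set.mem_setOf_eq] at hx ⊢
      rw [edist_dist]
      exact ENNReal.ofReal_le_ofReal hx
    have hE2c : ∀ᶠ n in atTop, ℙ {x | η' ≤ dist (ρhat n x) ρ₀} ≤ ENNReal.ofReal (ε/4) := by
      filter_upwards [(hρ (ENNReal.ofReal η') (ENNReal.ofReal_pos.mpr hη'pos)).eventually_le_const
        hofr] with n hn
      refine le_trans (measure_mono fun x hx => ?_) hn
      simp only [Set.mem_setOf_eq] at hx ⊢
      rw [edist_dist]
      exact ENNReal.ofReal_le_ofReal hx
    filter_upwards [hE1, hE2a, hE2b, hE2c, hdet] with n h1 h2a h2b h2c hdn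
    have hsub : {ω | δ ≤ dist (X n ω) (Y n ω)} ⊆
        {ω | M ≤ dist ((A n ω - Δ^2*(𝒞 n - Ctil), B n ω - Δ*(𝒞 n - Ctil)) : ℝ×ℝ)
          (((0:ℝ),(0:ℝ)) : ℝ×ℝ)}
        ∪ ({x | η' ≤ dist (Φhat n x) Φb} ∪
            ({x | η' ≤ dist (Ψhat n x) Ψb} ∪ {x | η' ≤ dist (ρhat n x) ρ₀})) := by
      intro ω hω
      by_contra hcon
      simp only [Set.mem_union, Set.mem_setOf_eq, not_or, not_le] at hcon
      obtain ⟨hc1, hc2, hc3, hc4⟩ := hcon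
      have hPP' : dist ((A n ω, B n ω) : ℝ×ℝ)
          ((A n ω - Δ^2*(𝒞 n - Ctil), B n ω - Δ*(𝒞 n - Ctil)) : ℝ×ℝ) ≤ η' := by
        simp only [Prod.dist_eq]
        have ha : dist (A n ω) (A n ω - Δ^2*(𝒞 n - Ctil)) ≤ Δ^2 * θ := by
          rw [Real.dist_eq]
          have he : A n ω - (A n ω - Δ^2*(𝒞 n - Ctil)) = Δ^2 * (𝒞 n - Ctil) := by ring
          rw [he, abs_mul, abs_of_nonneg (sq_nonneg Δ)]
          exact mul_le_mul_of_nonneg_left hdn (sq_nonneg Δ)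
        have hb : dist (B n ω) (B n ω - Δ*(𝒞 n - Ctil)) ≤ |Δ| * θ := by
          rw [Real.dist_eq]
          have he : B n ω - (B n ω - Δ*(𝒞 n - Ctil)) = Δ * (𝒞 n - Ctil) := by ring
          rw [he, abs_mul]
          exact mul_le_mul_of_nonneg_left hdn (abs_nonneg Δ)
        apply max_le
        · nlinarith [abs_nonneg Δ, hθpos.le]
        · nlinarith [sq_nonneg Δ, hθpos.le]
      have hQ : dist ((Φhat n ω, Ψhat n ω, ρhat n ω) : ℝ×ℝ×ℝ) ((Φb, Ψb, ρ₀) : ℝ×ℝ×ℝ) < η' := by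
        simp only [Prod.dist_eq]
        exact max_lt hc2 (max_lt hc3 hc4)
      have hmemP : ((A n ω, B n ω) : ℝ×ℝ) ∈ Metric.closedBall (((0:ℝ),(0:ℝ)) : ℝ×ℝ) (M+1) := by
        rw [Metric.mem_closedBall]
        have h5 := dist_triangle ((A n ω, B n ω) : ℝ×ℝ)
          ((A n ω - Δ^2*(𝒞 n - Ctil), B n ω - Δ*(𝒞 n - Ctil)) : ℝ×ℝ) (((0:ℝ),(0:ℝ)) : ℝ×ℝ)
        linarith
      have hmemP' : ((A n ω - Δ^2*(𝒞 n - Ctil), B n ω - Δ*(𝒞 n - Ctil)) : ℝ×ℝ)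
          ∈ Metric.closedBall (((0:ℝ),(0:ℝ)) : ℝ×ℝ) (M+1) := by
        rw [Metric.mem_closedBall]
        linarith
      have hmemQ : ((Φhat n ω, Ψhat n ω, ρhat n ω) : ℝ×ℝ×ℝ)
          ∈ Metric.closedBall ((Φb,Ψb,ρ₀) : ℝ×ℝ×ℝ) r₀ := by
        rw [Metric.mem_closedBall]
        linarith
      have hmemq₀ : ((Φb,Ψb,ρ₀) : ℝ×ℝ×ℝ) ∈ Metric.closedBall ((Φb,Ψb,ρ₀) : ℝ×ℝ×ℝ) r₀ :=
        Metric.mem_closedBall_self hr₀pos.le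
      have hdargs : dist ((((A n ω, B n ω), (Φhat n ω, Ψhat n ω, ρhat n ω))) : (ℝ×ℝ)×(ℝ×ℝ×ℝ))
          ((((A n ω - Δ^2*(𝒞 n - Ctil), B n ω - Δ*(𝒞 n - Ctil)), (Φb,Ψb,ρ₀))) :
            (ℝ×ℝ)×(ℝ×ℝ×ℝ)) < η := by
        simp only [Prod.dist_eq]
        apply max_lt
        · refine lt_of_le_of_lt ?_ (show η' < η by linarith)
          simp only [Prod.dist_eq] at hPP'
          exact hPP'
        · refine lt_of_lt_of_le ?_ (show η/2 ≤ η by linarith)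
          refine lt_of_lt_of_le ?_ hη'η
          simp only [Prod.dist_eq] at hQ
          exact hQ
      have hGG := hη _ ⟨hmemP, hmemQ⟩ _ ⟨hmemP', hmemq₀⟩ hdargs
      have hYid : Gfun ((A n ω, B n ω), (Φhat n ω, Ψhat n ω, ρhat n ω)) = Y n ω := rfl
      have hXid : Gfun ((A n ω - Δ^2*(𝒞 n - Ctil), B n ω - Δ*(𝒞 n - Ctil)), (Φb,Ψb,ρ₀))
          = X n ω := rfl
      rw [hYid, hXid, dist_comm] at hGG
      rw [Set.mem_setOf_eq] at hω
      linarith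
    have htot := le_trans (measure_union_le _ _) (add_le_add h1 (le_trans (measure_union_le _ _)
      (add_le_add h2a (le_trans (measure_union_le _ _) (add_le_add h2b h2c)))))
    refine le_trans (le_trans (measure_mono hsub) htot) ?_
    rw [← ENNReal.ofReal_add (by positivity) (by positivity),
      ← ENNReal.ofReal_add (by positivity) (by positivity),
      ← ENNReal.ofReal_add (by positivity) (by positivity)]
    exact ENNReal.ofReal_le_ofReal (by linarith)
  intro f
  exact slutsky X Y hXmeas hYmeas ν ((0:ℝ),(0:ℝ)) hconv hprob f
end

section
/- Let Φ₁, Φ₁₂, Φ₁₃, Ψ, τ, Υ, C̃ be real numbers with Υ > 0 and ΥΨ − τ² > 0. For Δ ∈ ℝ define Φ₁(Δ) := Δ⁴Υ + 4Δ³τ + Δ²(4Ψ + 2Φ₁₃) + 4ΔΦ₁₂ + Φ₁, Φ₁₂(Δ) := Δ³Υ + 3Δ²τ + Δ(2Ψ + Φ₁₃) + Φ₁₂, Ψ(Δ) := Δ²Υ + 2Δτ + Ψ, and the mean functions m₁(Δ) := Δ²C̃/√(Φ₁(Δ)) and m₂(Δ) := C̃·(Δ·Φ₁(Δ) − Δ²·Φ₁₂(Δ))/√(Φ₁(Δ)·(Φ₁(Δ)Ψ(Δ)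 − Φ₁₂(Δ)²)). Then, as Δ → +∞: m₁(Δ) → C̃/√Υ and m₂(Δ) → C̃·τ/√(Υ·(ΥΨ − τ²)), and the latter equals (C̃/√Υ)·ρ₂₃/√(1−ρ₂₃²) with ρ₂₃ := τ/√(ΨΥ) when Ψ > 0. -/
open Filter

private lemma aux_div_pow (c : ℝ) {n : ℕ} (hn : n ≠ 0) :
    Tendsto (fun Δ : ℝ => c / Δ ^ n) atTop (nhds 0) :=
  tendsto_const_nhds.div_atTop (tendsto_pow_atTop hn)

/-- Lemma 4 of the paper, second part: limits of the noncentrality means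
`m₁(Δ)` and `m₂(Δ)` as `Δ → +∞`, and the correlation form of the second limit. -/
theorem stmt_10 (Φ₁ Φ₁₂ Φ₁₃ Ψ τ Υ Ctil : ℝ) (hΥ : 0 < Υ)
    (hpos : 0 < Υ * Ψ - τ ^ 2)
    (Φ₁f Φ₁₂f Ψf m₁ m₂ : ℝ → ℝ)
    (hΦ₁f : Φ₁f = fun Δ => Δ ^ 4 * Υ + 4 * Δ ^ 3 * τ + Δ ^ 2 * (4 * Ψ + 2 * Φ₁₃)
      + 4 * Δ * Φ₁₂ + Φ₁)
    (hΦ₁₂f : Φ₁₂f = fun Δ => Δ ^ 3 * Υ + 3 * Δ ^ 2 * τ + Δ * (2 * Ψ + Φ₁₃) + Φ₁₂)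
    (hΨf : Ψf = fun Δ => Δ ^ 2 * Υ + 2 * Δ * τ + Ψ)
    (hm₁ : m₁ = fun Δ => Δ ^ 2 * Ctil / Real.sqrt (Φ₁f Δ))
    (hm₂ : m₂ = fun Δ => Ctil * (Δ * Φ₁f Δ - Δ ^ 2 * Φ₁₂f Δ) /
      Real.sqrt (Φ₁f Δ * (Φ₁f Δ * Ψf Δ - (Φ₁₂f Δ) ^ 2))) :
    Tendsto m₁ atTop (nhds (Ctil / Real.sqrt Υ)) ∧
      Tendsto m₂ atTop (nhds (Ctil * τ / Real.sqrt (Υ * (Υ * Ψ - τ ^ 2)))) ∧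
      (0 < Ψ → Ctil * τ / Real.sqrt (Υ * (Υ * Ψ - τ ^ 2))
        = (Ctil / Real.sqrt Υ) * ((τ / Real.sqrt (Ψ * Υ)) /
            Real.sqrt (1 - (τ / Real.sqrt (Ψ * Υ)) ^ 2))) := by
  -- limit of Φ₁f Δ / Δ⁴
  have h1 : Tendsto (fun Δ : ℝ => Φ₁f Δ / Δ ^ 4) atTop (nhds Υ) := by
    have h : Tendsto (fun Δ : ℝ => Υ + 4 * τ / Δ ^ 1 + (4 * Ψ + 2 * Φ₁₃) / Δ ^ 2
        + 4 * Φ₁₂ / Δ ^ 3 + Φ₁ / Δ ^ 4) atTop (nhds (Υ + 0 + 0 + 0 + 0)) :=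
      (((tendsto_const_nhds.add (aux_div_pow _ one_ne_zero)).add
        (aux_div_pow _ two_ne_zero)).add (aux_div_pow _ three_ne_zero)).add
        (aux_div_pow _ four_ne_zero)
    simp only [add_zero] at h
    refine h.congr' ?_
    filter_upwards [eventually_gt_atTop (0 : ℝ)] with Δ hΔ
    subst hΦ₁f
    field_simp
  -- limit of (Δ Φ₁f − Δ² Φ₁₂f) / Δ⁴
  have h2 : Tendsto (fun Δ : ℝ => (Δ * Φ₁f Δ - Δ ^ 2 * Φ₁₂f Δ) / Δ ^ 4) atTop (nhds τ) := by
    have h : Tendsto (fun Δ : ℝ => τ + (2 * Ψ + Φ₁₃) / Δ ^ 1 + 3 * Φ₁₂ / Δ ^ 2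
        + Φ₁ / Δ ^ 3) atTop (nhds (τ + 0 + 0 + 0)) :=
      ((tendsto_const_nhds.add (aux_div_pow _ one_ne_zero)).add
        (aux_div_pow _ two_ne_zero)).add (aux_div_pow _ three_ne_zero)
    simp only [add_zero] at h
    refine h.congr' ?_
    filter_upwards [eventually_gt_atTop (0 : ℝ)] with Δ hΔ
    subst hΦ₁f hΦ₁₂f
    field_simp
    ring
  -- limit of (Φ₁f Ψf − Φ₁₂f²) / Δ⁴
  have h3 : Tendsto (fun Δ : ℝ => (Φ₁f Δ * Ψf Δ - (Φ₁₂f Δ) ^ 2) / Δ ^ 4) atTop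
      (nhds (Υ * Ψ - τ ^ 2)) := by
    have h : Tendsto (fun Δ : ℝ => (Υ * Ψ - τ ^ 2)
        + (2 * Υ * Φ₁₂ - 2 * τ * Φ₁₃) / Δ ^ 1
        + (Υ * Φ₁ + 2 * τ * Φ₁₂ - 2 * Ψ * Φ₁₃ - Φ₁₃ ^ 2) / Δ ^ 2
        + (2 * τ * Φ₁ - 2 * Φ₁₃ * Φ₁₂) / Δ ^ 3
        + (Ψ * Φ₁ - Φ₁₂ ^ 2) / Δ ^ 4) atTop (nhds (Υ * Ψ - τ ^ 2 + 0 + 0 + 0 + 0)) :=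
      (((tendsto_const_nhds.add (aux_div_pow _ one_ne_zero)).add
        (aux_div_pow _ two_ne_zero)).add (aux_div_pow _ three_ne_zero)).add
        (aux_div_pow _ four_ne_zero)
    simp only [add_zero] at h
    refine h.congr' ?_
    filter_upwards [eventually_gt_atTop (0 : ℝ)] with Δ hΔ
    subst hΦ₁f hΦ₁₂f hΨf
    field_simp
    ring
  -- limit of the full denominator over Δ⁸
  have hD : Tendsto (fun Δ : ℝ => Φ₁f Δ * (Φ₁f Δ * Ψf Δ - (Φ₁₂f Δ) ^ 2) / Δ ^ 8) atTop
      (nhds (Υ * (Υ * Ψ - τ ^ 2))) := by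
    refine (h1.mul h3).congr' ?_
    filter_upwards [eventually_gt_atTop (0 : ℝ)] with Δ hΔ
    rw [div_mul_div_comm, ← pow_add]
  have hsqrtΥ : Real.sqrt Υ ≠ 0 := Real.sqrt_ne_zero'.mpr hΥ
  -- first limit
  have hm1lim : Tendsto m₁ atTop (nhds (Ctil / Real.sqrt Υ)) := by
    have hs : Tendsto (fun Δ : ℝ => Ctil / Real.sqrt (Φ₁f Δ / Δ ^ 4)) atTop
        (nhds (Ctil / Real.sqrt Υ)) :=
      tendsto_const_nhds.div ((Real.continuous_sqrt.tendsto Υ).comp h1) hsqrtΥ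
    refine hs.congr' ?_
    filter_upwards [eventually_gt_atTop (0 : ℝ)] with Δ hΔ
    have hΔ2 : (0:ℝ) < Δ ^ 2 := by positivity
    have hsq : Real.sqrt (Φ₁f Δ) = Real.sqrt (Φ₁f Δ / Δ ^ 4) * Δ ^ 2 := by
      rw [show Real.sqrt (Φ₁f Δ) = Real.sqrt (Φ₁f Δ / Δ ^ 4 * Δ ^ 4) by
        rw [div_mul_cancel₀ _ (by positivity : (Δ:ℝ) ^ 4 ≠ 0)],
        Real.sqrt_mul' _ (by positivity : (0:ℝ) ≤ Δ ^ 4),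
        show (Δ:ℝ) ^ 4 = (Δ ^ 2) ^ 2 by ring, Real.sqrt_sq hΔ2.le]
    rw [hm₁]
    simp only
    rw [hsq]
    refine Eq.symm ?_
    rw [mul_comm (Real.sqrt (Φ₁f Δ / Δ ^ 4)) (Δ ^ 2), mul_div_mul_left _ _ hΔ2.ne']
  -- second limit
  have hm2lim : Tendsto m₂ atTop (nhds (Ctil * τ / Real.sqrt (Υ * (Υ * Ψ - τ ^ 2)))) := by
    have hden_pos : (0:ℝ) < Υ * (Υ * Ψ - τ ^ 2) := mul_pos hΥ hpos
    have hs : Tendsto (fun Δ : ℝ =>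
        Ctil * ((Δ * Φ₁f Δ - Δ ^ 2 * Φ₁₂f Δ) / Δ ^ 4) /
          Real.sqrt (Φ₁f Δ * (Φ₁f Δ * Ψf Δ - (Φ₁₂f Δ) ^ 2) / Δ ^ 8)) atTop
        (nhds (Ctil * τ / Real.sqrt (Υ * (Υ * Ψ - τ ^ 2)))) :=
      (tendsto_const_nhds.mul h2).div ((Real.continuous_sqrt.tendsto _).comp hD)
        (Real.sqrt_ne_zero'.mpr hden_pos)
    refine hs.congr' ?_
    filter_upwards [eventually_gt_atTop (0 : ℝ)] with Δ hΔ
    have hΔ4 : (0:ℝ) < Δ ^ 4 := by positivity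
    set D := Φ₁f Δ * (Φ₁f Δ * Ψf Δ - (Φ₁₂f Δ) ^ 2) with hDdef
    have hsq : Real.sqrt D = Real.sqrt (D / Δ ^ 8) * Δ ^ 4 := by
      rw [show Real.sqrt D = Real.sqrt (D / Δ ^ 8 * Δ ^ 8) by
        rw [div_mul_cancel₀ _ (by positivity : (Δ:ℝ) ^ 8 ≠ 0)],
        Real.sqrt_mul' _ (by positivity : (0:ℝ) ≤ Δ ^ 8),
        show (Δ:ℝ) ^ 8 = (Δ ^ 4) ^ 2 by ring, Real.sqrt_sq hΔ4.le]
    rw [hm₂]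
    simp only [← hDdef]
    rw [hsq, mul_comm (Real.sqrt (D / Δ ^ 8)) (Δ ^ 4), ← div_div]
    ring
  refine ⟨hm1lim, hm2lim, ?_⟩
  -- algebraic identity
  intro hΨ
  have hΨΥ : (0:ℝ) < Ψ * Υ := mul_pos hΨ hΥ
  have e1 : (τ / Real.sqrt (Ψ * Υ)) ^ 2 = τ ^ 2 / (Ψ * Υ) := by
    rw [div_pow, Real.sq_sqrt hΨΥ.le]
  have e2 : 1 - τ ^ 2 / (Ψ * Υ) = (Υ * Ψ - τ ^ 2) / (Ψ * Υ) := by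
    field_simp
  have e3 : Real.sqrt ((Υ * Ψ - τ ^ 2) / (Ψ * Υ))
      = Real.sqrt (Υ * Ψ - τ ^ 2) / Real.sqrt (Ψ * Υ) := Real.sqrt_div hpos.le _
  have e4 : Real.sqrt (Υ * (Υ * Ψ - τ ^ 2))
      = Real.sqrt Υ * Real.sqrt (Υ * Ψ - τ ^ 2) := Real.sqrt_mul hΥ.le _
  have s2 : Real.sqrt (Υ * Ψ - τ ^ 2) ≠ 0 := Real.sqrt_ne_zero'.mpr hpos
  have s3 : Real.sqrt (Ψ * Υ) ≠ 0 := Real.sqrt_ne_zero'.mpr hΨΥ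
  rw [e1, e2, e3, e4]
  field_simp
end

section
/- Let α ∈ (0,1) and let ν₁ ≥ ν₂ ≥ 0 with ν₁ > 0. For θ = (θ₁, θ₂) ∈ ℝ², let μ_θ be the product on ℝ² of the normal distribution with mean θ₁ and variance 1 and the normal distribution with mean θ₂ and variance 1. Let c > 0 satisfy μ_{(0,0)}{(x,y) : ν₁x² + ν₂y² ≥ c} = α, and let ψ(x,y) := 1{ν₁x² + ν₂y² ≥ c}. Let Φ_α be the class of measurable functions φ : ℝ² → [0,1] that are even in each coordinate (φ(x,y) = φ(−x,y) = φ(x,−y) for all (x,y)) and satisfy ∫φ dμ_{(0,0)} ≤ α. Then ψ is admissible within Φ_α: if φ ∈ Φ_α satisfies ∫φ dμ_θ ≥ ∫ψ dμ_θ for every θ ∈ ℝ², then ∫φ dμ_θ = ∫ψ dμ_θ for every θ ∈ ℝ². -/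
open MeasureTheory ProbabilityTheory Real
open scoped NNReal ENNReal

namespace Stmt11Aux

lemma intble_of_bounded {X : Type*} [MeasurableSpace X] {μ : Measure X} [IsFiniteMeasure μ]
    {f : X → ℝ} (hm : AEStronglyMeasurable f μ) {C : ℝ} (hb : ∀ x, |f x| ≤ C) :
    Integrable f μ :=
  (integrable_const C).mono' hm (ae_of_all _ hb)

/-- scaling density -/
noncomputable def d (v : ℝ≥0) (x : ℝ) : ℝ := (Real.sqrt v)⁻¹ * rexp ((1 - 1/(v:ℝ)) * x^2 / 2)

lemma d_pos (v : ℝ≥0) (hv : v ≠ 0) (x : ℝ) : 0 < d v x := by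
  have h : (0:ℝ) < (v:ℝ) := by exact_mod_cast pos_iff_ne_zero.mpr hv
  have h2 : (0:ℝ) < Real.sqrt v := Real.sqrt_pos.mpr h
  exact mul_pos (inv_pos.mpr h2) (Real.exp_pos _)

lemma gpdf_factor (v : ℝ≥0) (hv : v ≠ 0) (x : ℝ) :
    gaussianPDFReal 0 v x = d v x * gaussianPDFReal 0 1 x := by
  have hv' : (0:ℝ) < (v:ℝ) := by exact_mod_cast pos_iff_ne_zero.mpr hv
  have hv'' : (v:ℝ) ≠ 0 := hv'.ne'
  simp only [gaussianPDFReal, d, sub_zero, NNReal.coe_one, mul_one]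
  rw [mul_mul_mul_comm]
  congr 1
  · rw [show 2 * π * (v:ℝ) = (v:ℝ) * (2 * π) by ring, Real.sqrt_mul hv'.le, mul_inv]
  · rw [← Real.exp_add]
    congr 1
    field_simp
    ring

end Stmt11Aux

namespace Stmt11Aux
open Stmt11Aux

lemma gaussianReal_eq_withDensity (m : ℝ) (v : ℝ≥0) (hv : v ≠ 0) :
    gaussianReal m v
      = volume.withDensity (fun x => ((gaussianPDFReal m v x).toNNReal : ℝ≥0∞)) := by
  rw [gaussianReal_of_var_ne_zero _ hv]; rfl

lemma meas_toNN (m : ℝ) (v : ℝ≥0) : Measurable fun x => (gaussianPDFReal m v x).toNNReal := by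
  have : Measurable (gaussianPDFReal m v) := by
    unfold gaussianPDFReal; fun_prop
  exact this.real_toNNReal

lemma integral_gaussian_volume (m : ℝ) (v : ℝ≥0) (hv : v ≠ 0) (f : ℝ → ℝ) :
    ∫ x, f x ∂(gaussianReal m v) = ∫ x, gaussianPDFReal m v x * f x := by
  rw [gaussianReal_eq_withDensity m v hv, integral_withDensity_eq_integral_smul (meas_toNN m v) f]
  congr 1; ext x
  rw [NNReal.smul_def, Real.coe_toNNReal _ (gaussianPDFReal_nonneg _ _ _), smul_eq_mul]

lemma integral_dens (v : ℝ≥0) (hv : v ≠ 0) (f : ℝ → ℝ) :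
    ∫ x, f x ∂(gaussianReal 0 v) = ∫ x, d v x * f x ∂(gaussianReal 0 1) := by
  rw [integral_gaussian_volume 0 v hv, integral_gaussian_volume 0 1 one_ne_zero]
  congr 1; ext x
  rw [gpdf_factor v hv]; ring

lemma integrable_d (v : ℝ≥0) (hv : v ≠ 0) : Integrable (d v) (gaussianReal 0 1) := by
  rw [gaussianReal_eq_withDensity 0 1 one_ne_zero,
    integrable_withDensity_iff_integrable_smul (meas_toNN 0 1)]
  have h : (fun x => ((gaussianPDFReal 0 1 x).toNNReal : ℝ≥0) • d v x) = gaussianPDFReal 0 v := by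
    ext x
    rw [NNReal.smul_def, Real.coe_toNNReal _ (gaussianPDFReal_nonneg _ _ _), smul_eq_mul,
      gpdf_factor v hv]
    ring
  rw [h]; exact integrable_gaussianPDFReal 0 v

end Stmt11Aux

namespace Stmt11Aux

lemma gpdf_conv_ptwise (w : ℝ≥0) (hw : w ≠ 0) (u θ : ℝ) :
    gaussianPDFReal 0 w θ * gaussianPDFReal θ 1 u =
      gaussianPDFReal 0 (w + 1) u * gaussianPDFReal ((w:ℝ) * u / ((w:ℝ) + 1)) (w / (w + 1)) θ := by
  have hw' : (0:ℝ) < (w:ℝ) := by exact_mod_cast pos_iff_ne_zero.mpr hw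
  have hw1 : (0:ℝ) < (w:ℝ) + 1 := by linarith
  have hco : ((w / (w + 1) : ℝ≥0) : ℝ) = (w:ℝ) / ((w:ℝ) + 1) := by push_cast; ring
  have hco2 : ((w + 1 : ℝ≥0) : ℝ) = (w:ℝ) + 1 := by push_cast; ring
  simp only [gaussianPDFReal, sub_zero, NNReal.coe_one, mul_one, hco, hco2]
  rw [mul_mul_mul_comm, mul_mul_mul_comm ((Real.sqrt (2*π*((w:ℝ)+1)))⁻¹)]
  congr 1
  · rw [← mul_inv, ← mul_inv, ← Real.sqrt_mul (by positivity), ← Real.sqrt_mul (by positivity)]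
    congr 2
    field_simp
  · rw [← Real.exp_add, ← Real.exp_add]
    congr 1
    field_simp
    ring

lemma integral_gpdf_conv (w : ℝ≥0) (hw : w ≠ 0) (u : ℝ) :
    ∫ θ, gaussianPDFReal 0 w θ * gaussianPDFReal θ 1 u = gaussianPDFReal 0 (w + 1) u := by
  have hq : (w / (w + 1) : ℝ≥0) ≠ 0 := by
    simp [div_eq_zero_iff, hw]
  simp_rw [gpdf_conv_ptwise w hw u]
  rw [integral_const_mul, integral_gaussianPDFReal_eq_one _ hq, mul_one]

lemma integrable_conv_pt (w : ℝ≥0) (hw : w ≠ 0) (u : ℝ) :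
    Integrable (fun θ => gaussianPDFReal 0 w θ * gaussianPDFReal θ 1 u) := by
  simp_rw [gpdf_conv_ptwise w hw u]
  exact (integrable_gaussianPDFReal _ _).const_mul _

end Stmt11Aux

namespace Stmt11Aux

lemma meas_pdf_pair : Measurable (fun q : ℝ × ℝ => gaussianPDF q.1 1 q.2) := by
  apply Measurable.ennreal_ofReal
  unfold gaussianPDFReal
  fun_prop

lemma lint_conv (w : ℝ≥0) (hw : w ≠ 0) (u : ℝ) :
    ∫⁻ θ, gaussianPDF 0 w θ * gaussianPDF θ 1 u = gaussianPDF 0 (w + 1) u := by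
  simp only [gaussianPDF]
  have h1 : ∀ θ : ℝ, ENNReal.ofReal (gaussianPDFReal 0 w θ) * ENNReal.ofReal (gaussianPDFReal θ 1 u)
      = ENNReal.ofReal (gaussianPDFReal 0 w θ * gaussianPDFReal θ 1 u) := fun θ =>
    (ENNReal.ofReal_mul (gaussianPDFReal_nonneg _ _ _)).symm
  simp_rw [h1]
  rw [← ofReal_integral_eq_lintegral_ofReal (integrable_conv_pt w hw u)
    (ae_of_all _ fun θ => mul_nonneg (gaussianPDFReal_nonneg _ _ _) (gaussianPDFReal_nonneg _ _ _)),
    integral_gpdf_conv w hw u]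

lemma conv_gauss (w : ℝ≥0) :
    Measure.map (fun p : ℝ × ℝ => p.1 + p.2) ((gaussianReal 0 w).prod (gaussianReal 0 1)) =
      gaussianReal 0 (w + 1) := by
  by_cases hw : w = 0
  · subst hw
    rw [gaussianReal_zero_var, Measure.dirac_prod, Measure.map_map (by fun_prop) (by fun_prop)]
    have h : ((fun p : ℝ × ℝ => p.1 + p.2) ∘ Prod.mk (0:ℝ)) = fun x : ℝ => 0 + x := rfl
    rw [h]
    simp only [zero_add]
    rw [Measure.map_id']
  · have hw1 : w + 1 ≠ 0 := (add_pos_of_nonneg_of_pos zero_le one_pos).ne'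
    have hmeasu : ∀ θ : ℝ, Measurable (fun u => gaussianPDF θ 1 u) := fun θ =>
      measurable_gaussianPDF θ 1
    ext s hs
    rw [Measure.map_apply (by fun_prop) hs,
      Measure.prod_apply (hs.preimage (by fun_prop))]
    have hsec : ∀ θ : ℝ, (gaussianReal 0 1) (Prod.mk θ ⁻¹' ((fun p : ℝ × ℝ => p.1 + p.2) ⁻¹' s))
        = ∫⁻ u in s, gaussianPDF θ 1 u := by
      intro θ
      have h1 : Prod.mk θ ⁻¹' ((fun p : ℝ × ℝ => p.1 + p.2) ⁻¹' s) = (fun x => θ + x) ⁻¹' s := rfl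
      rw [h1, ← Measure.map_apply (by fun_prop) hs, gaussianReal_map_const_add θ, zero_add,
        gaussianReal_apply θ one_ne_zero s]
    simp_rw [hsec]
    have hmeas_inner : Measurable (fun θ : ℝ => ∫⁻ u in s, gaussianPDF θ 1 u) :=
      Measurable.lintegral_prod_right (f := fun θ u => gaussianPDF θ 1 u) meas_pdf_pair
    rw [gaussianReal_eq_withDensity 0 w hw,
      lintegral_withDensity_eq_lintegral_mul _ ((meas_toNN 0 w).coe_nnreal_ennreal) hmeas_inner]
    have h2 : (fun θ : ℝ => (((fun x => ((gaussianPDFReal 0 w x).toNNReal : ℝ≥0∞)) *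
          (fun θ : ℝ => ∫⁻ u in s, gaussianPDF θ 1 u)) θ))
        = fun θ : ℝ => ∫⁻ u in s, gaussianPDF 0 w θ * gaussianPDF θ 1 u := by
      ext θ
      simp only [Pi.mul_apply]
      rw [← lintegral_const_mul _ (hmeasu θ)]
      rfl
    rw [h2]
    have hswap : ∫⁻ θ : ℝ, ∫⁻ u in s, gaussianPDF 0 w θ * gaussianPDF θ 1 u
        = ∫⁻ u in s, ∫⁻ θ : ℝ, gaussianPDF 0 w θ * gaussianPDF θ 1 u := by
      apply lintegral_lintegral_swap
      apply Measurable.aemeasurable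
      exact ((measurable_gaussianPDF 0 w).comp measurable_fst).mul meas_pdf_pair
    rw [hswap]
    simp_rw [lint_conv w hw]
    rw [gaussianReal_apply 0 hw1 s]

end Stmt11Aux

namespace Stmt11Aux

lemma abs_integral_le_one {X : Type*} [MeasurableSpace X] (μ : Measure X) [IsProbabilityMeasure μ]
    {f : X → ℝ} (hb : ∀ x, |f x| ≤ 1) : |∫ x, f x ∂μ| ≤ 1 := by
  have h := norm_integral_le_of_norm_le_const (μ := μ) (f := f) (C := 1)
    (ae_of_all _ fun x => by simpa [Real.norm_eq_abs] using hb x)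
  simpa [Real.norm_eq_abs] using h

lemma integral_conv (w : ℝ≥0) (f : ℝ → ℝ) (hf : Measurable f) (hb : ∀ x, |f x| ≤ 1) :
    ∫ x, f x ∂(gaussianReal 0 (w + 1)) =
      ∫ θ, ∫ x, f (θ + x) ∂(gaussianReal 0 1) ∂(gaussianReal 0 w) := by
  rw [← conv_gauss w, integral_map (by fun_prop) hf.aestronglyMeasurable,
    integral_prod]
  exact intble_of_bounded (hf.comp (by fun_prop)).aestronglyMeasurable (fun p => hb _)

lemma integral_shift (θ : ℝ) (f : ℝ → ℝ) (hf : Measurable f) :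
    ∫ x, f (θ + x) ∂(gaussianReal 0 1) = ∫ x, f x ∂(gaussianReal θ 1) := by
  conv_rhs => rw [show gaussianReal θ 1 = gaussianReal (0 + θ) 1 by rw [zero_add],
    ← gaussianReal_map_const_add (μ := 0) (v := 1) θ]
  rw [integral_map (by fun_prop) hf.aestronglyMeasurable]

lemma mixture_nonneg (w₁ w₂ : ℝ≥0) (h : ℝ × ℝ → ℝ) (hm : Measurable h) (hb : ∀ p, |h p| ≤ 1)
    (hpos : ∀ θ : ℝ × ℝ, 0 ≤ ∫ p, h p ∂((gaussianReal θ.1 1).prod (gaussianReal θ.2 1))) :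
    0 ≤ ∫ p, h p ∂((gaussianReal 0 (w₁ + 1)).prod (gaussianReal 0 (w₂ + 1))) := by
  have hint : Integrable h ((gaussianReal 0 (w₁ + 1)).prod (gaussianReal 0 (w₂ + 1))) :=
    intble_of_bounded hm.aestronglyMeasurable hb
  rw [integral_prod _ hint]
  have hHmeas : Measurable fun x => ∫ y, h (x, y) ∂(gaussianReal 0 (w₂ + 1)) :=
    (hm.stronglyMeasurable.integral_prod_right').measurable
  have hHb : ∀ x, |∫ y, h (x, y) ∂(gaussianReal 0 (w₂ + 1))| ≤ 1 :=
    fun x => abs_integral_le_one _ (fun y => hb (x, y))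
  rw [integral_conv w₁ _ hHmeas hHb]
  apply integral_nonneg
  intro θ₁
  -- goal: 0 ≤ ∫ u₁, (∫ y, h (θ₁ + u₁, y) ∂gaussianReal 0 (w₂+1)) ∂gaussianReal 0 1
  have hstep2 : ∀ x : ℝ, ∫ y, h (x, y) ∂(gaussianReal 0 (w₂ + 1)) =
      ∫ θ₂, ∫ u₂, h (x, θ₂ + u₂) ∂(gaussianReal 0 1) ∂(gaussianReal 0 w₂) := fun x =>
    integral_conv w₂ (fun y => h (x, y)) (hm.comp (by fun_prop)) (fun y => hb (x, y))
  simp only [hstep2]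
  -- swap u₁ and θ₂
  have hK : StronglyMeasurable fun q : ℝ × ℝ => ∫ u₂, h (θ₁ + q.1, q.2 + u₂) ∂(gaussianReal 0 1) := by
    apply StronglyMeasurable.integral_prod_right'
      (f := fun r : (ℝ × ℝ) × ℝ => h (θ₁ + r.1.1, r.1.2 + r.2))
    exact (hm.comp (by fun_prop)).stronglyMeasurable
  have hKint : Integrable (Function.uncurry fun u₁ θ₂ =>
      ∫ u₂, h (θ₁ + u₁, θ₂ + u₂) ∂(gaussianReal 0 1))
      ((gaussianReal 0 1).prod (gaussianReal 0 w₂)) := by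
    apply intble_of_bounded hK.aestronglyMeasurable
    exact fun q => abs_integral_le_one _ (fun u₂ => hb _)
  rw [integral_integral_swap hKint]
  apply integral_nonneg
  intro θ₂
  -- inner: ∫ u₁, ∫ u₂, h (θ₁+u₁, θ₂+u₂) = ∫ h d(prod) ≥ 0
  have hin : ∀ u₁ : ℝ, ∫ u₂, h (θ₁ + u₁, θ₂ + u₂) ∂(gaussianReal 0 1)
      = ∫ y, h (θ₁ + u₁, y) ∂(gaussianReal θ₂ 1) := fun u₁ =>
    integral_shift θ₂ (fun y => h (θ₁ + u₁, y)) (hm.comp (by fun_prop))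
  simp only [hin]
  have hout : ∫ u₁, (fun x => ∫ y, h (x, y) ∂(gaussianReal θ₂ 1)) (θ₁ + u₁) ∂(gaussianReal 0 1)
      = ∫ x, ∫ y, h (x, y) ∂(gaussianReal θ₂ 1) ∂(gaussianReal θ₁ 1) :=
    integral_shift θ₁ _ (hm.stronglyMeasurable.integral_prod_right').measurable
  simp only at hout
  rw [hout, ← integral_prod _ (intble_of_bounded hm.aestronglyMeasurable hb)]
  exact hpos (θ₁, θ₂)

end Stmt11Aux

namespace Stmt11Aux

lemma d_meas (v : ℝ≥0) : Measurable (d v) := by unfold d; fun_prop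

lemma density_formula (v₁ v₂ : ℝ≥0) (h1 : v₁ ≠ 0) (h2 : v₂ ≠ 0) (h : ℝ × ℝ → ℝ)
    (hm : Measurable h) (hb : ∀ p, |h p| ≤ 1) :
    ∫ p, h p ∂((gaussianReal 0 v₁).prod (gaussianReal 0 v₂)) =
      ∫ p, (d v₁ p.1 * d v₂ p.2) * h p ∂((gaussianReal 0 1).prod (gaussianReal 0 1)) := by
  have hint : Integrable h ((gaussianReal 0 v₁).prod (gaussianReal 0 v₂)) :=
    intble_of_bounded hm.aestronglyMeasurable hb
  rw [integral_prod _ hint]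
  have hstep : ∀ x : ℝ, ∫ y, h (x, y) ∂(gaussianReal 0 v₂)
      = ∫ y, d v₂ y * h (x, y) ∂(gaussianReal 0 1) := fun x =>
    integral_dens v₂ h2 (fun y => h (x, y))
  simp only [hstep]
  rw [integral_dens v₁ h1]
  have hre : ∀ x : ℝ, d v₁ x * ∫ y, d v₂ y * h (x, y) ∂(gaussianReal 0 1)
      = ∫ y, (d v₁ x * d v₂ y) * h (x, y) ∂(gaussianReal 0 1) := by
    intro x
    rw [← integral_const_mul]
    congr 1; ext y; ring
  simp only [hre]
  have hbig : Integrable (fun p : ℝ × ℝ => (d v₁ p.1 * d v₂ p.2) * h p)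
      ((gaussianReal 0 1).prod (gaussianReal 0 1)) := by
    have hdint : Integrable (fun p : ℝ × ℝ => d v₁ p.1 * d v₂ p.2)
        ((gaussianReal 0 1).prod (gaussianReal 0 1)) :=
      (integrable_d v₁ h1).mul_prod (integrable_d v₂ h2)
    apply hdint.mono'
    · exact (((d_meas v₁).comp measurable_fst).mul ((d_meas v₂).comp measurable_snd)).mul hm
        |>.aestronglyMeasurable
    · apply ae_of_all
      intro p
      have hd1 := (d_pos v₁ h1 p.1).le
      have hd2 := (d_pos v₂ h2 p.2).le
      have : |d v₁ p.1 * d v₂ p.2 * h p| = d v₁ p.1 * d v₂ p.2 * |h p| := by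
        rw [abs_mul, abs_of_nonneg (mul_nonneg hd1 hd2)]
      simp only [Real.norm_eq_abs, this, abs_of_nonneg (mul_nonneg hd1 hd2)]
      nlinarith [hb p, abs_nonneg (h p), mul_nonneg hd1 hd2]
  exact (integral_prod _ hbig).symm

end Stmt11Aux

namespace Stmt11Aux

lemma boundary_null (ν₁ ν₂ c : ℝ) (h1 : 0 < ν₁) :
    ((gaussianReal 0 1).prod (gaussianReal 0 1))
      {p : ℝ × ℝ | ν₁ * p.1 ^ 2 + ν₂ * p.2 ^ 2 = c} = 0 := by
  have hBmeas : MeasurableSet {p : ℝ × ℝ | ν₁ * p.1 ^ 2 + ν₂ * p.2 ^ 2 = c} :=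
    measurableSet_eq_fun (by fun_prop) measurable_const
  rw [Measure.prod_apply_symm hBmeas]
  have hsec : ∀ y : ℝ, (gaussianReal 0 1)
      ((fun x => (x, y)) ⁻¹' {p : ℝ × ℝ | ν₁ * p.1 ^ 2 + ν₂ * p.2 ^ 2 = c}) = 0 := by
    intro y
    apply gaussianReal_absolutelyContinuous 0 one_ne_zero
    set k := (c - ν₂ * y ^ 2) / ν₁ with hk
    have hsub : ((fun x => (x, y)) ⁻¹' {p : ℝ × ℝ | ν₁ * p.1 ^ 2 + ν₂ * p.2 ^ 2 = c})
        ⊆ {Real.sqrt k, -Real.sqrt k} := by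
      intro x hx
      simp only [Set.mem_preimage, Set.mem_setOf_eq] at hx
      have hxk : x ^ 2 = k := by
        rw [hk]; field_simp; linarith
      have habs : |x| = Real.sqrt k := by
        rw [← hxk, Real.sqrt_sq_eq_abs]
      rcases abs_eq (Real.sqrt_nonneg k) |>.mp habs with h | h
      · exact Or.inl h
      · exact Or.inr h
    exact measure_mono_null hsub (Set.Countable.measure_zero (by
      exact (Set.countable_singleton _).insert _) _)
  simp only [hsec, lintegral_zero]

end Stmt11Aux

set_option maxHeartbeats 2000000 in
open Stmt11Aux in
/-- Theorem 1(i) of the paper, admissibility: the test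
`ψ = 1{ν₁x² + ν₂y² ≥ c}` is admissible within the class of size-`α` tests that are even
in each coordinate, for the Gaussian location model on `ℝ²` with independent
unit-variance coordinates. -/
theorem stmt_11 (α : ℝ) (hα : α ∈ Set.Ioo (0 : ℝ) 1)
    (ν₁ ν₂ : ℝ) (h21 : ν₂ ≤ ν₁) (h2 : 0 ≤ ν₂) (h1 : 0 < ν₁)
    (μ : ℝ × ℝ → Measure (ℝ × ℝ))
    (hμ : ∀ θ : ℝ × ℝ, μ θ = (gaussianReal θ.1 1).prod (gaussianReal θ.2 1))
    (c : ℝ) (hc : 0 < c)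
    (hsize : μ (0, 0) {p : ℝ × ℝ | c ≤ ν₁ * p.1 ^ 2 + ν₂ * p.2 ^ 2} = ENNReal.ofReal α)
    (ψ : ℝ × ℝ → ℝ)
    (hψ : ψ = fun p => if c ≤ ν₁ * p.1 ^ 2 + ν₂ * p.2 ^ 2 then (1 : ℝ) else 0)
    (φ : ℝ × ℝ → ℝ) (hφm : Measurable φ) (hφ01 : ∀ p, φ p ∈ Set.Icc (0 : ℝ) 1)
    (hφeven1 : ∀ x y : ℝ, φ (x, y) = φ (-x, y))
    (hφeven2 : ∀ x y : ℝ, φ (x, y) = φ (x, -y))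
    (hφlevel : (∫ p, φ p ∂(μ (0, 0))) ≤ α)
    (hdom : ∀ θ : ℝ × ℝ, (∫ p, ψ p ∂(μ θ)) ≤ ∫ p, φ p ∂(μ θ)) :
    ∀ θ : ℝ × ℝ, (∫ p, φ p ∂(μ θ)) = ∫ p, ψ p ∂(μ θ) := by
  obtain ⟨hα0, hα1⟩ := hα
  have hν1 : ν₁ ≠ 0 := h1.ne'
  have hμ00 : μ (0, 0) = (gaussianReal 0 1).prod (gaussianReal 0 1) := hμ (0, 0)
  have hSmeas : MeasurableSet {p : ℝ × ℝ | c ≤ ν₁ * p.1 ^ 2 + ν₂ * p.2 ^ 2} :=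
    measurableSet_le measurable_const (by fun_prop)
  have hψm : Measurable ψ := by
    rw [hψ]; exact Measurable.ite hSmeas measurable_const measurable_const
  have hψ01 : ∀ p, ψ p ∈ Set.Icc (0 : ℝ) 1 := by
    intro p; rw [hψ]; dsimp only; split_ifs <;> constructor <;> norm_num
  have hm : Measurable fun p => φ p - ψ p := hφm.sub hψm
  have hb : ∀ p, |φ p - ψ p| ≤ 1 := by
    intro p
    have ha := hφ01 p; have hbb := hψ01 p
    rw [abs_le]
    constructor
    · linarith [ha.1, hbb.2]
    · linarith [ha.2, hbb.1]
  have hφb : ∀ p, |φ p| ≤ 1 := fun p => by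
    have := hφ01 p; rw [abs_le]; constructor <;> linarith [this.1, this.2]
  have hψb : ∀ p, |ψ p| ≤ 1 := fun p => by
    have := hψ01 p; rw [abs_le]; constructor <;> linarith [this.1, this.2]
  have hφint : ∀ θ : ℝ × ℝ, Integrable φ ((gaussianReal θ.1 1).prod (gaussianReal θ.2 1)) :=
    fun θ => intble_of_bounded hφm.aestronglyMeasurable hφb
  have hψint : ∀ θ : ℝ × ℝ, Integrable ψ ((gaussianReal θ.1 1).prod (gaussianReal θ.2 1)) :=
    fun θ => intble_of_bounded hψm.aestronglyMeasurable hψb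
  have hsub : ∀ θ : ℝ × ℝ, ∫ p, (φ p - ψ p) ∂((gaussianReal θ.1 1).prod (gaussianReal θ.2 1))
      = (∫ p, φ p ∂((gaussianReal θ.1 1).prod (gaussianReal θ.2 1)))
        - ∫ p, ψ p ∂((gaussianReal θ.1 1).prod (gaussianReal θ.2 1)) :=
    fun θ => integral_sub (hφint θ) (hψint θ)
  have hpos : ∀ θ : ℝ × ℝ,
      0 ≤ ∫ p, (φ p - ψ p) ∂((gaussianReal θ.1 1).prod (gaussianReal θ.2 1)) := by
    intro θ
    have hd := hdom θ
    rw [hμ θ] at hd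
    rw [hsub θ]
    linarith
  -- size of ψ at the origin
  have hψsize : ∫ p, ψ p ∂((gaussianReal 0 1).prod (gaussianReal 0 1)) = α := by
    have heq : ψ = Set.indicator {p : ℝ × ℝ | c ≤ ν₁ * p.1 ^ 2 + ν₂ * p.2 ^ 2}
        (1 : ℝ × ℝ → ℝ) := by
      rw [hψ]; funext p
      rw [Set.indicator_apply]
      simp only [Set.mem_setOf_eq, Pi.one_apply]
    rw [heq, integral_indicator_one hSmeas, ← hμ00, measureReal_def, hsize, ENNReal.toReal_ofReal hα0.le]
  have hI0 : ∫ p, (φ p - ψ p) ∂((gaussianReal 0 1).prod (gaussianReal 0 1)) ≤ 0 := by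
    have h0 := hsub (0, 0)
    simp only [Prod.fst, Prod.snd] at h0
    rw [h0]
    have := hφlevel
    rw [hμ00] at this
    rw [hψsize]
    linarith
  -- parameters
  have h2ν : 0 < 2 * ν₁ - ν₂ := by linarith
  have hv₂pos : (0:ℝ) < 2 * ν₁ / (2 * ν₁ - ν₂) := by positivity
  have hv₂ge1 : (1:ℝ) ≤ 2 * ν₁ / (2 * ν₁ - ν₂) := by
    rw [le_div_iff₀ h2ν]; linarith
  have hw₂coe : ((Real.toNNReal (2 * ν₁ / (2 * ν₁ - ν₂) - 1) + 1 : ℝ≥0) : ℝ)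
      = 2 * ν₁ / (2 * ν₁ - ν₂) := by
    push_cast
    rw [Real.coe_toNNReal _ (by linarith)]
    ring
  have hv₁ne : ((1 : ℝ≥0) + 1) ≠ 0 := by norm_num
  have hv₂ne : Real.toNNReal (2 * ν₁ / (2 * ν₁ - ν₂) - 1) + 1 ≠ 0 :=
    (add_pos_of_nonneg_of_pos zero_le one_pos).ne'
  have hw1coe : (((1 : ℝ≥0) + 1 : ℝ≥0) : ℝ) = 2 := by norm_num
  have htpos : (0:ℝ) < 1 / (2 * ν₁) := by positivity
  have hs2pos : (0:ℝ) < Real.sqrt 2 := Real.sqrt_pos.mpr (by norm_num)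
  have hsvpos : (0:ℝ) < Real.sqrt (2 * ν₁ / (2 * ν₁ - ν₂)) := Real.sqrt_pos.mpr hv₂pos
  have hKpos : (0:ℝ) < (Real.sqrt 2)⁻¹ * (Real.sqrt (2 * ν₁ / (2 * ν₁ - ν₂)))⁻¹ := by
    positivity
  -- pointwise density identity
  have hdd : ∀ p : ℝ × ℝ, d ((1:ℝ≥0) + 1) p.1 * d (Real.toNNReal (2 * ν₁ / (2 * ν₁ - ν₂) - 1) + 1) p.2
      = ((Real.sqrt 2)⁻¹ * (Real.sqrt (2 * ν₁ / (2 * ν₁ - ν₂)))⁻¹)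
        * Real.exp ((1 / (2 * ν₁)) * (ν₁ * p.1 ^ 2 + ν₂ * p.2 ^ 2) / 2) := by
    intro p
    simp only [d, hw1coe, hw₂coe]
    rw [mul_mul_mul_comm, ← Real.exp_add]
    congr 1
    field_simp
    ring
  have hpos' : ∀ θ : ℝ × ℝ,
      0 ≤ ∫ p, ((fun q => φ q - ψ q) p) ∂((gaussianReal θ.1 1).prod (gaussianReal θ.2 1)) :=
    hpos
  have hmix := mixture_nonneg 1 (Real.toNNReal (2 * ν₁ / (2 * ν₁ - ν₂) - 1))
    (fun p => φ p - ψ p) hm hb hpos'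
  have hdens := density_formula ((1:ℝ≥0) + 1) (Real.toNNReal (2 * ν₁ / (2 * ν₁ - ν₂) - 1) + 1)
    hv₁ne hv₂ne (fun p => φ p - ψ p) hm hb
  rw [hdens] at hmix
  have hrw : (fun p : ℝ × ℝ => (d ((1:ℝ≥0) + 1) p.1
        * d (Real.toNNReal (2 * ν₁ / (2 * ν₁ - ν₂) - 1) + 1) p.2) * ((fun q => φ q - ψ q) p))
      = fun p : ℝ × ℝ => ((Real.sqrt 2)⁻¹ * (Real.sqrt (2 * ν₁ / (2 * ν₁ - ν₂)))⁻¹)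
        * (Real.exp ((1 / (2 * ν₁)) * (ν₁ * p.1 ^ 2 + ν₂ * p.2 ^ 2) / 2) * (φ p - ψ p)) := by
    funext p
    rw [hdd p]
    ring
  rw [hrw, integral_const_mul] at hmix
  -- integrability of the exponential factor
  have hee : Integrable (fun p : ℝ × ℝ => Real.exp ((1 / (2 * ν₁)) * (ν₁ * p.1 ^ 2 + ν₂ * p.2 ^ 2) / 2))
      ((gaussianReal 0 1).prod (gaussianReal 0 1)) := by
    have heq : (fun p : ℝ × ℝ => Real.exp ((1 / (2 * ν₁)) * (ν₁ * p.1 ^ 2 + ν₂ * p.2 ^ 2) / 2))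
        = fun p : ℝ × ℝ => (Real.sqrt 2 * Real.sqrt (2 * ν₁ / (2 * ν₁ - ν₂)))
          * (d ((1:ℝ≥0) + 1) p.1 * d (Real.toNNReal (2 * ν₁ / (2 * ν₁ - ν₂) - 1) + 1) p.2) := by
      funext p
      rw [hdd p]
      field_simp
    rw [heq]
    exact (((integrable_d _ hv₁ne).mul_prod (integrable_d _ hv₂ne)).const_mul _)
  have hemeas : Measurable (fun p : ℝ × ℝ => Real.exp ((1 / (2 * ν₁)) * (ν₁ * p.1 ^ 2 + ν₂ * p.2 ^ 2) / 2)) := by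
    fun_prop
  have hepos : ∀ p : ℝ × ℝ, (0:ℝ) < Real.exp ((1 / (2 * ν₁)) * (ν₁ * p.1 ^ 2 + ν₂ * p.2 ^ 2) / 2) :=
    fun p => Real.exp_pos _
  have heh : Integrable (fun p : ℝ × ℝ =>
      Real.exp ((1 / (2 * ν₁)) * (ν₁ * p.1 ^ 2 + ν₂ * p.2 ^ 2) / 2) * (φ p - ψ p))
      ((gaussianReal 0 1).prod (gaussianReal 0 1)) := by
    apply hee.mono' (hemeas.mul hm).aestronglyMeasurable
    apply ae_of_all
    intro p
    simp only [Pi.mul_apply]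
    rw [Real.norm_eq_abs, abs_mul, abs_of_pos (hepos p)]
    exact mul_le_of_le_one_right (hepos p).le (hb p)
  have hhμ₀ : Integrable (fun p => φ p - ψ p) ((gaussianReal 0 1).prod (gaussianReal 0 1)) :=
    intble_of_bounded hm.aestronglyMeasurable hb
  -- the signed integrand
  have hu_nonpos : ∀ p : ℝ × ℝ,
      (Real.exp ((1 / (2 * ν₁)) * (ν₁ * p.1 ^ 2 + ν₂ * p.2 ^ 2) / 2) - Real.exp ((1 / (2 * ν₁)) * c / 2))
        * (φ p - ψ p) ≤ 0 := by
    intro p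
    by_cases hcq : c ≤ ν₁ * p.1 ^ 2 + ν₂ * p.2 ^ 2
    · have hψp : ψ p = 1 := by rw [hψ]; simp only; rw [if_pos hcq]
      have hhp : φ p - ψ p ≤ 0 := by rw [hψp]; linarith [(hφ01 p).2]
      have hep : Real.exp ((1 / (2 * ν₁)) * c / 2)
          ≤ Real.exp ((1 / (2 * ν₁)) * (ν₁ * p.1 ^ 2 + ν₂ * p.2 ^ 2) / 2) := by
        apply Real.exp_le_exp.mpr
        have := mul_le_mul_of_nonneg_left hcq htpos.le
        linarith
      exact mul_nonpos_iff.mpr (Or.inl ⟨by linarith, by linarith⟩)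
    · have hψp : ψ p = 0 := by rw [hψ]; simp only; rw [if_neg hcq]
      have hhp : 0 ≤ φ p - ψ p := by rw [hψp]; linarith [(hφ01 p).1]
      have hep : Real.exp ((1 / (2 * ν₁)) * (ν₁ * p.1 ^ 2 + ν₂ * p.2 ^ 2) / 2)
          ≤ Real.exp ((1 / (2 * ν₁)) * c / 2) := by
        apply Real.exp_le_exp.mpr
        push_neg at hcq
        have := mul_le_mul_of_nonneg_left hcq.le htpos.le
        linarith
      exact mul_nonpos_iff.mpr (Or.inr ⟨by linarith, by linarith⟩)
  have hu_eq : (fun p : ℝ × ℝ =>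
      (Real.exp ((1 / (2 * ν₁)) * (ν₁ * p.1 ^ 2 + ν₂ * p.2 ^ 2) / 2) - Real.exp ((1 / (2 * ν₁)) * c / 2))
        * (φ p - ψ p))
      = fun p : ℝ × ℝ => Real.exp ((1 / (2 * ν₁)) * (ν₁ * p.1 ^ 2 + ν₂ * p.2 ^ 2) / 2) * (φ p - ψ p)
        - Real.exp ((1 / (2 * ν₁)) * c / 2) * (φ p - ψ p) := by
    funext p; ring
  have hu_int : Integrable (fun p : ℝ × ℝ =>
      (Real.exp ((1 / (2 * ν₁)) * (ν₁ * p.1 ^ 2 + ν₂ * p.2 ^ 2) / 2) - Real.exp ((1 / (2 * ν₁)) * c / 2))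
        * (φ p - ψ p)) ((gaussianReal 0 1).prod (gaussianReal 0 1)) := by
    rw [hu_eq]
    exact heh.sub (hhμ₀.const_mul _)
  have hsplit : ∫ p, (Real.exp ((1 / (2 * ν₁)) * (ν₁ * p.1 ^ 2 + ν₂ * p.2 ^ 2) / 2)
        - Real.exp ((1 / (2 * ν₁)) * c / 2)) * (φ p - ψ p)
        ∂((gaussianReal 0 1).prod (gaussianReal 0 1))
      = (∫ p, Real.exp ((1 / (2 * ν₁)) * (ν₁ * p.1 ^ 2 + ν₂ * p.2 ^ 2) / 2) * (φ p - ψ p)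
          ∂((gaussianReal 0 1).prod (gaussianReal 0 1)))
        - Real.exp ((1 / (2 * ν₁)) * c / 2)
          * ∫ p, (φ p - ψ p) ∂((gaussianReal 0 1).prod (gaussianReal 0 1)) := by
    rw [hu_eq, integral_sub heh (hhμ₀.const_mul _), integral_const_mul]
  have hD : ∫ p, (Real.exp ((1 / (2 * ν₁)) * (ν₁ * p.1 ^ 2 + ν₂ * p.2 ^ 2) / 2)
        - Real.exp ((1 / (2 * ν₁)) * c / 2)) * (φ p - ψ p)
        ∂((gaussianReal 0 1).prod (gaussianReal 0 1)) ≤ 0 :=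
    integral_nonpos hu_nonpos
  have hγpos : (0:ℝ) < Real.exp ((1 / (2 * ν₁)) * c / 2) := Real.exp_pos _
  have heh0 : 0 ≤ ∫ p, Real.exp ((1 / (2 * ν₁)) * (ν₁ * p.1 ^ 2 + ν₂ * p.2 ^ 2) / 2) * (φ p - ψ p)
      ∂((gaussianReal 0 1).prod (gaussianReal 0 1)) :=
    by
      by_contra hcon
      push_neg at hcon
      nlinarith [mul_pos hKpos (neg_pos.mpr hcon)]
  have hγI : Real.exp ((1 / (2 * ν₁)) * c / 2)
      * ∫ p, (φ p - ψ p) ∂((gaussianReal 0 1).prod (gaussianReal 0 1)) ≤ 0 :=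
    mul_nonpos_iff.mpr (Or.inl ⟨hγpos.le, hI0⟩)
  have huz : ∫ p, (Real.exp ((1 / (2 * ν₁)) * (ν₁ * p.1 ^ 2 + ν₂ * p.2 ^ 2) / 2)
        - Real.exp ((1 / (2 * ν₁)) * c / 2)) * (φ p - ψ p)
        ∂((gaussianReal 0 1).prod (gaussianReal 0 1)) = 0 := by
    rw [hsplit]
    linarith [hD, heh0, hγI, hsplit]
  -- conclude the integrand vanishes a.e.
  have hu0ae : (fun p : ℝ × ℝ =>
      (Real.exp ((1 / (2 * ν₁)) * (ν₁ * p.1 ^ 2 + ν₂ * p.2 ^ 2) / 2) - Real.exp ((1 / (2 * ν₁)) * c / 2))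
        * (φ p - ψ p)) =ᵐ[(gaussianReal 0 1).prod (gaussianReal 0 1)] 0 := by
    have hneg : (fun p : ℝ × ℝ => -((Real.exp ((1 / (2 * ν₁)) * (ν₁ * p.1 ^ 2 + ν₂ * p.2 ^ 2) / 2)
        - Real.exp ((1 / (2 * ν₁)) * c / 2)) * (φ p - ψ p)))
        =ᵐ[(gaussianReal 0 1).prod (gaussianReal 0 1)] 0 := by
      refine (integral_eq_zero_iff_of_nonneg (fun p => by simpa using hu_nonpos p) hu_int.neg).mp ?_
      have hin := integral_neg (μ := (gaussianReal 0 1).prod (gaussianReal 0 1))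
        (f := fun p : ℝ × ℝ => (Real.exp ((1 / (2 * ν₁)) * (ν₁ * p.1 ^ 2 + ν₂ * p.2 ^ 2) / 2)
          - Real.exp ((1 / (2 * ν₁)) * c / 2)) * (φ p - ψ p))
      simp only [Pi.neg_apply]
      rw [hin, huz, neg_zero]
    filter_upwards [hneg] with p hp
    simpa using hp
  have hbdry : ((gaussianReal 0 1).prod (gaussianReal 0 1))
      {p : ℝ × ℝ | ν₁ * p.1 ^ 2 + ν₂ * p.2 ^ 2 = c} = 0 := boundary_null ν₁ ν₂ c h1
  have hbd' : ∀ᵐ p ∂((gaussianReal 0 1).prod (gaussianReal 0 1)),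
      ν₁ * p.1 ^ 2 + ν₂ * p.2 ^ 2 ≠ c := by
    rw [ae_iff]
    simpa using hbdry
  have hae0 : (fun p => φ p - ψ p) =ᵐ[(gaussianReal 0 1).prod (gaussianReal 0 1)] 0 := by
    filter_upwards [hu0ae, hbd'] with p hup hqp
    have hup' : (Real.exp ((1 / (2 * ν₁)) * (ν₁ * p.1 ^ 2 + ν₂ * p.2 ^ 2) / 2)
        - Real.exp ((1 / (2 * ν₁)) * c / 2)) * (φ p - ψ p) = 0 := hup
    have hne : Real.exp ((1 / (2 * ν₁)) * (ν₁ * p.1 ^ 2 + ν₂ * p.2 ^ 2) / 2)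
        - Real.exp ((1 / (2 * ν₁)) * c / 2) ≠ 0 := by
      apply sub_ne_zero.mpr
      intro hcon
      apply hqp
      have h3 : (1 / (2 * ν₁)) * (ν₁ * p.1 ^ 2 + ν₂ * p.2 ^ 2) / 2 = (1 / (2 * ν₁)) * c / 2 :=
        Real.exp_eq_exp.mp hcon
      have h4 : (1 / (2 * ν₁)) ≠ 0 := htpos.ne'
      field_simp at h3
      exact h3
    exact (mul_eq_zero.mp hup').resolve_left hne
  -- transfer to every θ
  intro θ
  have hvolae : (fun p => φ p - ψ p) =ᵐ[(volume : Measure ℝ).prod (volume : Measure ℝ)] 0 :=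
    ((gaussianReal_absolutelyContinuous' 0 one_ne_zero).prod
      (gaussianReal_absolutelyContinuous' 0 one_ne_zero)).ae_eq hae0
  have hθae : (fun p => φ p - ψ p) =ᵐ[(gaussianReal θ.1 1).prod (gaussianReal θ.2 1)] 0 :=
    ((gaussianReal_absolutelyContinuous θ.1 one_ne_zero).prod
      (gaussianReal_absolutelyContinuous θ.2 one_ne_zero)).ae_eq hvolae
  have hz : ∫ p, (φ p - ψ p) ∂((gaussianReal θ.1 1).prod (gaussianReal θ.2 1)) = 0 :=
    integral_eq_zero_of_ae hθae
  rw [hsub θ] at hz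
  rw [hμ θ]
  linarith
end

section
/- Let α ∈ (0,1) and ν₁ ≥ ν₂ ≥ 0 with ν₁ > 0. For θ = (θ₁, θ₂) ∈ ℝ², let μ_θ be the product on ℝ² of the normal distribution with mean θ₁ and variance 1 and the normal distribution with mean θ₂ and variance 1. Let c > 0 satisfy μ_{(0,0)}{(x,y) : ν₁x² + ν₂y² ≥ c} = α, and let ψ(x,y) := 1{ν₁x² + ν₂y² ≥ c}. Let Φ_α be the class of measurable functions φ : ℝ² → [0,1] that are even in each coordinate (φ(x,y) = φ(−x,y) = φ(x,−y) for all (x,y)) and satisfy ∫φ dμ_{(0,0)} ≤ α. For b > 0 set θ(b) := (√(b·ν₁), √(b·ν₂)). Then for every φ ∈ Φ_α there exists b̄ > 0 such that for all 0 < b < b̄: ∫φ dμ_{θ(b)} ≤ ∫ψ dμ_{θ(b)}. -/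
open MeasureTheory ProbabilityTheory

namespace Stmt12Aux

open Real Filter


/-- `sinh s ≤ s * cosh s` for `s ≥ 0`. -/
lemma sinh_le_mul_cosh {s : ℝ} (hs : 0 ≤ s) : Real.sinh s ≤ s * Real.cosh s := by
  have hmono : MonotoneOn (fun t : ℝ => t * Real.cosh t - Real.sinh t) (Set.Ici 0) := by
    apply monotoneOn_of_deriv_nonneg (convex_Ici 0)
    · exact ((continuous_id.mul Real.continuous_cosh).sub Real.continuous_sinh).continuousOn
    · intro t ht
      exact (((differentiable_id.mul Real.differentiable_cosh).sub
        Real.differentiable_sinh) t).differentiableWithinAt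
    · intro t ht
      have h1 : HasDerivAt (fun t : ℝ => t * Real.cosh t - Real.sinh t)
          (1 * Real.cosh t + t * Real.sinh t - Real.cosh t) t := by
        exact ((hasDerivAt_id t).mul (Real.hasDerivAt_cosh t)).sub (Real.hasDerivAt_sinh t)
      rw [h1.deriv]
      have ht' : (0:ℝ) < t := by simpa using ht
      have : 0 ≤ t * Real.sinh t :=
        mul_nonneg ht'.le (by rw [Real.sinh_nonneg_iff]; exact ht'.le)
      nlinarith
  have := hmono (Set.self_mem_Ici) (by exact hs : s ∈ Set.Ici 0) hs
  simpa using this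

/-- Monotonicity of `sinh s / s` on positives. -/
lemma sinh_div_mono {s t : ℝ} (hs : 0 < s) (hst : s ≤ t) :
    Real.sinh s / s ≤ Real.sinh t / t := by
  have hmono : MonotoneOn (fun u : ℝ => Real.sinh u / u) (Set.Ioi 0) := by
    apply monotoneOn_of_deriv_nonneg (convex_Ioi 0)
    · exact ContinuousOn.div Real.continuous_sinh.continuousOn continuous_id.continuousOn
        (fun x hx => ne_of_gt (by simpa using hx))
    · intro u hu
      rw [interior_Ioi] at hu
      have hu' : (0:ℝ) < u := hu
      exact (((Real.hasDerivAt_sinh u).div (hasDerivAt_id u) hu'.ne').differentiableAt).differentiableWithinAt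
    · intro u hu
      rw [interior_Ioi] at hu
      have hu' : (0:ℝ) < u := hu
      have h1 : HasDerivAt (fun u : ℝ => Real.sinh u / u)
          ((Real.cosh u * u - Real.sinh u * 1) / u ^ 2) u :=
        (Real.hasDerivAt_sinh u).div (hasDerivAt_id u) hu'.ne'
      rw [h1.deriv]
      have := sinh_le_mul_cosh hu'.le
      have h2 : (0:ℝ) < u ^ 2 := by positivity
      apply div_nonneg _ h2.le
      nlinarith
  exact hmono (by simpa using hs) (by simpa using lt_of_lt_of_le hs hst) hst

lemma one_le_sinh_div {s : ℝ} (hs : 0 < s) : 1 ≤ Real.sinh s / s :=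
  (one_le_div hs).2 (le_of_lt (by rwa [← Real.self_lt_sinh_iff] at hs))

lemma sinh_div_tendsto : Tendsto (fun s : ℝ => Real.sinh s / s) (nhdsWithin 0 {0}ᶜ) (nhds 1) := by
  have h := (Real.hasDerivAt_sinh 0)
  rw [hasDerivAt_iff_tendsto_slope] at h
  simp only [Real.cosh_zero] at h
  refine h.congr' ?_
  filter_upwards [self_mem_nhdsWithin] with s hs
  simp [slope, Real.sinh_zero, div_eq_inv_mul]

lemma cosh_sub_one (u : ℝ) : Real.cosh u - 1 = 2 * Real.sinh (u / 2) ^ 2 := by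
  have : Real.cosh (2 * (u / 2)) = Real.cosh (u/2) ^ 2 + Real.sinh (u/2) ^ 2 :=
    Real.cosh_two_mul _
  have h2 : Real.cosh (u/2) ^ 2 = Real.sinh (u/2) ^ 2 + 1 := Real.cosh_sq _
  have h3 : (2 : ℝ) * (u / 2) = u := by ring
  rw [h3] at this
  linarith

lemma one_add_sq_half_le_cosh (u : ℝ) : 1 + u ^ 2 / 2 ≤ Real.cosh u := by
  have h := cosh_sub_one u
  have habs : |u / 2| ≤ |Real.sinh (u / 2)| := by
    rw [Real.abs_sinh]
    exact Real.self_le_sinh_iff.2 (abs_nonneg _)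
  have : (u / 2) ^ 2 ≤ Real.sinh (u / 2) ^ 2 := by
    rw [← sq_abs (u/2), ← sq_abs (Real.sinh (u/2))]
    exact pow_le_pow_left₀ (abs_nonneg _) habs 2
  nlinarith



lemma q_ge (m : ℝ) {b : ℝ} (hb : 0 < b) :
    m ^ 2 / 2 ≤ (Real.cosh (Real.sqrt b * m) - 1) / b := by
  have h := one_add_sq_half_le_cosh (Real.sqrt b * m)
  have hs : (Real.sqrt b * m) ^ 2 = b * m ^ 2 := by
    rw [mul_pow, Real.sq_sqrt hb.le]
  rw [le_div_iff₀ hb]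
  nlinarith

lemma q_eq {m : ℝ} (hm : m ≠ 0) {b : ℝ} (hb : 0 < b) :
    (Real.cosh (Real.sqrt b * m) - 1) / b
      = m ^ 2 / 2 * (Real.sinh (Real.sqrt b * |m| / 2) / (Real.sqrt b * |m| / 2)) ^ 2 := by
  set s := Real.sqrt b * |m| / 2 with hsdef
  have hsb : (0:ℝ) < Real.sqrt b := Real.sqrt_pos.2 hb
  have hs : 0 < s := by
    apply div_pos (mul_pos hsb (abs_pos.2 hm)) two_pos
  have h1 : Real.cosh (Real.sqrt b * m) = Real.cosh (Real.sqrt b * |m|) := by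
    rw [← Real.cosh_abs, abs_mul, abs_of_nonneg hsb.le]
  have h2 : Real.cosh (Real.sqrt b * |m|) - 1 = 2 * Real.sinh s ^ 2 := by
    rw [cosh_sub_one]
  have hs2 : s ^ 2 = b * m ^ 2 / 4 := by
    rw [hsdef]
    rw [div_pow, mul_pow, Real.sq_sqrt hb.le, sq_abs]
    norm_num
  rw [h1]
  rw [sub_eq_iff_eq_add'.2 (by linarith [h2] : Real.cosh (Real.sqrt b * |m|) = 1 + 2 * Real.sinh s ^ 2)]
  have hb' : b ≠ 0 := hb.ne'
  have hs' : s ≠ 0 := hs.ne'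
  field_simp
  nlinarith [hs2]

lemma q_mono (m : ℝ) {b b' : ℝ} (hb : 0 < b) (hbb : b ≤ b') :
    (Real.cosh (Real.sqrt b * m) - 1) / b ≤ (Real.cosh (Real.sqrt b' * m) - 1) / b' := by
  rcases eq_or_ne m 0 with hm | hm
  · simp [hm]
  · have hb' : 0 < b' := lt_of_lt_of_le hb hbb
    rw [q_eq hm hb, q_eq hm hb']
    have hs : 0 < Real.sqrt b * |m| / 2 :=
      div_pos (mul_pos (Real.sqrt_pos.2 hb) (abs_pos.2 hm)) two_pos
    have hle : Real.sqrt b * |m| / 2 ≤ Real.sqrt b' * |m| / 2 := by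
      have h := Real.sqrt_le_sqrt hbb
      gcongr
    have h1 := sinh_div_mono hs hle
    have h2 := one_le_sinh_div hs
    have hm2 : (0:ℝ) ≤ m ^ 2 / 2 := by positivity
    apply mul_le_mul_of_nonneg_left _ hm2
    apply pow_le_pow_left₀ (le_trans zero_le_one h2) h1

lemma bseq_tendsto : Tendsto (fun n : ℕ => (1:ℝ) / (n + 1)) atTop (nhds 0) :=
  tendsto_one_div_add_atTop_nhds_zero_nat

lemma q_tendsto (m : ℝ) :
    Tendsto (fun n : ℕ => (Real.cosh (Real.sqrt ((1:ℝ)/(n+1)) * m) - 1) / ((1:ℝ)/(n+1)))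
      atTop (nhds (m ^ 2 / 2)) := by
  rcases eq_or_ne m 0 with hm | hm
  · simp [hm]
  · have hbn : ∀ n : ℕ, (0:ℝ) < 1/(n+1) := fun n => by positivity
    have hsn : Tendsto (fun n : ℕ => Real.sqrt ((1:ℝ)/(n+1)) * |m| / 2) atTop
        (nhdsWithin 0 {0}ᶜ) := by
      apply tendsto_nhdsWithin_of_tendsto_nhds_of_eventually_within
      · have h0 : Tendsto (fun n : ℕ => Real.sqrt ((1:ℝ)/(n+1))) atTop (nhds 0) := by
          simpa only [Function.comp_def, Real.sqrt_zero]
            using (Real.continuous_sqrt.tendsto 0).comp bseq_tendsto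
        have := (h0.mul_const |m|).div_const 2
        simpa only [zero_mul, zero_div] using this
      · filter_upwards with n
        have : 0 < Real.sqrt ((1:ℝ)/(n+1)) * |m| / 2 :=
          div_pos (mul_pos (Real.sqrt_pos.2 (hbn n)) (abs_pos.2 hm)) two_pos
        exact this.ne'
    have hmain := (sinh_div_tendsto.comp hsn)
    have h2 : Tendsto (fun n : ℕ => m ^ 2 / 2 *
        (Real.sinh (Real.sqrt ((1:ℝ)/(n+1)) * |m| / 2) / (Real.sqrt ((1:ℝ)/(n+1)) * |m| / 2)) ^ 2)
        atTop (nhds (m ^ 2 / 2 * 1 ^ 2)) := by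
      exact (hmain.pow 2).const_mul _
    simp only [one_pow, mul_one] at h2
    refine h2.congr ?_
    intro n
    exact (q_eq hm (hbn n)).symm

section prodpt

variable (m₁ m₂ : ℝ)

lemma P1 {b : ℝ} (hb : 0 < b) :
    1 + b * (m₁ ^ 2 + m₂ ^ 2) / 2
      ≤ Real.cosh (Real.sqrt b * m₁) * Real.cosh (Real.sqrt b * m₂) := by
  have h1 := one_add_sq_half_le_cosh (Real.sqrt b * m₁)
  have h2 := one_add_sq_half_le_cosh (Real.sqrt b * m₂)
  have e1 : (Real.sqrt b * m₁) ^ 2 = b * m₁ ^ 2 := by rw [mul_pow, Real.sq_sqrt hb.le]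
  have e2 : (Real.sqrt b * m₂) ^ 2 = b * m₂ ^ 2 := by rw [mul_pow, Real.sq_sqrt hb.le]
  rw [e1] at h1; rw [e2] at h2
  nlinarith [mul_nonneg (mul_nonneg hb.le (sq_nonneg m₁)) (mul_nonneg hb.le (sq_nonneg m₂)),
    sq_nonneg m₁, sq_nonneg m₂]

lemma K_split {b : ℝ} (hb : 0 < b) :
    (Real.cosh (Real.sqrt b * m₁) * Real.cosh (Real.sqrt b * m₂) - 1) / b
      = (Real.cosh (Real.sqrt b * m₁) - 1) / b * Real.cosh (Real.sqrt b * m₂)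
        + (Real.cosh (Real.sqrt b * m₂) - 1) / b := by
  field_simp
  ring

lemma P2 {b b' : ℝ} (hb : 0 < b) (hbb : b ≤ b') :
    (Real.cosh (Real.sqrt b * m₁) * Real.cosh (Real.sqrt b * m₂) - 1) / b
      ≤ (Real.cosh (Real.sqrt b' * m₁) * Real.cosh (Real.sqrt b' * m₂) - 1) / b' := by
  have hb' : 0 < b' := lt_of_lt_of_le hb hbb
  rw [K_split _ _ hb, K_split _ _ hb']
  have hq1 := q_mono m₁ hb hbb
  have hq2 := q_mono m₂ hb hbb
  have hge1 : (0:ℝ) ≤ (Real.cosh (Real.sqrt b * m₁) - 1) / b :=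
    le_trans (by positivity) (q_ge m₁ hb)
  have hk2 : Real.cosh (Real.sqrt b * m₂) ≤ Real.cosh (Real.sqrt b' * m₂) := by
    rw [Real.cosh_le_cosh, abs_mul, abs_mul]
    apply mul_le_mul_of_nonneg_right _ (abs_nonneg m₂)
    rw [abs_of_nonneg (Real.sqrt_nonneg b), abs_of_nonneg (Real.sqrt_nonneg b')]
    exact Real.sqrt_le_sqrt hbb
  have hk2pos : (0:ℝ) ≤ Real.cosh (Real.sqrt b * m₂) :=
    le_trans zero_le_one (Real.one_le_cosh _)
  have := mul_le_mul hq1 hk2 hk2pos (le_trans hge1 hq1)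
  linarith

lemma P3 :
    Tendsto (fun n : ℕ =>
      (Real.cosh (Real.sqrt ((1:ℝ)/(n+1)) * m₁) * Real.cosh (Real.sqrt ((1:ℝ)/(n+1)) * m₂) - 1)
        / ((1:ℝ)/(n+1))) atTop (nhds ((m₁ ^ 2 + m₂ ^ 2) / 2)) := by
  have hbn : ∀ n : ℕ, (0:ℝ) < 1/(n+1) := fun n => by positivity
  have hk2 : Tendsto (fun n : ℕ => Real.cosh (Real.sqrt ((1:ℝ)/(n+1)) * m₂)) atTop (nhds 1) := by
    have h0 : Tendsto (fun n : ℕ => Real.sqrt ((1:ℝ)/(n+1)) * m₂) atTop (nhds 0) := by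
      have h1 : Tendsto (fun n : ℕ => Real.sqrt ((1:ℝ)/(n+1))) atTop (nhds 0) := by
        simpa only [Function.comp_def, Real.sqrt_zero]
          using (Real.continuous_sqrt.tendsto 0).comp bseq_tendsto
      simpa only [zero_mul] using h1.mul_const m₂
    have := (Real.continuous_cosh.tendsto 0).comp h0
    simpa [Function.comp_def] using this
  have h := ((q_tendsto m₁).mul hk2).add (q_tendsto m₂)
  have heq : (m₁ ^ 2 + m₂ ^ 2) / 2 = m₁ ^ 2 / 2 * 1 + m₂ ^ 2 / 2 := by ring
  rw [heq]
  refine h.congr ?_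
  intro n
  rw [← K_split _ _ (hbn n)]

end prodpt


lemma gauss_wd (θ : ℝ) : gaussianReal θ 1
    = MeasureTheory.Measure.withDensity volume
        (fun x => ((gaussianPDFReal θ 1 x).toNNReal : ENNReal)) := by
  rw [gaussianReal_of_var_ne_zero θ one_ne_zero]
  rfl

lemma meas_pdfnn (θ : ℝ) : Measurable (fun x => (gaussianPDFReal θ 1 x).toNNReal) :=
  (measurable_gaussianPDFReal θ 1).real_toNNReal

lemma integral_gauss (θ : ℝ) (g : ℝ → ℝ) :
    ∫ x, g x ∂(gaussianReal θ 1) = ∫ x, gaussianPDFReal θ 1 x * g x := by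
  rw [gauss_wd θ, integral_withDensity_eq_integral_smul (meas_pdfnn θ) g]
  congr 1
  ext x
  simp [NNReal.smul_def, Real.coe_toNNReal _ (gaussianPDFReal_nonneg θ 1 x)]

lemma integrable_gauss_iff (θ : ℝ) (g : ℝ → ℝ) :
    Integrable g (gaussianReal θ 1)
      ↔ Integrable (fun x => gaussianPDFReal θ 1 x * g x) volume := by
  rw [gauss_wd θ, integrable_withDensity_iff_integrable_coe_smul (meas_pdfnn θ)]
  apply integrable_congr
  filter_upwards with x
  simp [Real.coe_toNNReal _ (gaussianPDFReal_nonneg θ 1 x)]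

lemma pdf_mul_exp (θ x : ℝ) :
    gaussianPDFReal 0 1 x * Real.exp (θ * x - θ ^ 2 / 2) = gaussianPDFReal θ 1 x := by
  unfold gaussianPDFReal
  simp only [NNReal.coe_one, mul_one, sub_zero]
  rw [mul_assoc, ← Real.exp_add]
  congr 1
  ring

lemma change1 (θ : ℝ) (g : ℝ → ℝ) :
    ∫ x, g x ∂(gaussianReal θ 1)
      = ∫ x, g x * Real.exp (θ * x - θ ^ 2 / 2) ∂(gaussianReal 0 1) := by
  rw [integral_gauss, integral_gauss]
  congr 1
  ext x
  rw [← pdf_mul_exp θ x]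
  ring

lemma integrable_exp_gauss (a : ℝ) :
    Integrable (fun x => Real.exp (a * x)) (gaussianReal 0 1) := by
  rw [integrable_gauss_iff]
  have h : (fun x => gaussianPDFReal 0 1 x * Real.exp (a * x))
      = fun x => Real.exp (a ^ 2 / 2) * gaussianPDFReal a 1 x := by
    ext x
    rw [← pdf_mul_exp a x, mul_comm (Real.exp (a^2/2)), mul_assoc, ← Real.exp_add]
    congr 2
    ring
  rw [h]
  exact (integrable_gaussianPDFReal a 1).const_mul _

lemma integrable_cosh_gauss (a : ℝ) :
    Integrable (fun x => Real.cosh (a * x)) (gaussianReal 0 1) := by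
  have h := ((integrable_exp_gauss a).add (integrable_exp_gauss (-a))).div_const 2
  apply h.congr
  filter_upwards with x
  simp only [Pi.add_apply]
  rw [Real.cosh_eq, neg_mul]

lemma gauss_map_neg :
    Measure.map (fun x : ℝ => -x) (gaussianReal 0 1) = gaussianReal 0 1 := by
  have h := gaussianReal_map_const_mul (μ := 0) (v := 1) (-1)
  simp only [neg_mul, one_mul, mul_zero, neg_zero] at h
  convert h using 3
  ext
  norm_num



noncomputable def μ₀ : Measure (ℝ × ℝ) := (gaussianReal 0 1).prod (gaussianReal 0 1)

instance : IsProbabilityMeasure μ₀ := by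
  unfold μ₀; infer_instance

lemma integrable_bdd {μ_ : Measure (ℝ × ℝ)} [IsFiniteMeasure μ_]
    {f : ℝ × ℝ → ℝ} (C : ℝ) (hm : AEStronglyMeasurable f μ_) (hb : ∀ p, |f p| ≤ C) :
    Integrable f μ_ := by
  refine (integrable_const C).mono' hm ?_
  filter_upwards with p
  simpa using hb p

lemma integrable_r (θ : ℝ) :
    Integrable (fun x => Real.exp (θ * x - θ ^ 2 / 2)) (gaussianReal 0 1) := by
  have h := (integrable_exp_gauss θ).mul_const (Real.exp (- θ ^ 2 / 2))
  apply h.congr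
  filter_upwards with x
  rw [← Real.exp_add]
  congr 1
  ring

/-- Two-dimensional change of measure to the standard Gaussian. -/
lemma change2 (θ₁ θ₂ : ℝ) {f : ℝ × ℝ → ℝ} (hm : Measurable f) {C : ℝ} (hb : ∀ p, |f p| ≤ C) :
    ∫ p, f p ∂((gaussianReal θ₁ 1).prod (gaussianReal θ₂ 1))
      = ∫ p, f p * (Real.exp (θ₁ * p.1 - θ₁ ^ 2 / 2) * Real.exp (θ₂ * p.2 - θ₂ ^ 2 / 2)) ∂μ₀ := by
  have hInt : Integrable f ((gaussianReal θ₁ 1).prod (gaussianReal θ₂ 1)) :=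
    integrable_bdd C hm.aestronglyMeasurable hb
  rw [integral_prod f hInt]
  have hinner : ∀ x : ℝ, ∫ y, f (x, y) ∂(gaussianReal θ₂ 1)
      = ∫ y, f (x, y) * Real.exp (θ₂ * y - θ₂ ^ 2 / 2) ∂(gaussianReal 0 1) :=
    fun x => change1 θ₂ _
  simp_rw [hinner]
  rw [change1 θ₁]
  have hpull : ∀ x : ℝ, (∫ y, f (x, y) * Real.exp (θ₂ * y - θ₂ ^ 2 / 2) ∂(gaussianReal 0 1))
      * Real.exp (θ₁ * x - θ₁ ^ 2 / 2)
      = ∫ y, f (x, y) * Real.exp (θ₂ * y - θ₂ ^ 2 / 2) * Real.exp (θ₁ * x - θ₁ ^ 2 / 2)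
          ∂(gaussianReal 0 1) :=
    fun x => (integral_mul_const _ _).symm
  simp_rw [hpull]
  have hprodr : Integrable
      (fun p : ℝ × ℝ => Real.exp (θ₁ * p.1 - θ₁ ^ 2 / 2) * Real.exp (θ₂ * p.2 - θ₂ ^ 2 / 2)) μ₀ :=
    (integrable_r θ₁).mul_prod (integrable_r θ₂)
  have hI2 : Integrable (fun p : ℝ × ℝ =>
      f p * Real.exp (θ₂ * p.2 - θ₂ ^ 2 / 2) * Real.exp (θ₁ * p.1 - θ₁ ^ 2 / 2)) μ₀ := by
    have h := hprodr.bdd_mul hm.aestronglyMeasurable (c := C) (ae_of_all _ fun p => by simpa using hb p)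
    apply h.congr
    filter_upwards with p
    ring
  have := integral_prod _ hI2
  rw [← this]
  apply integral_congr_ae
  filter_upwards with p
  ring

def EvenEach (f : ℝ × ℝ → ℝ) : Prop :=
  (∀ x y : ℝ, f (x, y) = f (-x, y)) ∧ (∀ x y : ℝ, f (x, y) = f (x, -y))

lemma map_neg_fst : Measure.map (fun p : ℝ × ℝ => (-p.1, p.2)) μ₀ = μ₀ := by
  have h := Measure.map_prod_map (f := fun x : ℝ => -x) (g := fun y : ℝ => y)
    (gaussianReal 0 1) (gaussianReal 0 1) measurable_neg measurable_id
  unfold μ₀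
  simp only [Measure.map_id'] at h
  rw [gauss_map_neg] at h
  have hfun : (Prod.map (fun x : ℝ => -x) (fun y : ℝ => y)) = (fun p : ℝ × ℝ => (-p.1, p.2)) := rfl
  rw [hfun] at h
  exact h.symm

lemma map_neg_snd : Measure.map (fun p : ℝ × ℝ => (p.1, -p.2)) μ₀ = μ₀ := by
  have h := Measure.map_prod_map (f := fun x : ℝ => x) (g := fun y : ℝ => -y)
    (gaussianReal 0 1) (gaussianReal 0 1) measurable_id measurable_neg
  unfold μ₀
  simp only [Measure.map_id'] at h
  rw [gauss_map_neg] at h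
  have hfun : (Prod.map (fun x : ℝ => x) (fun y : ℝ => -y)) = (fun p : ℝ × ℝ => (p.1, -p.2)) := rfl
  rw [hfun] at h
  exact h.symm




lemma flip1 {F : ℝ × ℝ → ℝ} (hmF : AEStronglyMeasurable F μ₀) :
    ∫ p, F p ∂μ₀ = ∫ p : ℝ × ℝ, F (-p.1, p.2) ∂μ₀ := by
  nth_rewrite 1 [← map_neg_fst]
  rw [integral_map (by fun_prop) (by rw [map_neg_fst]; exact hmF)]

lemma flip2 {F : ℝ × ℝ → ℝ} (hmF : AEStronglyMeasurable F μ₀) :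
    ∫ p, F p ∂μ₀ = ∫ p : ℝ × ℝ, F (p.1, -p.2) ∂μ₀ := by
  nth_rewrite 1 [← map_neg_snd]
  rw [integral_map (by fun_prop) (by rw [map_neg_snd]; exact hmF)]

lemma integrable_f_exp {f : ℝ × ℝ → ℝ} (hm : Measurable f) {C : ℝ} (hb : ∀ p, |f p| ≤ C)
    (a b : ℝ) :
    Integrable (fun p : ℝ × ℝ => f p * (Real.exp (a * p.1) * Real.exp (b * p.2))) μ₀ :=
  ((integrable_exp_gauss a).mul_prod (integrable_exp_gauss b)).bdd_mul
    hm.aestronglyMeasurable (c := C) (ae_of_all _ fun p => by simpa using hb p)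

lemma sym_cosh (θ₁ θ₂ : ℝ) {f : ℝ × ℝ → ℝ} (hm : Measurable f) {C : ℝ} (hb : ∀ p, |f p| ≤ C)
    (he1 : ∀ x y : ℝ, f (x, y) = f (-x, y)) (he2 : ∀ x y : ℝ, f (x, y) = f (x, -y)) :
    ∫ p, f p * (Real.exp (θ₁ * p.1) * Real.exp (θ₂ * p.2)) ∂μ₀
      = ∫ p, f p * (Real.cosh (θ₁ * p.1) * Real.cosh (θ₂ * p.2)) ∂μ₀ := by
  have hI : ∀ a b : ℝ,
      Integrable (fun p : ℝ × ℝ => f p * (Real.exp (a * p.1) * Real.exp (b * p.2))) μ₀ :=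
    fun a b => integrable_f_exp hm hb a b
  set A1 := ∫ p, f p * (Real.exp (θ₁ * p.1) * Real.exp (θ₂ * p.2)) ∂μ₀ with hA1
  -- flip first coordinate
  have e12 : A1 = ∫ p, f p * (Real.exp (-θ₁ * p.1) * Real.exp (θ₂ * p.2)) ∂μ₀ := by
    rw [hA1, flip1 (hI θ₁ θ₂).aestronglyMeasurable]
    apply integral_congr_ae
    filter_upwards with p
    rw [← he1 p.1 p.2]
    ring_nf
  have e13 : A1 = ∫ p, f p * (Real.exp (θ₁ * p.1) * Real.exp (-θ₂ * p.2)) ∂μ₀ := by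
    rw [hA1, flip2 (hI θ₁ θ₂).aestronglyMeasurable]
    apply integral_congr_ae
    filter_upwards with p
    rw [← he2 p.1 p.2]
    ring_nf
  have e14 : A1 = ∫ p, f p * (Real.exp (-θ₁ * p.1) * Real.exp (-θ₂ * p.2)) ∂μ₀ := by
    rw [e12, flip2 (hI (-θ₁) θ₂).aestronglyMeasurable]
    apply integral_congr_ae
    filter_upwards with p
    rw [← he2 p.1 p.2]
    ring_nf
  have hpt : (fun p : ℝ × ℝ => f p * (Real.cosh (θ₁ * p.1) * Real.cosh (θ₂ * p.2)))
      = fun p : ℝ × ℝ => (1/4 : ℝ) *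
        (f p * (Real.exp (θ₁ * p.1) * Real.exp (θ₂ * p.2))
          + f p * (Real.exp (-θ₁ * p.1) * Real.exp (θ₂ * p.2))
          + f p * (Real.exp (θ₁ * p.1) * Real.exp (-θ₂ * p.2))
          + f p * (Real.exp (-θ₁ * p.1) * Real.exp (-θ₂ * p.2))) := by
    funext p
    rw [Real.cosh_eq, Real.cosh_eq]
    simp only [neg_mul]
    ring
  rw [hpt]
  rw [integral_const_mul]
  rw [integral_add ?h1 ?h2]
  case h1 => exact ((hI θ₁ θ₂).add (hI (-θ₁) θ₂)).add (hI θ₁ (-θ₂))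
  case h2 => exact hI (-θ₁) (-θ₂)
  rw [integral_add ?h3 ?h4]
  case h3 => exact (hI θ₁ θ₂).add (hI (-θ₁) θ₂)
  case h4 => exact hI θ₁ (-θ₂)
  rw [integral_add ?h5 ?h6]
  case h5 => exact hI θ₁ θ₂
  case h6 => exact hI (-θ₁) θ₂
  rw [← hA1, ← e12, ← e13, ← e14]
  ring

/-- The power formula: integral against the shifted Gaussian equals a cosh-weighted
integral against the standard Gaussian. -/
lemma power_formula (θ₁ θ₂ : ℝ) {f : ℝ × ℝ → ℝ} (hm : Measurable f) {C : ℝ}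
    (hb : ∀ p, |f p| ≤ C)
    (he1 : ∀ x y : ℝ, f (x, y) = f (-x, y)) (he2 : ∀ x y : ℝ, f (x, y) = f (x, -y)) :
    ∫ p, f p ∂((gaussianReal θ₁ 1).prod (gaussianReal θ₂ 1))
      = Real.exp (-(θ₁ ^ 2 + θ₂ ^ 2) / 2)
        * ∫ p, f p * (Real.cosh (θ₁ * p.1) * Real.cosh (θ₂ * p.2)) ∂μ₀ := by
  rw [change2 θ₁ θ₂ hm hb]
  have hpt : ∀ p : ℝ × ℝ,
      f p * (Real.exp (θ₁ * p.1 - θ₁ ^ 2 / 2) * Real.exp (θ₂ * p.2 - θ₂ ^ 2 / 2))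
        = Real.exp (-(θ₁ ^ 2 + θ₂ ^ 2) / 2)
          * (f p * (Real.exp (θ₁ * p.1) * Real.exp (θ₂ * p.2))) := by
    intro p
    rw [sub_eq_add_neg, sub_eq_add_neg, Real.exp_add, Real.exp_add]
    rw [show Real.exp (-(θ₁ ^ 2 + θ₂ ^ 2) / 2) = Real.exp (-(θ₁^2/2)) * Real.exp (-(θ₂^2/2)) by
      rw [← Real.exp_add]; congr 1; ring]
    ring
  simp_rw [hpt]
  rw [integral_const_mul]
  rw [sym_cosh θ₁ θ₂ hm hb he1 he2]





lemma null_T_eq_c (ν₁ ν₂ c : ℝ) (h1 : 0 < ν₁) :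
    μ₀ {p : ℝ × ℝ | ν₁ * p.1 ^ 2 + ν₂ * p.2 ^ 2 = c} = 0 := by
  have hTm : Measurable (fun p : ℝ × ℝ => ν₁ * p.1 ^ 2 + ν₂ * p.2 ^ 2) := by fun_prop
  have hS : MeasurableSet {p : ℝ × ℝ | ν₁ * p.1 ^ 2 + ν₂ * p.2 ^ 2 = c} :=
    hTm (measurableSet_singleton c)
  unfold μ₀
  rw [Measure.prod_apply_symm hS]
  have hsec : ∀ y : ℝ,
      (gaussianReal 0 1) ((fun x => (x, y)) ⁻¹' {p : ℝ × ℝ | ν₁ * p.1 ^ 2 + ν₂ * p.2 ^ 2 = c})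
        = 0 := by
    intro y
    set d := (c - ν₂ * y ^ 2) / ν₁ with hd
    have hν := h1.ne'
    have hsub : ((fun x => (x, y)) ⁻¹' {p : ℝ × ℝ | ν₁ * p.1 ^ 2 + ν₂ * p.2 ^ 2 = c})
        ⊆ ({Real.sqrt d, -Real.sqrt d} : Set ℝ) := by
      intro x hx
      simp only [Set.mem_preimage, Set.mem_setOf_eq] at hx
      have hx2 : x ^ 2 = d := by
        rw [hd]
        field_simp
        linarith
      have habs : Real.sqrt d = |x| := by rw [← hx2, Real.sqrt_sq_eq_abs]
      rcases abs_cases x with ⟨h, _⟩ | ⟨h, _⟩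
      · left; rw [habs, h]
      · right; simp [habs, h]
    have hnull2 : (gaussianReal 0 1) ({Real.sqrt d, -Real.sqrt d} : Set ℝ) = 0 := by
      apply (gaussianReal_absolutelyContinuous 0 one_ne_zero)
      apply measure_union_null (measure_singleton _) (measure_singleton _)
    exact measure_mono_null hsub hnull2
  simp only [hsec]
  simp


end Stmt12Aux

open Stmt12Aux Filter

set_option maxHeartbeats 2000000 in
/-- Theorem 1(i) of the paper, local power optimality: when the squared
means are proportional to the eigenvalue weights `(ν₁, ν₂)`, the test
`ψ = 1{ν₁x² + ν₂y² ≥ c}` has weakly higher power than any size-`α` test that is even in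
each coordinate, for all sufficiently small proportionality constants `b`. -/
theorem stmt_12 (α : ℝ) (hα : α ∈ Set.Ioo (0 : ℝ) 1)
    (ν₁ ν₂ : ℝ) (h21 : ν₂ ≤ ν₁) (h2 : 0 ≤ ν₂) (h1 : 0 < ν₁)
    (μ : ℝ × ℝ → Measure (ℝ × ℝ))
    (hμ : ∀ θ : ℝ × ℝ, μ θ = (gaussianReal θ.1 1).prod (gaussianReal θ.2 1))
    (c : ℝ) (hc : 0 < c)
    (hsize : μ (0, 0) {p : ℝ × ℝ | c ≤ ν₁ * p.1 ^ 2 + ν₂ * p.2 ^ 2} = ENNReal.ofReal α)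
    (ψ : ℝ × ℝ → ℝ)
    (hψ : ψ = fun p => if c ≤ ν₁ * p.1 ^ 2 + ν₂ * p.2 ^ 2 then (1 : ℝ) else 0)
    (φ : ℝ × ℝ → ℝ) (hφm : Measurable φ) (hφ01 : ∀ p, φ p ∈ Set.Icc (0 : ℝ) 1)
    (hφeven1 : ∀ x y : ℝ, φ (x, y) = φ (-x, y))
    (hφeven2 : ∀ x y : ℝ, φ (x, y) = φ (x, -y))
    (hφlevel : (∫ p, φ p ∂(μ (0, 0))) ≤ α) :
    ∃ bbar > (0 : ℝ), ∀ b : ℝ, 0 < b → b < bbar →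
      (∫ p, φ p ∂(μ (Real.sqrt (b * ν₁), Real.sqrt (b * ν₂))))
        ≤ ∫ p, ψ p ∂(μ (Real.sqrt (b * ν₁), Real.sqrt (b * ν₂))) := by
  obtain ⟨hα0, hα1⟩ := hα
  have hμ00 : μ (0, 0) = μ₀ := by rw [hμ]; rfl
  have hTm : Measurable (fun p : ℝ × ℝ => ν₁ * p.1 ^ 2 + ν₂ * p.2 ^ 2) := by fun_prop
  have hSm : MeasurableSet {p : ℝ × ℝ | c ≤ ν₁ * p.1 ^ 2 + ν₂ * p.2 ^ 2} :=
    measurableSet_le measurable_const hTm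
  have hψm : Measurable ψ := by
    rw [hψ]; exact Measurable.ite hSm measurable_const measurable_const
  have hψ01 : ∀ p, ψ p ∈ Set.Icc (0:ℝ) 1 := by
    intro p; rw [hψ]; dsimp only; split <;> norm_num
  have hψe1 : ∀ x y : ℝ, ψ (x, y) = ψ (-x, y) := by
    intro x y; rw [hψ]; simp [neg_sq]
  have hψe2 : ∀ x y : ℝ, ψ (x, y) = ψ (x, -y) := by
    intro x y; rw [hψ]; simp [neg_sq]
  have hφb : ∀ p, |φ p| ≤ 1 := fun p =>
    abs_le.2 ⟨by linarith [(hφ01 p).1], (hφ01 p).2⟩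
  have hψb : ∀ p, |ψ p| ≤ 1 := fun p =>
    abs_le.2 ⟨by linarith [(hψ01 p).1], (hψ01 p).2⟩
  set D : ℝ × ℝ → ℝ := fun p => ψ p - φ p with hD
  have hDm : Measurable D := hψm.sub hφm
  have hDb : ∀ p, |D p| ≤ 1 := by
    intro p
    have h1' := hφ01 p; have h2' := hψ01 p
    rw [Set.mem_Icc] at h1' h2'
    rw [hD]; dsimp only
    rw [abs_le]; constructor <;> [linarith [h1'.2, h2'.1]; linarith [h1'.1, h2'.2]]
  -- ψ integral over μ₀
  have hψInd : ψ = Set.indicator {p : ℝ × ℝ | c ≤ ν₁ * p.1 ^ 2 + ν₂ * p.2 ^ 2} 1 := by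
    funext p
    rw [hψ]
    by_cases h : c ≤ ν₁ * p.1 ^ 2 + ν₂ * p.2 ^ 2 <;>
      simp [Set.indicator_apply, Set.mem_setOf_eq, h]
  have hψint0 : ∫ p, ψ p ∂μ₀ = α := by
    rw [hψInd, integral_indicator_one hSm]
    rw [hμ00] at hsize
    rw [measureReal_def, hsize, ENNReal.toReal_ofReal hα0.le]
  have hφint0 : ∫ p, φ p ∂μ₀ ≤ α := by rw [← hμ00]; exact hφlevel
  have hφint : Integrable φ μ₀ := integrable_bdd 1 hφm.aestronglyMeasurable hφb
  have hψint : Integrable ψ μ₀ := integrable_bdd 1 hψm.aestronglyMeasurable hψb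
  have hDint : Integrable D μ₀ := by
    have := hψint.sub hφint
    exact this
  have hDval : ∫ p, D p ∂μ₀ = α - ∫ p, φ p ∂μ₀ := by
    rw [hD]
    rw [integral_sub hψint hφint, hψint0]
  have ha0 : 0 ≤ ∫ p, D p ∂μ₀ := by rw [hDval]; linarith
  -- K
  have hsq1 : ∀ x : ℝ, (Real.sqrt ν₁ * x) ^ 2 = ν₁ * x ^ 2 := by
    intro x; rw [mul_pow, Real.sq_sqrt h1.le]
  have hsq2 : ∀ x : ℝ, (Real.sqrt ν₂ * x) ^ 2 = ν₂ * x ^ 2 := by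
    intro x; rw [mul_pow, Real.sq_sqrt h2]
  set K : ℝ → (ℝ × ℝ) → ℝ := fun b p =>
    Real.cosh (Real.sqrt b * (Real.sqrt ν₁ * p.1)) *
      Real.cosh (Real.sqrt b * (Real.sqrt ν₂ * p.2)) with hK
  have hKint : ∀ b : ℝ, Integrable (K b) μ₀ := by
    intro b
    have h := (integrable_cosh_gauss (Real.sqrt b * Real.sqrt ν₁)).mul_prod
      (integrable_cosh_gauss (Real.sqrt b * Real.sqrt ν₂))
    apply h.congr
    filter_upwards with p
    rw [hK]; dsimp only; rw [mul_assoc, mul_assoc]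
  have hP1 : ∀ b : ℝ, 0 < b → ∀ p : ℝ × ℝ,
      1 + b * (ν₁ * p.1 ^ 2 + ν₂ * p.2 ^ 2) / 2 ≤ K b p := by
    intro b hb p
    have := P1 (Real.sqrt ν₁ * p.1) (Real.sqrt ν₂ * p.2) hb
    rwa [hsq1, hsq2] at this
  have hP2 : ∀ b b' : ℝ, 0 < b → b ≤ b' → ∀ p : ℝ × ℝ,
      (K b p - 1) / b ≤ (K b' p - 1) / b' :=
    fun b b' hb hbb p => P2 _ _ hb hbb
  have hP3 : ∀ p : ℝ × ℝ,
      Tendsto (fun n : ℕ => (K ((1:ℝ)/(n+1)) p - 1) / ((1:ℝ)/(n+1))) atTop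
        (nhds ((ν₁ * p.1 ^ 2 + ν₂ * p.2 ^ 2) / 2)) := by
    intro p
    have := P3 (Real.sqrt ν₁ * p.1) (Real.sqrt ν₂ * p.2)
    rwa [hsq1, hsq2] at this
  -- T integrable
  have hTint : Integrable (fun p : ℝ × ℝ => ν₁ * p.1 ^ 2 + ν₂ * p.2 ^ 2) μ₀ := by
    refine Integrable.mono' (((hKint 1).const_mul 2).sub (integrable_const 2))
      hTm.aestronglyMeasurable ?_
    filter_upwards with p
    have h := hP1 1 one_pos p
    have hTnn : (0:ℝ) ≤ ν₁ * p.1 ^ 2 + ν₂ * p.2 ^ 2 := by positivity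
    rw [Real.norm_eq_abs, abs_of_nonneg hTnn]
    simp only [Pi.sub_apply]
    linarith
  have hnorm1 : ∀ p : ℝ × ℝ, ‖D p‖ ≤ 1 := fun p => by
    rw [Real.norm_eq_abs]; exact hDb p
  have hDT : Integrable (fun p : ℝ × ℝ => D p * (ν₁ * p.1 ^ 2 + ν₂ * p.2 ^ 2)) μ₀ :=
    hTint.bdd_mul hDm.aestronglyMeasurable (c := 1) (ae_of_all _ hnorm1)
  have hDTc : Integrable (fun p : ℝ × ℝ => D p * (ν₁ * p.1 ^ 2 + ν₂ * p.2 ^ 2 - c)) μ₀ := by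
    have h := hDT.sub (hDint.mul_const c)
    apply h.congr
    filter_upwards with p
    simp only [Pi.sub_apply]
    ring
  -- slack sequence
  have hbn : ∀ n : ℕ, (0:ℝ) < 1/(n+1) := fun n => by positivity
  have hbn1 : ∀ n : ℕ, (1:ℝ)/(n+1) ≤ 1 := by
    intro n
    rw [div_le_one (by positivity)]
    simp
  have hSlackInt : ∀ n : ℕ, Integrable (fun p : ℝ × ℝ =>
      (K ((1:ℝ)/(n+1)) p - 1) / ((1:ℝ)/(n+1)) - (ν₁ * p.1 ^ 2 + ν₂ * p.2 ^ 2) / 2) μ₀ :=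
    fun n => (((hKint _).sub (integrable_const 1)).div_const _).sub (hTint.div_const 2)
  set G : ℕ → ℝ := fun n => ∫ p,
      ((K ((1:ℝ)/(n+1)) p - 1) / ((1:ℝ)/(n+1)) - (ν₁ * p.1 ^ 2 + ν₂ * p.2 ^ 2) / 2) ∂μ₀ with hG
  have hslack_nonneg : ∀ n : ℕ, ∀ p : ℝ × ℝ,
      0 ≤ (K ((1:ℝ)/(n+1)) p - 1) / ((1:ℝ)/(n+1)) - (ν₁ * p.1 ^ 2 + ν₂ * p.2 ^ 2) / 2 := by
    intro n p
    have hlow := hP1 _ (hbn n) p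
    have : (ν₁ * p.1 ^ 2 + ν₂ * p.2 ^ 2) / 2 ≤ (K ((1:ℝ)/(n+1)) p - 1) / ((1:ℝ)/(n+1)) :=
      (le_div_iff₀ (hbn n)).2 (by nlinarith)
    linarith
  have hGto : Tendsto G atTop (nhds 0) := by
    have h0 : (0:ℝ) = ∫ _p : ℝ × ℝ, (0:ℝ) ∂μ₀ := by simp
    rw [hG, h0]
    apply tendsto_integral_of_dominated_convergence
      (bound := fun p : ℝ × ℝ => K 1 p - 1 - (ν₁ * p.1 ^ 2 + ν₂ * p.2 ^ 2) / 2)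
    · intro n; exact (hSlackInt n).aestronglyMeasurable
    · exact ((hKint 1).sub (integrable_const 1)).sub (hTint.div_const 2)
    · intro n
      filter_upwards with p
      have hup := hP2 _ 1 (hbn n) (hbn1 n) p
      rw [div_one] at hup
      rw [Real.norm_eq_abs, abs_of_nonneg (hslack_nonneg n p)]
      linarith
    · filter_upwards with p
      have h := (hP3 p).sub_const ((ν₁ * p.1 ^ 2 + ν₂ * p.2 ^ 2) / 2)
      simpa using h
  -- J
  have hDTcnn : ∀ p : ℝ × ℝ, 0 ≤ D p * (ν₁ * p.1 ^ 2 + ν₂ * p.2 ^ 2 - c) := by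
    intro p
    have hφp := hφ01 p
    rw [Set.mem_Icc] at hφp
    rw [hD, hψ]; dsimp only
    split
    · next h => exact mul_nonneg (by linarith [hφp.2]) (by linarith)
    · next h =>
        push_neg at h
        have : ν₁ * p.1 ^ 2 + ν₂ * p.2 ^ 2 - c ≤ 0 := by linarith
        nlinarith [hφp.1]
  set J : ℝ := ∫ p, D p * (ν₁ * p.1 ^ 2 + ν₂ * p.2 ^ 2 - c) ∂μ₀ with hJ
  have hJnn : 0 ≤ J := integral_nonneg hDTcnn
  -- goal reduction
  have hgoal : ∀ b : ℝ, 0 < b → 0 ≤ ∫ p, D p * K b p ∂μ₀ →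
      (∫ p, φ p ∂(μ (Real.sqrt (b * ν₁), Real.sqrt (b * ν₂))))
        ≤ ∫ p, ψ p ∂(μ (Real.sqrt (b * ν₁), Real.sqrt (b * ν₂))) := by
    intro b hb hpos
    rw [hμ]
    dsimp only
    rw [power_formula _ _ hφm hφb hφeven1 hφeven2, power_formula _ _ hψm hψb hψe1 hψe2]
    apply mul_le_mul_of_nonneg_left _ (Real.exp_nonneg _)
    have hrw : ∀ p : ℝ × ℝ,
        Real.cosh (Real.sqrt (b * ν₁) * p.1) * Real.cosh (Real.sqrt (b * ν₂) * p.2) = K b p := by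
      intro p
      rw [hK]; dsimp only
      rw [Real.sqrt_mul hb.le, Real.sqrt_mul hb.le, mul_assoc, mul_assoc]
    have hφK : Integrable (fun p : ℝ × ℝ => φ p *
        (Real.cosh (Real.sqrt (b * ν₁) * p.1) * Real.cosh (Real.sqrt (b * ν₂) * p.2))) μ₀ := by
      have h := (hKint b).bdd_mul hφm.aestronglyMeasurable
        (c := 1) (ae_of_all _ fun p => by rw [Real.norm_eq_abs]; exact hφb p)
      apply h.congr
      filter_upwards with p
      rw [hrw p]
    have hψK : Integrable (fun p : ℝ × ℝ => ψ p *
        (Real.cosh (Real.sqrt (b * ν₁) * p.1) * Real.cosh (Real.sqrt (b * ν₂) * p.2))) μ₀ := by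
      have h := (hKint b).bdd_mul hψm.aestronglyMeasurable
        (c := 1) (ae_of_all _ fun p => by rw [Real.norm_eq_abs]; exact hψb p)
      apply h.congr
      filter_upwards with p
      rw [hrw p]
    have hsub : (∫ p, ψ p *
          (Real.cosh (Real.sqrt (b * ν₁) * p.1) * Real.cosh (Real.sqrt (b * ν₂) * p.2)) ∂μ₀)
        - (∫ p, φ p *
          (Real.cosh (Real.sqrt (b * ν₁) * p.1) * Real.cosh (Real.sqrt (b * ν₂) * p.2)) ∂μ₀)
        = ∫ p, D p * K b p ∂μ₀ := by
      rw [← integral_sub hψK hφK]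
      apply integral_congr_ae
      filter_upwards with p
      rw [← hrw p, hD]; ring
    linarith
  -- case split on J
  rcases eq_or_lt_of_le hJnn with hJzero | hJpos
  · -- J = 0 : φ = ψ a.e.
    refine ⟨1, one_pos, ?_⟩
    intro b hb _
    apply hgoal b hb
    have hae : (fun p => D p * (ν₁ * p.1 ^ 2 + ν₂ * p.2 ^ 2 - c)) =ᵐ[μ₀] 0 := by
      rw [← integral_eq_zero_iff_of_nonneg hDTcnn hDTc]
      exact hJzero.symm
    have hne : ∀ᵐ p ∂μ₀, ν₁ * p.1 ^ 2 + ν₂ * p.2 ^ 2 ≠ c := by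
      rw [ae_iff]
      have := null_T_eq_c ν₁ ν₂ c h1
      convert this using 2
      ext p
      simp [not_not]
    have hD0 : ∀ᵐ p ∂μ₀, D p = 0 := by
      filter_upwards [hae, hne] with p hp1 hp2
      have hp1' : D p * (ν₁ * p.1 ^ 2 + ν₂ * p.2 ^ 2 - c) = 0 := hp1
      rcases mul_eq_zero.1 hp1' with h | h
      · exact h
      · exact absurd (by linarith : ν₁ * p.1 ^ 2 + ν₂ * p.2 ^ 2 = c) hp2
    have heq0 : ∫ p, D p * K b p ∂μ₀ = 0 := by
      have : (fun p => D p * K b p) =ᵐ[μ₀] 0 := by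
        filter_upwards [hD0] with p hp
        simp [hp]
      rw [integral_congr_ae this]
      simp
    linarith
  · -- J > 0
    obtain ⟨n₀, hn₀⟩ := (hGto.eventually_lt_const (by linarith : (0:ℝ) < J/2)).exists
    refine ⟨1/(n₀+1), hbn n₀, ?_⟩
    intro b hb hblt
    apply hgoal b hb
    have hDKb1 : Integrable (fun p : ℝ × ℝ => D p * (K b p - 1)) μ₀ :=
      ((hKint b).sub (integrable_const 1)).bdd_mul hDm.aestronglyMeasurable (c := 1) (ae_of_all _ hnorm1)
    have hsplit : ∫ p, D p * K b p ∂μ₀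
        = (∫ p, D p ∂μ₀) + ∫ p, D p * (K b p - 1) ∂μ₀ := by
      rw [← integral_add hDint hDKb1]
      apply integral_congr_ae
      filter_upwards with p
      ring
    -- pointwise bound
    have hptw : ∀ p : ℝ × ℝ,
        b * (D p * (ν₁ * p.1 ^ 2 + ν₂ * p.2 ^ 2) / 2)
          - b * ((K ((1:ℝ)/(n₀+1)) p - 1) / ((1:ℝ)/(n₀+1))
              - (ν₁ * p.1 ^ 2 + ν₂ * p.2 ^ 2) / 2)
          ≤ D p * (K b p - 1) := by
      intro p
      have hlow := hP1 b hb p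
      have h2 := hP2 b ((1:ℝ)/(n₀+1)) hb hblt.le p
      have hKub : K b p - 1 ≤ b * ((K ((1:ℝ)/(n₀+1)) p - 1) / ((1:ℝ)/(n₀+1))) := by
        have := (div_le_iff₀ hb).1 h2
        linarith
      have habs := abs_le.1 (hDb p)
      nlinarith [mul_nonneg (by linarith [habs.1] : (0:ℝ) ≤ 1 + D p)
        (by nlinarith : (0:ℝ) ≤ K b p - 1 - b * (ν₁ * p.1 ^ 2 + ν₂ * p.2 ^ 2) / 2)]
    have hLint : Integrable (fun p : ℝ × ℝ =>
        b * (D p * (ν₁ * p.1 ^ 2 + ν₂ * p.2 ^ 2) / 2)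
          - b * ((K ((1:ℝ)/(n₀+1)) p - 1) / ((1:ℝ)/(n₀+1))
              - (ν₁ * p.1 ^ 2 + ν₂ * p.2 ^ 2) / 2)) μ₀ :=
      ((hDT.div_const 2).const_mul b).sub ((hSlackInt n₀).const_mul b)
    have hmono := integral_mono hLint hDKb1 (fun p => hptw p)
    have hLHS : ∫ p, (b * (D p * (ν₁ * p.1 ^ 2 + ν₂ * p.2 ^ 2) / 2)
          - b * ((K ((1:ℝ)/(n₀+1)) p - 1) / ((1:ℝ)/(n₀+1))
              - (ν₁ * p.1 ^ 2 + ν₂ * p.2 ^ 2) / 2)) ∂μ₀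
        = b * ((∫ p, D p * (ν₁ * p.1 ^ 2 + ν₂ * p.2 ^ 2) ∂μ₀) / 2) - b * G n₀ := by
      rw [integral_sub ((hDT.div_const 2).const_mul b) ((hSlackInt n₀).const_mul b),
        integral_const_mul, integral_const_mul, integral_div, hG]
    have hDTval : ∫ p, D p * (ν₁ * p.1 ^ 2 + ν₂ * p.2 ^ 2) ∂μ₀
        = J + c * ∫ p, D p ∂μ₀ := by
      have hfun : (fun p : ℝ × ℝ => D p * (ν₁ * p.1 ^ 2 + ν₂ * p.2 ^ 2))
          = fun p => D p * (ν₁ * p.1 ^ 2 + ν₂ * p.2 ^ 2 - c) + c * D p := by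
        funext p; ring
      rw [hfun, integral_add hDTc (hDint.const_mul c), integral_const_mul, hJ]
    have ha := ha0
    have hpos2 : 0 < (J + c * ∫ p, D p ∂μ₀) / 2 - G n₀ := by
      nlinarith [mul_nonneg hc.le ha]
    have hbp := mul_pos hb hpos2
    rw [hLHS, hDTval] at hmono
    rw [hsplit]
    nlinarith
end

section
/- Let Φ₁ > 0, Ψ > 0, ρ ∈ (−1,1), ρ̃ ∈ ℝ, and θ ∈ ℝ. Define Ψ_h := Ψ − 2ρ̃·ρ·√(Φ₁Ψ) + ρ̃²·Φ₁. Then: (i) Ψ_h = Ψ·((1 − ρ²) + (ρ̃·√(Φ₁/Ψ) − ρ)²), so in particular Ψ_h > 0; (ii) θ²·Ψ/Ψ_h ≤ θ²/(1 − ρ²), with equality if and only if θ = 0 or ρ̃·√Φ₁ = ρ·√Ψ. -/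
/-- noncentrality comparison between the HLIM-based Wald test and the CLC
test: with `Ψ_h = Ψ − 2ρ̃ρ√(Φ₁Ψ) + ρ̃²Φ₁` one has
`Ψ_h = Ψ((1−ρ²) + (ρ̃√(Φ₁/Ψ) − ρ)²) > 0` and
`θ²Ψ/Ψ_h ≤ θ²/(1−ρ²)` with equality iff `θ = 0` or `ρ̃√Φ₁ = ρ√Ψ`. -/
theorem stmt_17 (Φ₁ Ψ ρ ρt θ : ℝ) (hΦ₁ : 0 < Φ₁) (hΨ : 0 < Ψ)
    (hρ : ρ ∈ Set.Ioo (-1 : ℝ) 1)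
    (Ψh : ℝ) (hΨh : Ψh = Ψ - 2 * ρt * ρ * Real.sqrt (Φ₁ * Ψ) + ρt ^ 2 * Φ₁) :
    (Ψh = Ψ * ((1 - ρ ^ 2) + (ρt * Real.sqrt (Φ₁ / Ψ) - ρ) ^ 2) ∧ 0 < Ψh) ∧
      (θ ^ 2 * Ψ / Ψh ≤ θ ^ 2 / (1 - ρ ^ 2) ∧
        (θ ^ 2 * Ψ / Ψh = θ ^ 2 / (1 - ρ ^ 2) ↔
          θ = 0 ∨ ρt * Real.sqrt Φ₁ = ρ * Real.sqrt Ψ)) := by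
  obtain ⟨hρl, hρr⟩ := hρ
  set s := Real.sqrt Φ₁ with hs
  set t := Real.sqrt Ψ with ht
  have hspos : 0 < s := Real.sqrt_pos.mpr hΦ₁
  have htpos : 0 < t := Real.sqrt_pos.mpr hΨ
  have hs2 : s ^ 2 = Φ₁ := Real.sq_sqrt hΦ₁.le
  have ht2 : t ^ 2 = Ψ := Real.sq_sqrt hΨ.le
  have hmul : Real.sqrt (Φ₁ * Ψ) = s * t := Real.sqrt_mul hΦ₁.le Ψ
  have hdiv : Real.sqrt (Φ₁ / Ψ) = s / t := Real.sqrt_div' Φ₁ hΨ.le ▸ Real.sqrt_div hΦ₁.le Ψ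
  have h1m : 0 < 1 - ρ ^ 2 := by nlinarith
  have key : Ψh = t ^ 2 * (1 - ρ ^ 2) + (ρt * s - ρ * t) ^ 2 := by
    rw [hΨh, hmul]; nlinarith [hs2, ht2]
  have hid : Ψh = Ψ * ((1 - ρ ^ 2) + (ρt * Real.sqrt (Φ₁ / Ψ) - ρ) ^ 2) := by
    rw [hdiv, key, ← ht2]; field_simp
  have hΨhge : Ψ * (1 - ρ ^ 2) ≤ Ψh := by nlinarith [sq_nonneg (ρt * s - ρ * t), key, ht2]
  have hΨhpos : 0 < Ψh := lt_of_lt_of_le (by positivity) hΨhge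
  refine ⟨⟨hid, hΨhpos⟩, ?_, ?_⟩
  · rw [div_le_div_iff₀ hΨhpos h1m]
    nlinarith [sq_nonneg θ, mul_nonneg (sq_nonneg θ) (sq_nonneg (ρt * s - ρ * t))]
  · constructor
    · intro h
      by_cases hθ : θ = 0
      · exact Or.inl hθ
      · right
        have hθ2 : 0 < θ ^ 2 := by positivity
        rw [div_eq_div_iff hΨhpos.ne' h1m.ne'] at h
        have hc : Ψ * (1 - ρ ^ 2) = Ψh :=
          mul_left_cancel₀ (pow_ne_zero 2 hθ) (by linear_combination h)
        have : (ρt * s - ρ * t) ^ 2 = 0 := by nlinarith [key, ht2, hc]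
        have := pow_eq_zero_iff (n := 2) (by norm_num) |>.mp this
        linarith
    · rintro (h | h)
      · simp [h]
      · have hΨheq : Ψh = Ψ * (1 - ρ ^ 2) := by
          rw [key, h, ← ht2]; ring
        rw [hΨheq]
        rw [eq_comm, div_eq_div_iff h1m.ne' (by positivity : (0:ℝ) < Ψ * (1 - ρ^2)).ne']
        ring
end

section
/- Let P be an n×n real matrix that is symmetric and idempotent (P⊤ = P and P·P = P), let Π ∈ ℝⁿ, and for each i define ω_i := Σ_{j≠i} P_{ij}·Π_j. Then: (i) for each i, Σ_{j≠i} P_{ij}² = P_{ii}·(1 − P_{ii}), and consequently 0 ≤ P_{ii} ≤ 1 and Σ_{j≠i} P_{ij}² ≤ P_{ii}; (ii) for each i, ω_i² ≤ P_{ii} · Σ_{j=1}^{n} Π_j²; (iii) Σ_{i=1}^{n} ω_i² ≤ 4 · Σ_{i=1}^{n} Π_i²; (iv) Σ_{i=1}^{n} ω_i⁴ ≤ 4 · (max_i P_{ii}) · (Σ_{i=1}^{n} Π_i²)²; (v) for every c ∈ ℝⁿ, |Σ_{i=1}^{n} Σ_{j≠i} c_i P_{ij} c_j| ≤ Σ_{i=1}^{n}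 c_i². -/
open Finset

lemma diag_eq (n : ℕ) (P : Matrix (Fin n) (Fin n) ℝ)
    (hsym : P.IsSymm) (hidem : P * P = P) (i : Fin n) :
    P i i = ∑ j, (P i j) ^ 2 := by
  conv_lhs => rw [← hidem]
  rw [Matrix.mul_apply]
  refine Finset.sum_congr rfl fun j _ => ?_
  rw [hsym.apply i j, sq]

lemma quad_eq (n : ℕ) (P : Matrix (Fin n) (Fin n) ℝ)
    (hsym : P.IsSymm) (hidem : P * P = P) (c : Fin n → ℝ) :
    ∑ i, (P.mulVec c i) ^ 2 = ∑ i, c i * P.mulVec c i := by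
  have h1 : ∀ i, (P.mulVec c i) ^ 2 = ∑ j, ∑ k, P i j * c j * (P i k * c k) := by
    intro i
    rw [sq, Matrix.mulVec, dotProduct, Finset.sum_mul_sum]
  calc ∑ i, (P.mulVec c i) ^ 2
      = ∑ i, ∑ j, ∑ k, P i j * c j * (P i k * c k) := by
        exact Finset.sum_congr rfl fun i _ => h1 i
    _ = ∑ j, ∑ k, (∑ i, P i j * P i k) * (c j * c k) := by
        rw [Finset.sum_comm]
        refine Finset.sum_congr rfl fun j _ => ?_
        rw [Finset.sum_comm]
        refine Finset.sum_congr rfl fun k _ => ?_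
        rw [Finset.sum_mul]
        exact Finset.sum_congr rfl fun i _ => by ring
    _ = ∑ j, ∑ k, P j k * (c j * c k) := by
        refine Finset.sum_congr rfl fun j _ => Finset.sum_congr rfl fun k _ => ?_
        congr 1
        have := congrFun (congrFun hidem j) k
        rw [Matrix.mul_apply] at this
        rw [← this]
        exact Finset.sum_congr rfl fun i _ => by rw [hsym.apply j i]
    _ = ∑ i, c i * P.mulVec c i := by
        refine Finset.sum_congr rfl fun j _ => ?_
        rw [Matrix.mulVec, dotProduct, Finset.mul_sum]
        exact Finset.sum_congr rfl fun k _ => by ring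

lemma norm_sq_le (n : ℕ) (P : Matrix (Fin n) (Fin n) ℝ)
    (hsym : P.IsSymm) (hidem : P * P = P) (c : Fin n → ℝ) :
    ∑ i, (P.mulVec c i) ^ 2 ≤ ∑ i, (c i) ^ 2 := by
  set u := P.mulVec c with hu
  have hq := quad_eq n P hsym hidem c
  have hcs : (∑ i, c i * u i) ^ 2 ≤ (∑ i, (c i) ^ 2) * (∑ i, (u i) ^ 2) :=
    Finset.sum_mul_sq_le_sq_mul_sq univ c u
  have hS : (0:ℝ) ≤ ∑ i, (u i) ^ 2 := Finset.sum_nonneg fun i _ => sq_nonneg _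
  rcases eq_or_lt_of_le hS with h | h
  · rw [← h]; exact Finset.sum_nonneg fun i _ => sq_nonneg _
  · nlinarith [hcs, hq]

/-- deterministic bounds for a symmetric idempotent matrix `P` and the
leave-one-out fitted values `ω_i = ∑_{j≠i} P_{ij} v_j`. -/
theorem stmt_18 (n : ℕ) (P : Matrix (Fin n) (Fin n) ℝ)
    (hsym : P.IsSymm) (hidem : P * P = P)
    (v : Fin n → ℝ) (ω : Fin n → ℝ)
    (hω : ∀ i, ω i = ∑ j ∈ univ.erase i, P i j * v j) :
    (∀ i, (∑ j ∈ univ.erase i, (P i j) ^ 2 = P i i * (1 - P i i)) ∧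
        0 ≤ P i i ∧ P i i ≤ 1 ∧ ∑ j ∈ univ.erase i, (P i j) ^ 2 ≤ P i i) ∧
      (∀ i, (ω i) ^ 2 ≤ P i i * ∑ j, (v j) ^ 2) ∧
      (∑ i, (ω i) ^ 2 ≤ 4 * ∑ i, (v i) ^ 2) ∧
      (∀ p : ℝ, (∀ i, P i i ≤ p) →
        ∑ i, (ω i) ^ 4 ≤ 4 * p * (∑ i, (v i) ^ 2) ^ 2) ∧
      (∀ c : Fin n → ℝ,
        |∑ i, ∑ j ∈ univ.erase i, c i * P i j * c j| ≤ ∑ i, (c i) ^ 2) := by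
  -- part (i)
  have herase : ∀ i : Fin n, ∑ j ∈ univ.erase i, (P i j) ^ 2 = P i i * (1 - P i i) := by
    intro i
    rw [Finset.sum_erase_eq_sub (Finset.mem_univ i), ← diag_eq n P hsym hidem i]
    ring
  have hnn : ∀ i : Fin n, 0 ≤ P i i := by
    intro i
    rw [diag_eq n P hsym hidem i]
    exact Finset.sum_nonneg fun j _ => sq_nonneg _
  have herase_nn : ∀ i : Fin n, 0 ≤ ∑ j ∈ univ.erase i, (P i j) ^ 2 :=
    fun i => Finset.sum_nonneg fun j _ => sq_nonneg _
  have hle1 : ∀ i : Fin n, P i i ≤ 1 := by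
    intro i
    have h1 := herase i; have h2 := herase_nn i; have h3 := hnn i
    nlinarith
  have part1 : ∀ i : Fin n, (∑ j ∈ univ.erase i, (P i j) ^ 2 = P i i * (1 - P i i)) ∧
      0 ≤ P i i ∧ P i i ≤ 1 ∧ ∑ j ∈ univ.erase i, (P i j) ^ 2 ≤ P i i := by
    intro i
    refine ⟨herase i, hnn i, hle1 i, ?_⟩
    have := hnn i
    rw [herase i]; nlinarith [sq_nonneg (P i i)]
  -- part (ii)
  have hv_nn : (0:ℝ) ≤ ∑ j, (v j) ^ 2 := Finset.sum_nonneg fun j _ => sq_nonneg _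
  have part2 : ∀ i : Fin n, (ω i) ^ 2 ≤ P i i * ∑ j, (v j) ^ 2 := by
    intro i
    rw [hω i]
    have hcs := Finset.sum_mul_sq_le_sq_mul_sq (univ.erase i) (fun j => P i j) v
    have hsub : ∑ j ∈ univ.erase i, (v j) ^ 2 ≤ ∑ j, (v j) ^ 2 :=
      Finset.sum_le_sum_of_subset_of_nonneg (Finset.subset_univ _)
        (fun j _ _ => sq_nonneg _)
    have h1 := (part1 i).2.2.2
    calc (∑ j ∈ univ.erase i, P i j * v j) ^ 2
        ≤ (∑ j ∈ univ.erase i, (P i j) ^ 2) * (∑ j ∈ univ.erase i, (v j) ^ 2) := hcs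
      _ ≤ P i i * ∑ j, (v j) ^ 2 := by
          apply mul_le_mul h1 hsub (Finset.sum_nonneg fun j _ => sq_nonneg _) (hnn i)
  -- part (iii)
  have homega : ∀ i : Fin n, ω i = P.mulVec v i - P i i * v i := by
    intro i
    rw [hω i, Finset.sum_erase_eq_sub (Finset.mem_univ i)]
    rw [Matrix.mulVec, dotProduct]
  have hnsq := norm_sq_le n P hsym hidem v
  have part3 : ∑ i, (ω i) ^ 2 ≤ 4 * ∑ i, (v i) ^ 2 := by
    have hpt : ∀ i : Fin n, (ω i) ^ 2 ≤ 2 * (P.mulVec v i) ^ 2 + 2 * (v i) ^ 2 := by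
      intro i
      have h0 := hnn i; have h1 := hle1 i
      rw [homega i]
      nlinarith [sq_nonneg (P.mulVec v i + P i i * v i),
        mul_nonneg (mul_nonneg (by linarith : (0:ℝ) ≤ 1 - P i i)
          (by linarith : (0:ℝ) ≤ 1 + P i i)) (sq_nonneg (v i))]
    calc ∑ i, (ω i) ^ 2 ≤ ∑ i, (2 * (P.mulVec v i) ^ 2 + 2 * (v i) ^ 2) :=
          Finset.sum_le_sum fun i _ => hpt i
      _ = 2 * (∑ i, (P.mulVec v i) ^ 2) + 2 * ∑ i, (v i) ^ 2 := by
          rw [Finset.sum_add_distrib, ← Finset.mul_sum, ← Finset.mul_sum]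
      _ ≤ 4 * ∑ i, (v i) ^ 2 := by linarith
  -- part (iv)
  have part4 : ∀ p : ℝ, (∀ i, P i i ≤ p) →
      ∑ i, (ω i) ^ 4 ≤ 4 * p * (∑ i, (v i) ^ 2) ^ 2 := by
    intro p hp
    rcases Nat.eq_zero_or_pos n with hn | hn
    · subst hn; simp
    have hp0 : 0 ≤ p := le_trans (hnn ⟨0, hn⟩) (hp ⟨0, hn⟩)
    have hpt : ∀ i : Fin n, (ω i) ^ 4 ≤ (p * ∑ j, (v j) ^ 2) * (ω i) ^ 2 := by
      intro i
      have h2 : (ω i) ^ 2 ≤ p * ∑ j, (v j) ^ 2 :=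
        le_trans (part2 i) (mul_le_mul_of_nonneg_right (hp i) hv_nn)
      calc (ω i) ^ 4 = (ω i) ^ 2 * (ω i) ^ 2 := by ring
        _ ≤ (p * ∑ j, (v j) ^ 2) * (ω i) ^ 2 :=
            mul_le_mul_of_nonneg_right h2 (sq_nonneg _)
    calc ∑ i, (ω i) ^ 4 ≤ ∑ i, (p * ∑ j, (v j) ^ 2) * (ω i) ^ 2 :=
          Finset.sum_le_sum fun i _ => hpt i
      _ = (p * ∑ j, (v j) ^ 2) * ∑ i, (ω i) ^ 2 := by rw [← Finset.mul_sum]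
      _ ≤ (p * ∑ j, (v j) ^ 2) * (4 * ∑ i, (v i) ^ 2) :=
          mul_le_mul_of_nonneg_left part3 (mul_nonneg hp0 hv_nn)
      _ = 4 * p * (∑ i, (v i) ^ 2) ^ 2 := by ring
  -- part (v)
  have part5 : ∀ c : Fin n → ℝ,
      |∑ i, ∑ j ∈ univ.erase i, c i * P i j * c j| ≤ ∑ i, (c i) ^ 2 := by
    intro c
    have hsplit : ∑ i, ∑ j ∈ univ.erase i, c i * P i j * c j
        = (∑ i, c i * P.mulVec c i) - ∑ i, P i i * (c i) ^ 2 := by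
      rw [← Finset.sum_sub_distrib]
      refine Finset.sum_congr rfl fun i _ => ?_
      rw [Finset.sum_erase_eq_sub (Finset.mem_univ i)]
      rw [Matrix.mulVec, dotProduct, Finset.mul_sum]
      congr 1
      · exact Finset.sum_congr rfl fun j _ => by ring
      · ring
    have hcsq_nn : (0:ℝ) ≤ ∑ i, (c i) ^ 2 := Finset.sum_nonneg fun i _ => sq_nonneg _
    have hq := quad_eq n P hsym hidem c
    have hA0 : (0:ℝ) ≤ ∑ i, c i * P.mulVec c i := by
      rw [← hq]; exact Finset.sum_nonneg fun i _ => sq_nonneg _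
    have hA1 : ∑ i, c i * P.mulVec c i ≤ ∑ i, (c i) ^ 2 := by
      rw [← hq]; exact norm_sq_le n P hsym hidem c
    have hB0 : (0:ℝ) ≤ ∑ i, P i i * (c i) ^ 2 :=
      Finset.sum_nonneg fun i _ => mul_nonneg (hnn i) (sq_nonneg _)
    have hB1 : ∑ i, P i i * (c i) ^ 2 ≤ ∑ i, (c i) ^ 2 := by
      refine Finset.sum_le_sum fun i _ => ?_
      nlinarith [hle1 i, sq_nonneg (c i)]
    rw [hsplit, abs_le]
    constructor <;> linarith
  exact ⟨part1, part2, part3, part4, part5⟩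
end

section
/- Let (Ω, 𝔽, ℙ) be a probability space carrying, for each n, real random variables A_n, B_n, C_n (with C_n the unnormalized cross-fit statistic), and suppose the assumptions of the strong-identification fixed-alternative setting hold: Δ ≠ 0 fixed, d_n → 0, d_n·𝒞_n → C̃ ≠ 0, d_n·(A_n − Δ²𝒞_n) → 0 and d_n·(B_n − Δ𝒞_n) → 0 in probability, estimators Φ̂_n → Φ₁ᵇ > 0 and Ψ̂_n → Ψᵇ > 0 in probability, and AR_n := A_n/√Φ̂_n, LM_n := B_n/√Ψ̂_n. Let (a_{1,n}, a_{2,n}) be sequences in [0,1]² with a_{1,n} + a_{2,n} ≤ 1, let q̃ > 0 and q̄ < q̃ be constants, and let (c_n) be random critical values with ℙ(c_n ≤ q̄) → 1. If a_{1,n} ≥ q̃·Φ₁ᵇ·d_n²/(C̃²·Δ⁴) for all large n, then ℙ(a_{1,n}·AR_n² + a_{2,n}·LM_n² ≥ c_n) → 1. -/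
open MeasureTheory ProbabilityTheory Filter
open scoped ProbabilityTheory ENNReal

/-- core of Theorems 1(iii) and 5 of the paper: under strong
identification with a fixed alternative, if the weight on the squared jackknife AR
statistic satisfies `a₁ₙ ≥ q̃Φ₁ᵇd_n²/(C̃²Δ⁴)` with `q̃ > q̄` and the random critical
values satisfy `ℙ(c_n ≤ q̄) → 1`, then the linear combination test rejects with
probability tending to one. -/
theorem stmt_19 {Ω : Type*} [MeasureSpace Ω] [IsProbabilityMeasure (ℙ : Measure Ω)]
    (A B C : ℕ → Ω → ℝ)
    (hmeas : ∀ n, Measurable (A n) ∧ Measurable (B n) ∧ Measurable (C n))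
    (Δ Ctil : ℝ) (hΔ : Δ ≠ 0) (hCtil : Ctil ≠ 0)
    (d 𝒞 : ℕ → ℝ) (hd : Tendsto d atTop (nhds 0))
    (hd𝒞 : Tendsto (fun n => d n * 𝒞 n) atTop (nhds Ctil))
    (hA : TendstoInMeasure ℙ (fun n ω => d n * (A n ω - Δ ^ 2 * 𝒞 n)) atTop (fun _ => 0))
    (hB : TendstoInMeasure ℙ (fun n ω => d n * (B n ω - Δ * 𝒞 n)) atTop (fun _ => 0))
    (Φhat Ψhat : ℕ → Ω → ℝ)
    (hmeas' : ∀ n, Measurable (Φhat n) ∧ Measurable (Ψhat n))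
    (Φb Ψb : ℝ) (hΦb : 0 < Φb) (hΨb : 0 < Ψb)
    (hΦ : TendstoInMeasure ℙ Φhat atTop (fun _ => Φb))
    (hΨ : TendstoInMeasure ℙ Ψhat atTop (fun _ => Ψb))
    (AR LM : ℕ → Ω → ℝ)
    (hAR : AR = fun n ω => A n ω / Real.sqrt (Φhat n ω))
    (hLM : LM = fun n ω => B n ω / Real.sqrt (Ψhat n ω))
    (a₁ a₂ : ℕ → ℝ)
    (ha₁ : ∀ n, a₁ n ∈ Set.Icc (0 : ℝ) 1) (ha₂ : ∀ n, a₂ n ∈ Set.Icc (0 : ℝ) 1)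
    (hsum : ∀ n, a₁ n + a₂ n ≤ 1)
    (qtil qbar : ℝ) (hqtil : 0 < qtil) (hqq : qbar < qtil)
    (crit : ℕ → Ω → ℝ) (hcritm : ∀ n, Measurable (crit n))
    (hcrit : Tendsto (fun n => ℙ {ω | crit n ω ≤ qbar}) atTop (nhds 1))
    (hlow : ∀ᶠ n in atTop, qtil * Φb * (d n) ^ 2 / (Ctil ^ 2 * Δ ^ 4) ≤ a₁ n) :
    Tendsto (fun n => ℙ {ω |
        crit n ω ≤ a₁ n * (AR n ω) ^ 2 + a₂ n * (LM n ω) ^ 2}) atTop (nhds 1) := by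
  have hΔ2 : (0:ℝ) < Δ ^ 2 := by positivity
  have hK : (0:ℝ) < Ctil ^ 2 * Δ ^ 4 := by positivity
  set K : ℝ := Ctil ^ 2 * Δ ^ 4 with hKdef
  set g : ℝ → ℝ := fun ε => qtil * Φb * (Δ ^ 2 * |Ctil| - Δ ^ 2 * ε - ε) ^ 2 / (K * (Φb + ε))
    with hgdef
  have hg0 : g 0 = qtil := by
    have habs : |Ctil| ^ 2 = Ctil ^ 2 := sq_abs Ctil
    simp only [hgdef]
    rw [mul_zero, sub_zero, sub_zero, add_zero, mul_pow, habs, hKdef]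
    field_simp
  -- choose ε > 0 with the needed properties
  have hgc : ContinuousAt g 0 := by
    apply ContinuousAt.div
    · fun_prop
    · fun_prop
    · simp only [add_zero]
      positivity
  have he1 : ∀ᶠ ε in nhds (0:ℝ), qbar < g ε :=
    hgc.eventually (hg0 ▸ eventually_gt_nhds hqq)
  have he2 : ∀ᶠ ε in nhds (0:ℝ), ε < Φb := eventually_lt_nhds hΦb
  have he3 : ∀ᶠ ε in nhds (0:ℝ), Δ ^ 2 * ε + ε < Δ ^ 2 * |Ctil| := by
    have hc : ContinuousAt (fun ε : ℝ => Δ ^ 2 * ε + ε) 0 := by fun_prop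
    have hpos : (0:ℝ) < Δ ^ 2 * |Ctil| := by positivity
    have := hc.eventually (show ∀ᶠ y in nhds ((fun ε : ℝ => Δ ^ 2 * ε + ε) 0),
        y < Δ ^ 2 * |Ctil| by simpa using eventually_lt_nhds hpos)
    exact this
  have hall : ∀ᶠ ε in nhdsWithin (0:ℝ) (Set.Ioi 0),
      (qbar < g ε ∧ ε < Φb ∧ Δ ^ 2 * ε + ε < Δ ^ 2 * |Ctil|) ∧ ε ∈ Set.Ioi (0:ℝ) :=
    ((he1.and (he2.and he3)).filter_mono nhdsWithin_le_nhds).and self_mem_nhdsWithin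
  obtain ⟨ε, ⟨hεg, hεΦ, hεΔ⟩, hε0⟩ := hall.exists
  simp only [hgdef] at hεg
  have hε0 : (0:ℝ) < ε := hε0
  -- bad probabilities
  set p₁ : ℕ → ℝ≥0∞ := fun n => ℙ {ω | ε ≤ |d n * (A n ω - Δ ^ 2 * 𝒞 n)|} with hp₁
  set p₂ : ℕ → ℝ≥0∞ := fun n => ℙ {ω | ε ≤ |Φhat n ω - Φb|} with hp₂
  set p₃ : ℕ → ℝ≥0∞ := fun n => ℙ {ω | qbar < crit n ω} with hp₃
  have hp₁0 : Tendsto p₁ atTop (nhds 0) := by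
    have := tendstoInMeasure_iff_dist.mp hA ε hε0
    simpa only [Real.dist_eq, sub_zero] using this
  have hp₂0 : Tendsto p₂ atTop (nhds 0) := by
    have := tendstoInMeasure_iff_dist.mp hΦ ε hε0
    simpa only [Real.dist_eq] using this
  have hp₃0 : Tendsto p₃ atTop (nhds 0) := by
    have hmeasset : ∀ n, MeasurableSet {ω | crit n ω ≤ qbar} := fun n =>
      measurableSet_le (hcritm n) measurable_const
    have heq : ∀ n, p₃ n = 1 - ℙ {ω | crit n ω ≤ qbar} := by
      intro n
      have hs : {ω | qbar < crit n ω} = {ω | crit n ω ≤ qbar}ᶜ := by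
        ext ω; simp [not_le]
      show ℙ {ω | qbar < crit n ω} = 1 - ℙ {ω | crit n ω ≤ qbar}
      rw [hs, prob_compl_eq_one_sub (hmeasset n)]
    rw [funext heq]
    have h0 : (0:ℝ≥0∞) = 1 - 1 := by simp
    rw [h0]
    exact ENNReal.Tendsto.sub tendsto_const_nhds hcrit (Or.inl ENNReal.one_ne_top)
  have hpbad : Tendsto (fun n => p₁ n + p₂ n + p₃ n) atTop (nhds 0) := by
    have := ((hp₁0.add hp₂0).add hp₃0)
    simpa using this
  -- eventual deterministic facts
  have hn1 : ∀ᶠ n in atTop, |d n * 𝒞 n - Ctil| < ε := by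
    have := (Metric.tendsto_nhds.mp hd𝒞) ε hε0
    simpa [Real.dist_eq] using this
  -- key pointwise inclusion
  have hincl : ∀ᶠ n in atTop, ∀ ω,
      |d n * (A n ω - Δ ^ 2 * 𝒞 n)| < ε → |Φhat n ω - Φb| < ε → crit n ω ≤ qbar →
      crit n ω ≤ a₁ n * (AR n ω) ^ 2 + a₂ n * (LM n ω) ^ 2 := by
    filter_upwards [hn1, hlow] with n hn1 hlow ω hX hP hc
    set X := d n * (A n ω - Δ ^ 2 * 𝒞 n) with hXdef
    set P := Φhat n ω with hPdef
    have hPpos : 0 < P := by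
      have := abs_lt.mp hP
      linarith [this.1]
    have hPub : P < Φb + ε := by
      have := abs_lt.mp hP
      linarith [this.2]
    have hdC : |Ctil| - ε ≤ |d n * 𝒞 n| := by
      have := abs_sub_abs_le_abs_sub (Ctil) (d n * 𝒞 n)
      rw [abs_sub_comm] at hn1
      linarith
    set m : ℝ := Δ ^ 2 * |Ctil| - Δ ^ 2 * ε - ε with hmdef
    have hm0 : 0 ≤ m := by rw [hmdef]; linarith
    have hdA : m ≤ |d n * A n ω| := by
      have hsplit : Δ ^ 2 * (d n * 𝒞 n) = d n * A n ω - X := by rw [hXdef]; ring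
      have htri : Δ ^ 2 * |d n * 𝒞 n| ≤ |d n * A n ω| + |X| := by
        calc Δ ^ 2 * |d n * 𝒞 n| = |Δ ^ 2 * (d n * 𝒞 n)| := by
              rw [abs_mul (Δ ^ 2) (d n * 𝒞 n), abs_of_nonneg (sq_nonneg Δ)]
          _ = |d n * A n ω - X| := by rw [hsplit]
          _ ≤ |d n * A n ω| + |X| := abs_sub _ _
      have hmul := mul_le_mul_of_nonneg_left hdC (sq_nonneg Δ)
      have hXε : |X| < ε := hX
      rw [hmdef]; nlinarith
    have hsq : m ^ 2 ≤ (d n * A n ω) ^ 2 := by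
      calc m ^ 2 ≤ |d n * A n ω| ^ 2 := pow_le_pow_left₀ hm0 hdA 2
        _ = (d n * A n ω) ^ 2 := sq_abs _
    have hARsq : (AR n ω) ^ 2 = (A n ω) ^ 2 / P := by
      rw [hAR]
      simp only
      rw [div_pow, Real.sq_sqrt hPpos.le]
    have hKP : 0 < K * P := mul_pos hK hPpos
    have hchain : qtil * Φb * m ^ 2 / (K * (Φb + ε)) ≤ a₁ n * (AR n ω) ^ 2 := by
      have e1 : qtil * Φb * (d n * A n ω) ^ 2 / (K * P)
          = (qtil * Φb * (d n) ^ 2 / K) * ((A n ω) ^ 2 / P) := by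
        rw [div_mul_div_comm]
        ring
      have hnum : qtil * Φb * m ^ 2 ≤ qtil * Φb * (d n * A n ω) ^ 2 :=
        mul_le_mul_of_nonneg_left hsq (mul_nonneg hqtil.le hΦb.le)
      have hden : K * P ≤ K * (Φb + ε) := mul_le_mul_of_nonneg_left hPub.le hK.le
      have hnum0 : (0:ℝ) ≤ qtil * Φb * (d n * A n ω) ^ 2 := by positivity
      calc qtil * Φb * m ^ 2 / (K * (Φb + ε))
          ≤ qtil * Φb * (d n * A n ω) ^ 2 / (K * P) :=
            div_le_div₀ hnum0 hnum hKP hden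
        _ = (qtil * Φb * (d n) ^ 2 / K) * ((A n ω) ^ 2 / P) := e1
        _ ≤ a₁ n * ((A n ω) ^ 2 / P) := by
            apply mul_le_mul_of_nonneg_right hlow (by positivity)
        _ = a₁ n * (AR n ω) ^ 2 := by rw [hARsq]
    have hLM0 : 0 ≤ a₂ n * (LM n ω) ^ 2 := mul_nonneg (ha₂ n).1 (sq_nonneg _)
    linarith
  -- measure bound
  have hlb : ∀ᶠ n in atTop,
      1 - (p₁ n + p₂ n + p₃ n) ≤ ℙ {ω |
        crit n ω ≤ a₁ n * (AR n ω) ^ 2 + a₂ n * (LM n ω) ^ 2} := by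
    filter_upwards [hincl] with n hincl
    set T := {ω | crit n ω ≤ a₁ n * (AR n ω) ^ 2 + a₂ n * (LM n ω) ^ 2} with hT
    set G := ({ω | |d n * (A n ω - Δ ^ 2 * 𝒞 n)| < ε} ∩ {ω | |Φhat n ω - Φb| < ε}
      ∩ {ω | crit n ω ≤ qbar}) with hG
    have hGT : G ⊆ T := by
      rintro ω ⟨⟨h1, h2⟩, h3⟩
      exact hincl ω h1 h2 h3
    have hGc : ℙ Gᶜ ≤ p₁ n + p₂ n + p₃ n := by
      have hsub : Gᶜ ⊆ {ω | ε ≤ |d n * (A n ω - Δ ^ 2 * 𝒞 n)|}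
          ∪ {ω | ε ≤ |Φhat n ω - Φb|} ∪ {ω | qbar < crit n ω} := by
        intro ω hω
        simp only [hG, Set.mem_compl_iff, Set.mem_inter_iff, not_and_or, Set.mem_setOf_eq,
          not_lt, not_le] at hω
        simp only [Set.mem_union, Set.mem_setOf_eq]
        tauto
      calc ℙ Gᶜ ≤ ℙ ({ω | ε ≤ |d n * (A n ω - Δ ^ 2 * 𝒞 n)|}
            ∪ {ω | ε ≤ |Φhat n ω - Φb|} ∪ {ω | qbar < crit n ω}) := measure_mono hsub
        _ ≤ ℙ ({ω | ε ≤ |d n * (A n ω - Δ ^ 2 * 𝒞 n)|} ∪ {ω | ε ≤ |Φhat n ω - Φb|})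
            + ℙ {ω | qbar < crit n ω} := measure_union_le _ _
        _ ≤ p₁ n + p₂ n + p₃ n := by
            gcongr
            exact measure_union_le _ _
    have h1 : (1:ℝ≥0∞) ≤ ℙ G + (p₁ n + p₂ n + p₃ n) := by
      calc (1:ℝ≥0∞) = ℙ (Set.univ : Set Ω) := (measure_univ).symm
        _ = ℙ (G ∪ Gᶜ) := by rw [Set.union_compl_self]
        _ ≤ ℙ G + ℙ Gᶜ := measure_union_le _ _
        _ ≤ ℙ G + (p₁ n + p₂ n + p₃ n) := by gcongr
    calc 1 - (p₁ n + p₂ n + p₃ n) ≤ ℙ G := tsub_le_iff_right.mpr h1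
      _ ≤ ℙ T := measure_mono hGT
  -- squeeze
  have hlow' : Tendsto (fun n => 1 - (p₁ n + p₂ n + p₃ n)) atTop (nhds 1) := by
    have := ENNReal.Tendsto.sub (tendsto_const_nhds (x := (1:ℝ≥0∞))) hpbad
      (Or.inl ENNReal.one_ne_top)
    simpa using this
  refine tendsto_of_tendsto_of_tendsto_of_le_of_le' hlow' tendsto_const_nhds hlb ?_
  exact Eventually.of_forall fun n => prob_le_one
end
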